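/- arXiv:1601.03290 — 8 statements merged into one kernel-verified Lean document; each statement's English description precedes it below -/
import Mathlib

section
/- Let P ∈ ℝ^{n₀×n₀} be symmetric positive definite, F₀ ∈ ℝ^{l×n₀}, S₀ ∈ ℝ^{n₀×n₀}, and let λ̄ > 0 and λ ≥ λ̄. Set μ* = max{1/λ̄, 1} and L₀ = −μ*·P⁻¹F₀ᵀ. Then (S₀ + λL₀F₀)ᵀP + P(S₀ + λL₀F₀) ≼ S₀ᵀP + PS₀ − 2F₀ᵀF₀. In particular, if S₀ᵀP + PS₀ − 2F₀ᵀF₀ is negative definite, then (S₀ + λL₀F₀)ᵀP + P(S₀ + λL₀F₀) is negative definite. -/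
open Matrix

theorem stmt1 {n₀ l : ℕ}
    (P S₀ : Matrix (Fin n₀) (Fin n₀) ℝ) (F₀ : Matrix (Fin l) (Fin n₀) ℝ)
    (hP : P.PosDef)
    (lb lam : ℝ) (hlb : 0 < lb) (hlam : lb ≤ lam)
    (L₀ : Matrix (Fin n₀) (Fin l) ℝ)
    (hL₀ : L₀ = -(max (1/lb) 1) • (P⁻¹ * F₀ᵀ)) :
    ((S₀ᵀ * P + P * S₀ - (2:ℝ) • (F₀ᵀ * F₀))
      - ((S₀ + lam • (L₀ * F₀))ᵀ * P + P * (S₀ + lam • (L₀ * F₀)))).PosSemidef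
    ∧ ((-(S₀ᵀ * P + P * S₀ - (2:ℝ) • (F₀ᵀ * F₀))).PosDef →
        (-((S₀ + lam • (L₀ * F₀))ᵀ * P + P * (S₀ + lam • (L₀ * F₀)))).PosDef) := by
  set μ : ℝ := max (1/lb) 1 with hμ
  have hdet : IsUnit P.det := isUnit_iff_ne_zero.mpr hP.det_pos.ne'
  have hPinvP : P⁻¹ * P = 1 := Matrix.nonsing_inv_mul P hdet
  have hPPinv : P * P⁻¹ = 1 := Matrix.mul_nonsing_inv P hdet
  have hPT : Pᵀ = P := by
    have := hP.isHermitian.eq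
    simpa [Matrix.conjTranspose_eq_transpose_of_trivial] using this
  have hPinvT : (P⁻¹)ᵀ = P⁻¹ := by
    rw [Matrix.transpose_nonsing_inv, hPT]
  have hLF : L₀ * F₀ = (-μ) • (P⁻¹ * (F₀ᵀ * F₀)) := by
    rw [hL₀]; simp [Matrix.smul_mul, Matrix.mul_assoc]
  have hkey : ((S₀ᵀ * P + P * S₀ - (2:ℝ) • (F₀ᵀ * F₀))
      - ((S₀ + lam • (L₀ * F₀))ᵀ * P + P * (S₀ + lam • (L₀ * F₀))))
      = (2 * (lam * μ) - 2) • (F₀ᵀ * F₀) := by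
    have h1 : P * (lam • (L₀ * F₀)) = (-(lam * μ)) • (F₀ᵀ * F₀) := by
      rw [hLF]
      rw [Matrix.mul_smul, Matrix.mul_smul, smul_smul, ← Matrix.mul_assoc, hPPinv,
        Matrix.one_mul]
      ring_nf
    have h2 : (lam • (L₀ * F₀))ᵀ * P = (-(lam * μ)) • (F₀ᵀ * F₀) := by
      rw [hLF]
      rw [Matrix.transpose_smul, Matrix.transpose_smul, Matrix.smul_mul, Matrix.smul_mul,
        smul_smul, Matrix.transpose_mul, hPinvT, Matrix.transpose_mul,
        Matrix.transpose_transpose, Matrix.mul_assoc, Matrix.mul_assoc, hPinvP,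
        Matrix.mul_one]
      ring_nf
    rw [Matrix.transpose_add, Matrix.add_mul, Matrix.mul_add, h1, h2]
    module
  have hc : (0:ℝ) ≤ 2 * (lam * μ) - 2 := by
    have h1 : 1 ≤ lam * μ := by
      have hμ1 : 1/lb ≤ μ := le_max_left _ _
      have : lb * (1/lb) ≤ lam * μ := by
        apply mul_le_mul hlam hμ1 (by positivity) (le_trans hlb.le hlam)
      calc (1:ℝ) = lb * (1/lb) := by field_simp
        _ ≤ lam * μ := this
    linarith
  have hpsd : ((S₀ᵀ * P + P * S₀ - (2:ℝ) • (F₀ᵀ * F₀))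
      - ((S₀ + lam • (L₀ * F₀))ᵀ * P + P * (S₀ + lam • (L₀ * F₀)))).PosSemidef := by
    rw [hkey]
    have hM : (F₀ᵀ * F₀).PosSemidef := by
      have := Matrix.posSemidef_conjTranspose_mul_self F₀
      simpa [Matrix.conjTranspose_eq_transpose_of_trivial] using this
    refine ⟨?_, fun x => ?_⟩
    · have := hM.1
      simpa [Matrix.IsHermitian, Matrix.conjTranspose_eq_transpose_of_trivial] using congrArg (fun M => (2 * (lam * μ) - 2) • M) this
    · have := hM.2 x
      have h := mul_nonneg hc this
      simpa [Matrix.smul_mulVec, dotProduct_smul, smul_eq_mul, Finsupp.mul_sum, mul_assoc, mul_left_comm] using h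
  refine ⟨hpsd, fun hnd => ?_⟩
  have : (-((S₀ + lam • (L₀ * F₀))ᵀ * P + P * (S₀ + lam • (L₀ * F₀))))
      = (-(S₀ᵀ * P + P * S₀ - (2:ℝ) • (F₀ᵀ * F₀)))
        + ((S₀ᵀ * P + P * S₀ - (2:ℝ) • (F₀ᵀ * F₀))
      - ((S₀ + lam • (L₀ * F₀))ᵀ * P + P * (S₀ + lam • (L₀ * F₀)))) := by abel
  rw [this]
  exact hnd.add_posSemidef hpsd
end

section
/- Let S₀ ∈ ℝ^{n₀×n₀}, F₀ ∈ ℝ^{l×n₀}, and P ∈ ℝ^{n₀×n₀} symmetric positive definite with S₀ᵀP + PS₀ − 2F₀ᵀF₀ negative definite. Let 𝒫 = {1,…,κ} and for each p ∈ 𝒫 let H_p ∈ ℝ^{N×N} be symmetric positive definite, and let λ̄ > 0 be a lower bound for all eigenvalues of all H_p. Set L₀ = −max{1/λ̄, 1}·P⁻¹F₀ᵀ. Let 0 = t₀ < t₁ < ⋯ be a strictly increasing sequence with tᵢ → ∞ and σ : [0,∞) → 𝒫 constant on each [tᵢ, tᵢ₊₁). Let η̄ : [0,∞) → ℝ^{Nn₀}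 be continuous, differentiable on each (tᵢ, tᵢ₊₁), and satisfy η̄'(t) = (I_N ⊗ S₀ + H_{σ(t)} ⊗ (L₀F₀)) η̄(t) there. Then there exist constants c₀ ≥ 0 and λ₀ > 0 (with c₀ depending on η̄(0)) such that ‖η̄(t)‖ ≤ c₀·e^{−λ₀ t} for all t ≥ 0. -/
open Matrix Filter Kronecker

lemma quadPos {ι : Type*} [Fintype ι] {A : Matrix ι ι ℝ} (hA : A.PosSemidef)
    (x : ι → ℝ) : 0 ≤ x ⬝ᵥ A *ᵥ x := by simpa using hA.dotProduct_mulVec_nonneg x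

lemma dot_mulVec_left {ι : Type*} [Fintype ι] (A : Matrix ι ι ℝ) (x y : ι → ℝ) :
    (A *ᵥ x) ⬝ᵥ y = x ⬝ᵥ (Aᵀ *ᵥ y) := by
  rw [dotProduct_comm, dotProduct_mulVec, mulVec_transpose, dotProduct_comm]

lemma psd_kron {ι κ : Type*} [Fintype ι] [Fintype κ] [DecidableEq ι] [DecidableEq κ]
    {A : Matrix ι ι ℝ} {B : Matrix κ κ ℝ} (hA : A.PosSemidef) (hB : B.PosSemidef) :
    (A ⊗ₖ B).PosSemidef := by
  obtain ⟨A', hA'⟩ : ∃ A' : Matrix ι ι ℝ, A = A'ᴴ * A' := by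
    open scoped MatrixOrder Matrix.Norms.L2Operator in
    exact CStarAlgebra.nonneg_iff_eq_star_mul_self.mp hA.nonneg
  obtain ⟨B', hB'⟩ : ∃ B' : Matrix κ κ ℝ, B = B'ᴴ * B' := by
    open scoped MatrixOrder Matrix.Norms.L2Operator in
    exact CStarAlgebra.nonneg_iff_eq_star_mul_self.mp hB.nonneg
  have hk : A ⊗ₖ B = (A' ⊗ₖ B')ᴴ * (A' ⊗ₖ B') := by
    have h1 : (A' ⊗ₖ B')ᴴ = A'ᴴ ⊗ₖ B'ᴴ := by
      ext ⟨i,j⟩ ⟨k,l⟩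
      simp [conjTranspose_apply, kroneckerMap_apply]
    rw [h1, ← mul_kronecker_mul, ← hA', ← hB']
  rw [hk]
  exact posSemidef_conjTranspose_mul_self _

lemma posdef_kron {ι κ : Type*} [Fintype ι] [Fintype κ] [DecidableEq ι] [DecidableEq κ]
    {A : Matrix ι ι ℝ} {B : Matrix κ κ ℝ} (hA : A.PosDef) (hB : B.PosDef) :
    (A ⊗ₖ B).PosDef := by
  have hpsd := psd_kron hA.posSemidef hB.posSemidef
  refine PosDef.of_dotProduct_mulVec_pos hpsd.1 fun x hx => ?_
  have h0 : star x ⬝ᵥ (A ⊗ₖ B) *ᵥ x ≠ 0 := by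
    rw [Ne, hpsd.dotProduct_mulVec_zero_iff]
    intro h
    have hdet : IsUnit (A ⊗ₖ B).det := by
      rw [det_kronecker]
      exact ((hA.det_pos.ne'.isUnit.pow _).mul (hB.det_pos.ne'.isUnit.pow _))
    apply hx
    have h2 := congrArg (fun v => (A ⊗ₖ B)⁻¹ *ᵥ v) h
    simpa [mulVec_mulVec, nonsing_inv_mul _ hdet] using h2
  exact lt_of_le_of_ne (hpsd.dotProduct_mulVec_nonneg x) (Ne.symm h0)

lemma quad_continuous {ι : Type*} [Fintype ι] (A : Matrix ι ι ℝ) :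
    Continuous (fun x : ι → ℝ => x ⬝ᵥ A *ᵥ x) := by
  simp only [dotProduct, mulVec]
  exact continuous_finset_sum _ fun i _ =>
    (continuous_apply i).mul (continuous_finset_sum _ fun j _ =>
      (continuous_const.mul (continuous_apply j)))

lemma quad_smul {ι : Type*} [Fintype ι] (A : Matrix ι ι ℝ) (c : ℝ) (x : ι → ℝ) :
    (c • x) ⬝ᵥ A *ᵥ (c • x) = c^2 * (x ⬝ᵥ A *ᵥ x) := by
  rw [mulVec_smul, dotProduct_smul, smul_dotProduct]
  simp [smul_eq_mul]; ring

lemma quad_lower {ι : Type*} [Fintype ι] {A : Matrix ι ι ℝ} (hA : A.PosDef) :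
    ∃ a > 0, ∀ x : ι → ℝ, a * ‖x‖^2 ≤ x ⬝ᵥ A *ᵥ x := by
  rcases isEmpty_or_nonempty ι with hι | hι
  · refine ⟨1, one_pos, fun x => ?_⟩
    have hx : x = 0 := Subsingleton.elim _ _
    simp [hx]
  · have hne : (Metric.sphere (0 : ι → ℝ) 1).Nonempty := by
      have : Nontrivial (ι → ℝ) := Function.nontrivial
      exact NormedSpace.sphere_nonempty.mpr zero_le_one
    obtain ⟨u, hu, hmin'⟩ := (isCompact_sphere (0 : ι → ℝ) 1).exists_isMinOn hne
      (quad_continuous A).continuousOn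
    have hmin : ∀ y ∈ Metric.sphere (0 : ι → ℝ) 1, u ⬝ᵥ A *ᵥ u ≤ y ⬝ᵥ A *ᵥ y :=
      fun y hy => hmin' hy
    have hu1 : ‖u‖ = 1 := by simpa using hu
    have hu0 : u ≠ 0 := by intro h; rw [h] at hu1; simp at hu1
    have ha : 0 < u ⬝ᵥ A *ᵥ u := by simpa using hA.dotProduct_mulVec_pos hu0
    refine ⟨u ⬝ᵥ A *ᵥ u, ha, fun x => ?_⟩
    rcases eq_or_ne x 0 with rfl | hx
    · simp
    · have hnx : (0:ℝ) < ‖x‖ := norm_pos_iff.mpr hx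
      set v : ι → ℝ := ‖x‖⁻¹ • x with hv
      have hv1 : ‖v‖ = 1 := by
        rw [hv, norm_smul, norm_inv, norm_norm, inv_mul_cancel₀ hnx.ne']
      have hvs : v ∈ Metric.sphere (0 : ι → ℝ) 1 := by simpa using hv1
      have hxv : x = ‖x‖ • v := by rw [hv, smul_smul, mul_inv_cancel₀ hnx.ne', one_smul]
      have hq : x ⬝ᵥ A *ᵥ x = ‖x‖^2 * (v ⬝ᵥ A *ᵥ v) := by
        conv_lhs => rw [hxv]
        rw [quad_smul]
      have := hmin v hvs
      rw [hq]
      nlinarith [sq_nonneg ‖x‖]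

lemma quad_upper {ι : Type*} [Fintype ι] (A : Matrix ι ι ℝ) :
    ∃ b > 0, ∀ x : ι → ℝ, x ⬝ᵥ A *ᵥ x ≤ b * ‖x‖^2 := by
  refine ⟨(∑ i, ∑ j, |A i j|) + 1, by positivity, fun x => ?_⟩
  have h1 : x ⬝ᵥ A *ᵥ x = ∑ i, ∑ j, x i * (A i j * x j) := by
    simp [dotProduct, mulVec, Finset.mul_sum]
  rw [h1]
  have : ∀ i, ∑ j, x i * (A i j * x j) ≤ (∑ j, |A i j|) * ‖x‖^2 := by
    intro i
    rw [Finset.sum_mul]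
    refine Finset.sum_le_sum fun j _ => ?_
    have h2 : x i * (A i j * x j) ≤ |A i j| * (|x i| * |x j|) := by
      calc x i * (A i j * x j) ≤ |x i * (A i j * x j)| := le_abs_self _
        _ = |A i j| * (|x i| * |x j|) := by rw [abs_mul, abs_mul]; ring
    refine h2.trans ?_
    have hxi := norm_le_pi_norm x i
    have hxj := norm_le_pi_norm x j
    simp only [Real.norm_eq_abs] at hxi hxj
    have hn : (0:ℝ) ≤ ‖x‖ := norm_nonneg _
    have : |x i| * |x j| ≤ ‖x‖^2 := by nlinarith [abs_nonneg (x i), abs_nonneg (x j)]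
    nlinarith [abs_nonneg (A i j)]
  calc ∑ i, ∑ j, x i * (A i j * x j) ≤ ∑ i, (∑ j, |A i j|) * ‖x‖^2 :=
        Finset.sum_le_sum fun i _ => this i
    _ = (∑ i, ∑ j, |A i j|) * ‖x‖ ^ 2 := by rw [← Finset.sum_mul]
    _ ≤ ((∑ i, ∑ j, |A i j|) + 1) * ‖x‖^2 := by nlinarith [sq_nonneg ‖x‖]

lemma quad_hasDerivAt {ι : Type*} [Fintype ι] (Q : Matrix ι ι ℝ) {η : ℝ → ι → ℝ}
    {v : ι → ℝ} {s : ℝ} (h : HasDerivAt η v s) :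
    HasDerivAt (fun s => η s ⬝ᵥ Q *ᵥ η s) (v ⬝ᵥ Q *ᵥ η s + η s ⬝ᵥ Q *ᵥ v) s := by
  have hi : ∀ i, HasDerivAt (fun s => η s i) (v i) s := hasDerivAt_pi.mp h
  have H1 : HasDerivAt (fun s => ∑ i, η s i * ∑ j, Q i j * η s j)
      (∑ i, (v i * ∑ j, Q i j * η s j + η s i * ∑ j, Q i j * v j)) s :=
    HasDerivAt.fun_sum fun i _ =>
      (hi i).mul (HasDerivAt.fun_sum fun j _ => (hi j).const_mul (Q i j))
  have e1 : (fun s => η s ⬝ᵥ Q *ᵥ η s) = fun s => ∑ i, η s i * ∑ j, Q i j * η s j := by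
    funext s; simp [dotProduct, mulVec]
  have e2 : v ⬝ᵥ Q *ᵥ η s + η s ⬝ᵥ Q *ᵥ v
      = ∑ i, (v i * ∑ j, Q i j * η s j + η s i * ∑ j, Q i j * v j) := by
    simp [dotProduct, mulVec, Finset.sum_add_distrib]
  rw [e1, e2]; exact H1

theorem stmt4 {n₀ l N κ : ℕ}
    (S₀ P : Matrix (Fin n₀) (Fin n₀) ℝ) (F₀ : Matrix (Fin l) (Fin n₀) ℝ)
    (hP : P.PosDef)
    (hLyap : (-(S₀ᵀ * P + P * S₀ - (2:ℝ) • (F₀ᵀ * F₀))).PosDef)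
    (H : Fin κ → Matrix (Fin N) (Fin N) ℝ)
    (hH : ∀ p, (H p).PosDef)
    (lb : ℝ) (hlb : 0 < lb)
    (heig : ∀ p, (H p - lb • 1).PosSemidef)
    (L₀ : Matrix (Fin n₀) (Fin l) ℝ)
    (hL₀ : L₀ = -(max (1/lb) 1) • (P⁻¹ * F₀ᵀ))
    (t : ℕ → ℝ) (ht0 : t 0 = 0) (htmono : StrictMono t) (htlim : Tendsto t atTop atTop)
    (σ : ℝ → Fin κ) (hσ : ∀ i, ∀ s ∈ Set.Ico (t i) (t (i+1)), σ s = σ (t i))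
    (η : ℝ → Fin N × Fin n₀ → ℝ)
    (hηc : ContinuousOn η (Set.Ici 0))
    (hηd : ∀ i, ∀ s ∈ Set.Ioo (t i) (t (i+1)),
      HasDerivAt η
        ((((1 : Matrix (Fin N) (Fin N) ℝ) ⊗ₖ S₀) + (H (σ s)) ⊗ₖ (L₀ * F₀)).mulVec (η s)) s) :
    ∃ c₀ ≥ (0:ℝ), ∃ lam₀ > (0:ℝ), ∀ s ≥ (0:ℝ), ‖η s‖ ≤ c₀ * Real.exp (-lam₀ * s) := by
  classical
  set μ : ℝ := max (1/lb) 1 with hμdef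
  have hμpos : (0:ℝ) < μ := lt_of_lt_of_le one_pos (le_max_right _ _)
  have hμlb : (1:ℝ) ≤ μ * lb := by
    have h1 : 1/lb ≤ μ := le_max_left _ _
    have h2 : (1/lb) * lb ≤ μ * lb := mul_le_mul_of_nonneg_right h1 hlb.le
    rwa [one_div, inv_mul_cancel₀ hlb.ne'] at h2
  have hdetP : IsUnit P.det := hP.det_pos.ne'.isUnit
  have hPt : Pᵀ = P := by
    have h : Pᴴ = P := hP.1
    rwa [conjTranspose_eq_transpose_of_trivial] at h
  have hHt : ∀ p, (H p)ᵀ = H p := fun p => by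
    have h : (H p)ᴴ = H p := (hH p).1
    rwa [conjTranspose_eq_transpose_of_trivial] at h
  set G : Matrix (Fin n₀) (Fin n₀) ℝ := F₀ᵀ * F₀ with hGdef
  have hGt : Gᵀ = G := by rw [hGdef, transpose_mul, transpose_transpose]
  have hGpsd : G.PosSemidef := by
    have h : (F₀ᴴ * F₀).PosSemidef := posSemidef_conjTranspose_mul_self F₀
    rwa [conjTranspose_eq_transpose_of_trivial] at h
  have hPD : P * (L₀ * F₀) = (-μ) • G := by
    rw [hL₀, Matrix.smul_mul, Matrix.mul_smul, Matrix.mul_assoc,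
      mul_nonsing_inv_cancel_left _ _ hdetP]
  have hDtP : (L₀ * F₀)ᵀ * P = (-μ) • G := by
    have h := congrArg Matrix.transpose hPD
    rwa [transpose_mul, hPt, transpose_smul, hGt] at h
  set R : Matrix (Fin n₀) (Fin n₀) ℝ := -(S₀ᵀ * P + P * S₀ - (2:ℝ) • G) with hRdef
  have hRpd : R.PosDef := hLyap
  set Q : Matrix (Fin N × Fin n₀) (Fin N × Fin n₀) ℝ :=
    (1 : Matrix (Fin N) (Fin N) ℝ) ⊗ₖ P with hQdef
  have hQpd : Q.PosDef := posdef_kron Matrix.PosDef.one hP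
  obtain ⟨a, hapos, ha⟩ := quad_lower (posdef_kron (Matrix.PosDef.one (n := Fin N)) hRpd)
  obtain ⟨aQ, haQpos, haQ⟩ := quad_lower hQpd
  obtain ⟨bQ, hbQpos, hbQ⟩ := quad_upper Q
  -- key matrix identity
  have hkey : ∀ p, ((1 : Matrix (Fin N) (Fin N) ℝ) ⊗ₖ S₀ + (H p) ⊗ₖ (L₀ * F₀))ᵀ * Q
      + Q * ((1 : Matrix (Fin N) (Fin N) ℝ) ⊗ₖ S₀ + (H p) ⊗ₖ (L₀ * F₀))
      = -((1 : Matrix (Fin N) (Fin N) ℝ) ⊗ₖ R)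
        + (-(2:ℝ)) • ((μ • H p - 1) ⊗ₖ G) := by
    intro p
    have ht1 : ((1 : Matrix (Fin N) (Fin N) ℝ) ⊗ₖ S₀ + (H p) ⊗ₖ (L₀ * F₀))ᵀ
        = ((1 : Matrix (Fin N) (Fin N) ℝ) ⊗ₖ S₀ᵀ) + (H p) ⊗ₖ (L₀ * F₀)ᵀ := by
      rw [transpose_add, ← kroneckerMap_transpose, ← kroneckerMap_transpose,
        transpose_one, hHt p]
    have e1 : ((1 : Matrix (Fin N) (Fin N) ℝ) ⊗ₖ S₀ᵀ) * Q
        = (1 : Matrix (Fin N) (Fin N) ℝ) ⊗ₖ (S₀ᵀ * P) := by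
      rw [hQdef, ← mul_kronecker_mul, Matrix.one_mul]
    have e2 : ((H p) ⊗ₖ (L₀ * F₀)ᵀ) * Q = (-μ) • ((H p) ⊗ₖ G) := by
      rw [hQdef, ← mul_kronecker_mul, Matrix.mul_one, hDtP, kronecker_smul]
    have e3 : Q * ((1 : Matrix (Fin N) (Fin N) ℝ) ⊗ₖ S₀)
        = (1 : Matrix (Fin N) (Fin N) ℝ) ⊗ₖ (P * S₀) := by
      rw [hQdef, ← mul_kronecker_mul, Matrix.one_mul]
    have e4 : Q * ((H p) ⊗ₖ (L₀ * F₀)) = (-μ) • ((H p) ⊗ₖ G) := by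
      rw [hQdef, ← mul_kronecker_mul, Matrix.one_mul, hPD, kronecker_smul]
    have eR : (1 : Matrix (Fin N) (Fin N) ℝ) ⊗ₖ R
        = (-1:ℝ) • ((1 : Matrix (Fin N) (Fin N) ℝ) ⊗ₖ (S₀ᵀ * P))
          + ((-1:ℝ) • ((1 : Matrix (Fin N) (Fin N) ℝ) ⊗ₖ (P * S₀))
            + (2:ℝ) • ((1 : Matrix (Fin N) (Fin N) ℝ) ⊗ₖ G)) := by
      have hR2 : R = (-1:ℝ) • (S₀ᵀ * P) + ((-1:ℝ) • (P * S₀) + (2:ℝ) • G) := by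
        rw [hRdef]; module
      rw [hR2, kronecker_add, kronecker_add, kronecker_smul, kronecker_smul, kronecker_smul]
    have eK : (μ • H p - 1) ⊗ₖ G
        = μ • ((H p) ⊗ₖ G) + (-1:ℝ) • ((1 : Matrix (Fin N) (Fin N) ℝ) ⊗ₖ G) := by
      have h : μ • H p - 1 = μ • H p + (-1:ℝ) • (1 : Matrix (Fin N) (Fin N) ℝ) := by module
      rw [h, add_kronecker, smul_kronecker, smul_kronecker]
    rw [ht1, add_mul, mul_add, e1, e2, e3, e4, eR, eK]
    module
  -- K_p positive semidefinite
  have hKpsd : ∀ p, (μ • H p - (1 : Matrix (Fin N) (Fin N) ℝ)).PosSemidef := by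
    intro p
    have hherm : (μ • H p - (1 : Matrix (Fin N) (Fin N) ℝ)).IsHermitian := by
      show (μ • H p - 1)ᴴ = μ • H p - 1
      rw [conjTranspose_sub, conjTranspose_smul, conjTranspose_one, star_trivial, (hH p).1]
    refine PosSemidef.of_dotProduct_mulVec_nonneg hherm fun x => ?_
    have hx1 : (0:ℝ) ≤ x ⬝ᵥ ((H p - lb • 1) *ᵥ x) := quadPos (heig p) x
    have hxx : (0:ℝ) ≤ x ⬝ᵥ x := Finset.sum_nonneg fun i _ => mul_self_nonneg _
    have hq : x ⬝ᵥ ((H p - lb • 1) *ᵥ x) = x ⬝ᵥ (H p *ᵥ x) - lb * (x ⬝ᵥ x) := by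
      rw [sub_mulVec, dotProduct_sub, smul_mulVec, one_mulVec, dotProduct_smul,
        smul_eq_mul]
    have hgoal : x ⬝ᵥ ((μ • H p - 1) *ᵥ x) = μ * (x ⬝ᵥ (H p *ᵥ x)) - (x ⬝ᵥ x) := by
      rw [sub_mulVec, dotProduct_sub, smul_mulVec, one_mulVec, dotProduct_smul,
        smul_eq_mul]
    rw [show (star x : Fin N → ℝ) = x from by simp, hgoal]
    rw [hq] at hx1
    nlinarith
  -- key quadratic inequality
  have hquad : ∀ p (x : Fin N × Fin n₀ → ℝ),
      x ⬝ᵥ ((((1 : Matrix (Fin N) (Fin N) ℝ) ⊗ₖ S₀ + (H p) ⊗ₖ (L₀ * F₀))ᵀ * Q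
        + Q * ((1 : Matrix (Fin N) (Fin N) ℝ) ⊗ₖ S₀ + (H p) ⊗ₖ (L₀ * F₀))) *ᵥ x)
        ≤ -(a * ‖x‖^2) := by
    intro p x
    rw [hkey p, add_mulVec, neg_mulVec, smul_mulVec, dotProduct_add, dotProduct_neg,
      dotProduct_smul, smul_eq_mul]
    have h1 := ha x
    have h2 : (0:ℝ) ≤ x ⬝ᵥ (((μ • H p - 1) ⊗ₖ G) *ᵥ x) :=
      quadPos (psd_kron (hKpsd p) hGpsd) x
    linarith
  -- Lyapunov function
  set lam : ℝ := a / (2 * bQ) with hlam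
  have hlampos : 0 < lam := div_pos hapos (by linarith)
  have hlam2 : 2 * lam * bQ = a := by rw [hlam]; field_simp
  set V : ℝ → ℝ := fun s => η s ⬝ᵥ Q *ᵥ η s with hV
  set W : ℝ → ℝ := fun s => V s * Real.exp (2 * lam * s) with hW
  have hVc : ContinuousOn V (Set.Ici 0) := (quad_continuous Q).comp_continuousOn hηc
  have hWc : ContinuousOn W (Set.Ici 0) :=
    hVc.mul (Real.continuous_exp.comp (continuous_const.mul continuous_id)).continuousOn
  have hWderiv : ∀ i, ∀ s ∈ Set.Ioo (t i) (t (i+1)),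
      HasDerivAt W
        ((η s ⬝ᵥ ((((1 : Matrix (Fin N) (Fin N) ℝ) ⊗ₖ S₀ + (H (σ s)) ⊗ₖ (L₀ * F₀))ᵀ * Q
          + Q * ((1 : Matrix (Fin N) (Fin N) ℝ) ⊗ₖ S₀ + (H (σ s)) ⊗ₖ (L₀ * F₀))) *ᵥ η s)
          + 2 * lam * V s) * Real.exp (2 * lam * s)) s := by
    intro i s hs
    have hd := hηd i s hs
    have hVd : HasDerivAt V
        (η s ⬝ᵥ ((((1 : Matrix (Fin N) (Fin N) ℝ) ⊗ₖ S₀ + (H (σ s)) ⊗ₖ (L₀ * F₀))ᵀ * Q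
          + Q * ((1 : Matrix (Fin N) (Fin N) ℝ) ⊗ₖ S₀ + (H (σ s)) ⊗ₖ (L₀ * F₀))) *ᵥ η s)) s := by
      have h0 := quad_hasDerivAt Q hd
      have e : ((((1 : Matrix (Fin N) (Fin N) ℝ) ⊗ₖ S₀ + (H (σ s)) ⊗ₖ (L₀ * F₀)) *ᵥ η s)
            ⬝ᵥ Q *ᵥ η s)
          + (η s ⬝ᵥ Q *ᵥ (((1 : Matrix (Fin N) (Fin N) ℝ) ⊗ₖ S₀ + (H (σ s)) ⊗ₖ (L₀ * F₀)) *ᵥ η s))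
          = η s ⬝ᵥ ((((1 : Matrix (Fin N) (Fin N) ℝ) ⊗ₖ S₀ + (H (σ s)) ⊗ₖ (L₀ * F₀))ᵀ * Q
            + Q * ((1 : Matrix (Fin N) (Fin N) ℝ) ⊗ₖ S₀ + (H (σ s)) ⊗ₖ (L₀ * F₀))) *ᵥ η s) := by
        rw [dot_mulVec_left, mulVec_mulVec, mulVec_mulVec, add_mulVec, dotProduct_add]
      rw [hV]
      exact e ▸ h0
    have h1 : HasDerivAt (fun s : ℝ => 2 * lam * s) (2 * lam) s := by
      simpa using (hasDerivAt_id s).const_mul (2 * lam)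
    have hexp : HasDerivAt (fun s : ℝ => Real.exp (2 * lam * s))
        (Real.exp (2 * lam * s) * (2 * lam)) s := h1.exp
    have hcomb := hVd.mul hexp
    rw [hW]
    exact hcomb.congr_deriv (by ring)
  have htnn : ∀ i, (0:ℝ) ≤ t i := fun i => by
    have h := htmono.monotone (Nat.zero_le i); rwa [ht0] at h
  have hanti : ∀ i, AntitoneOn W (Set.Icc (t i) (t (i+1))) := by
    intro i
    have hsub : Set.Icc (t i) (t (i+1)) ⊆ Set.Ici (0:ℝ) := fun s hs => le_trans (htnn i) hs.1
    refine antitoneOn_of_deriv_nonpos (convex_Icc _ _) (hWc.mono hsub) ?_ ?_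
    · intro s hs
      rw [interior_Icc] at hs
      exact ((hWderiv i s hs).differentiableAt).differentiableWithinAt
    · intro s hs
      rw [interior_Icc] at hs
      rw [(hWderiv i s hs).deriv]
      have hq := hquad (σ s) (η s)
      have hVle : V s ≤ bQ * ‖η s‖^2 := hbQ (η s)
      have hsum : η s ⬝ᵥ ((((1 : Matrix (Fin N) (Fin N) ℝ) ⊗ₖ S₀ + (H (σ s)) ⊗ₖ (L₀ * F₀))ᵀ * Q
          + Q * ((1 : Matrix (Fin N) (Fin N) ℝ) ⊗ₖ S₀ + (H (σ s)) ⊗ₖ (L₀ * F₀))) *ᵥ η s)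
          + 2 * lam * V s ≤ 0 := by nlinarith [mul_nonneg (by linarith [hlampos] : (0:ℝ) ≤ 2*lam) (sub_nonneg.mpr hVle)]
      exact mul_nonpos_of_nonpos_of_nonneg hsum (Real.exp_pos _).le
  have hchain : ∀ i, ∀ s ∈ Set.Icc (t i) (t (i+1)), W s ≤ W 0 := by
    intro i
    induction i with
    | zero =>
      intro s hs
      have h0 : (0:ℝ) ∈ Set.Icc (t 0) (t 1) :=
        ⟨le_of_eq ht0, by rw [← ht0]; exact (htmono (Nat.lt_succ_self 0)).le⟩
      exact hanti 0 h0 hs (by rw [← ht0]; exact hs.1)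
    | succ n ih =>
      intro s hs
      have hend : t (n+1) ∈ Set.Icc (t n) (t (n+1)) :=
        ⟨(htmono (Nat.lt_succ_self n)).le, le_refl _⟩
      have h1 : W (t (n+1)) ≤ W 0 := ih (t (n+1)) hend
      have hstart : t (n+1) ∈ Set.Icc (t (n+1)) (t (n+2)) :=
        ⟨le_refl _, (htmono (Nat.lt_succ_self (n+1))).le⟩
      exact le_trans (hanti (n+1) hstart hs hs.1) h1
  have hWle : ∀ s ≥ (0:ℝ), W s ≤ W 0 := by
    intro s hs
    have hex : ∃ n, s < t n := (htlim.eventually (eventually_gt_atTop s)).exists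
    have hlt : s < t (Nat.find hex) := Nat.find_spec hex
    have hne : Nat.find hex ≠ 0 := by
      intro h
      rw [h, ht0] at hlt; exact absurd hlt (not_lt.mpr hs)
    obtain ⟨m, hm⟩ := Nat.exists_eq_succ_of_ne_zero hne
    rw [hm] at hlt
    have hge : ¬ s < t m := Nat.find_min hex (by rw [hm]; exact Nat.lt_succ_self m)
    exact hchain m s ⟨not_lt.mp hge, hlt.le⟩
  have hW0 : W 0 = V 0 := by rw [hW]; simp
  have hV0nn : 0 ≤ V 0 := quadPos hQpd.posSemidef (η 0)
  refine ⟨Real.sqrt (V 0 / aQ), Real.sqrt_nonneg _, lam, hlampos, ?_⟩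
  intro s hs
  have h1 : V s ≤ V 0 * Real.exp (-(2 * lam) * s) := by
    have h2 := hWle s hs
    rw [hW0] at h2
    rw [hW] at h2
    simp only at h2
    have hexp : 0 < Real.exp (2 * lam * s) := Real.exp_pos _
    have h3 : V s ≤ V 0 / Real.exp (2 * lam * s) := (le_div_iff₀ hexp).mpr h2
    rw [neg_mul]
    rwa [div_eq_mul_inv, ← Real.exp_neg] at h3
  have h4 : aQ * ‖η s‖^2 ≤ V 0 * Real.exp (-(2 * lam) * s) := le_trans (haQ (η s)) h1
  have hc2 : (Real.sqrt (V 0 / aQ) * Real.exp (-lam * s))^2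
      = (V 0 / aQ) * Real.exp (-(2 * lam) * s) := by
    rw [mul_pow, Real.sq_sqrt (div_nonneg hV0nn haQpos.le), sq, ← Real.exp_add]
    ring_nf
  have h5 : ‖η s‖^2 ≤ (Real.sqrt (V 0 / aQ) * Real.exp (-lam * s))^2 := by
    rw [hc2, div_mul_eq_mul_div, le_div_iff₀ haQpos]
    nlinarith
  have h6 := Real.sqrt_le_sqrt h5
  rwa [Real.sqrt_sq (norm_nonneg _), Real.sqrt_sq (by positivity)] at h6
end

section
/- Let A ∈ ℝ^{n×n}, B ∈ ℝ^{n×m}, C ∈ ℝ^{l×n}, D ∈ ℝ^{l×m}, E ∈ ℝ^{n×q}, S ∈ ℝ^{q×q}, S₀ ∈ ℝ^{n₀×n₀}, F₀ ∈ ℝ^{l×n₀}. Suppose X₁, U₁ satisfy X₁S = AX₁ + BU₁ + E and 0 = CX₁ + DU₁, and X₂, U₂ satisfy X₂S₀ = AX₂ + BU₂ and 0 = CX₂ + DU₂ − F₀. Let K₁ be such that A + BK₁ is Hurwitz, K₂ = U₁ − K₁X₁, K₃ = U₂ − K₁X₂. Let d, r, x be differentiable with d' = S d, r' = S₀ r,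 x' = A x + B u + E d, where u(t) = K₁x(t) + K₂d(t) + K₃η(t) and η : [0,∞) → ℝ^{n₀} satisfies ‖η(t) − r(t)‖ ≤ c·e^{−λt} for some constants c > 0, λ > 0. Then e(t) = C x(t) + D u(t) − F₀ r(t) → 0 as t → ∞ for every initial condition. -/
open Matrix Filter

/-- A real square matrix is Hurwitz if every eigenvalue of it, regarded as a
complex matrix, has strictly negative real part. -/
def IsHurwitz {ι : Type*} [Fintype ι] [DecidableEq ι] (M : Matrix ι ι ℝ) : Prop :=
  ∀ μ ∈ spectrum ℂ (M.map Complex.ofReal), μ.re < 0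

open NormedSpace
open scoped ENNReal NNReal

attribute [local instance] Matrix.linftyOpNormedAddCommGroup Matrix.linftyOpNormedRing
  Matrix.linftyOpNormedSpace Matrix.linftyOpNormedAlgebra

variable {N : ℕ}

lemma pow_mulVec_eigen {M : Matrix (Fin N) (Fin N) ℂ} {lam : ℂ} {w : Fin N → ℂ}
    (hw : M *ᵥ w = lam • w) (k : ℕ) : (M ^ k) *ᵥ w = lam ^ k • w := by
  induction k with
  | zero => simp
  | succ k ih =>
      rw [pow_succ, ← Matrix.mulVec_mulVec, hw, Matrix.mulVec_smul, ih, smul_smul, pow_succ,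
        mul_comm]

/-- The continuous linear map `X ↦ X *ᵥ w`. -/
noncomputable def mulVecAtCLM (𝕜 : Type*) [RCLike 𝕜] (w : Fin N → 𝕜) :
    Matrix (Fin N) (Fin N) 𝕜 →L[𝕜] (Fin N → 𝕜) :=
  LinearMap.toContinuousLinearMap
    { toFun := fun X => X *ᵥ w
      map_add' := fun X Y => Matrix.add_mulVec X Y w
      map_smul' := fun a X => (Matrix.smul_mulVec a X w) }

@[simp] lemma mulVecAtCLM_apply (𝕜 : Type*) [RCLike 𝕜] (w : Fin N → 𝕜)
    (X : Matrix (Fin N) (Fin N) 𝕜) : mulVecAtCLM 𝕜 w X = X *ᵥ w := rfl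

lemma exp_mulVec_eigen {M : Matrix (Fin N) (Fin N) ℂ} {lam : ℂ} {w : Fin N → ℂ}
    (hw : M *ᵥ w = lam • w) : exp M *ᵥ w = Complex.exp lam • w := by
  have h1 : exp M *ᵥ w = mulVecAtCLM ℂ w (exp M) := rfl
  rw [h1, exp_eq_tsum ℂ]; beta_reduce; refine (ContinuousLinearMap.map_tsum _ (expSeries_summable' (𝕂 := ℂ) M)).trans ?_
  have h2 : ∀ k : ℕ, mulVecAtCLM ℂ w ((k.factorial⁻¹ : ℂ) • M ^ k)
      = ((k.factorial⁻¹ : ℂ) * lam ^ k) • w := by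
    intro k
    rw [_root_.map_smul, mulVecAtCLM_apply, pow_mulVec_eigen hw, smul_smul]
  refine (tsum_congr h2).trans ?_
  have h3 : Summable fun k : ℕ => (k.factorial⁻¹ : ℂ) * lam ^ k := by
    simpa [smul_eq_mul] using expSeries_summable' (𝕂 := ℂ) lam
  rw [Summable.tsum_smul_const h3 w]
  congr 1
  rw [Complex.exp_eq_exp_ℂ, exp_eq_tsum ℂ]
  simp [smul_eq_mul]

lemma mem_spectrum_of_eigen {M : Matrix (Fin N) (Fin N) ℂ} {lam : ℂ} {w : Fin N → ℂ}
    (hw0 : w ≠ 0) (hw : M *ᵥ w = lam • w) : lam ∈ spectrum ℂ M := by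
  rw [spectrum.mem_iff]
  intro hunit
  have hdet := (Matrix.isUnit_iff_isUnit_det _).mp hunit
  have h0 : (algebraMap ℂ (Matrix (Fin N) (Fin N) ℂ) lam - M).det = 0 := by
    rw [← Matrix.exists_mulVec_eq_zero_iff]
    refine ⟨w, hw0, ?_⟩
    rw [Matrix.sub_mulVec, hw, Algebra.algebraMap_eq_smul_one, Matrix.smul_mulVec,
      Matrix.one_mulVec, sub_self]
  rw [h0] at hdet
  exact (not_isUnit_zero hdet : False)

set_option maxHeartbeats 1000000 in
lemma spectrum_exp_subset (M : Matrix (Fin N) (Fin N) ℂ) :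
    spectrum ℂ (exp M) ⊆ Complex.exp '' spectrum ℂ M := by
  intro μ hμ
  rw [spectrum.mem_iff] at hμ
  have hdet : (algebraMap ℂ (Matrix (Fin N) (Fin N) ℂ) μ - exp M).det = 0 := by
    by_contra h
    exact hμ ((Matrix.isUnit_iff_isUnit_det _).mpr (Ne.isUnit h))
  obtain ⟨v, hv0, hv⟩ := (Matrix.exists_mulVec_eq_zero_iff).mpr hdet
  set P : Matrix (Fin N) (Fin N) ℂ := algebraMap ℂ (Matrix (Fin N) (Fin N) ℂ) μ - exp M with hP
  -- the kernel of P is invariant under M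
  have hcomm : P * M = M * P := by
    have h1 : Commute M (exp M) := (Commute.refl M).exp_right
    have h2 : Commute M (algebraMap ℂ (Matrix (Fin N) (Fin N) ℂ) μ) := Algebra.commute_algebraMap_right _ _
    simp only [hP, Matrix.sub_mul, Matrix.mul_sub]
    rw [h1.eq, h2.eq]
  set W := LinearMap.ker P.mulVecLin with hW
  have hvW : v ∈ W := by simpa [hW, Matrix.mulVecLin_apply] using hv
  have hWinv : ∀ y ∈ W, M.mulVecLin y ∈ W := by
    intro y hy
    simp only [hW, LinearMap.mem_ker, Matrix.mulVecLin_apply] at hy ⊢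
    rw [Matrix.mulVec_mulVec, hcomm, ← Matrix.mulVec_mulVec, hy, Matrix.mulVec_zero]
  haveI : Nontrivial W := ⟨⟨⟨v, hvW⟩, 0, fun h => hv0 (congrArg Subtype.val h)⟩⟩
  obtain ⟨lam, hlam⟩ := Module.End.exists_eigenvalue (M.mulVecLin.restrict hWinv)
  obtain ⟨w, hw⟩ := hlam.exists_hasEigenvector
  have hw0 : (w : Fin N → ℂ) ≠ 0 := fun h => hw.right (Subtype.ext h)
  have hweig : M *ᵥ (w : Fin N → ℂ) = lam • (w : Fin N → ℂ) := by
    have := congrArg Subtype.val hw.apply_eq_smul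
    simpa [LinearMap.restrict_coe_apply, Matrix.mulVecLin_apply] using this
  refine ⟨lam, mem_spectrum_of_eigen hw0 hweig, ?_⟩
  -- w is in the kernel of P, so μ • w = exp M *ᵥ w = exp lam • w
  have hwker : P *ᵥ (w : Fin N → ℂ) = 0 := w.2
  rw [hP, Matrix.sub_mulVec, Algebra.algebraMap_eq_smul_one, Matrix.smul_mulVec,
    Matrix.one_mulVec, exp_mulVec_eigen hweig, sub_eq_zero] at hwker
  have h2 : (μ - Complex.exp lam) • (w : Fin N → ℂ) = 0 := by
    rw [sub_smul, hwker, sub_self]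
  rcases smul_eq_zero.mp h2 with h | h
  · exact (sub_eq_zero.mp h).symm
  · exact absurd h hw0

lemma norm_map_ofReal' (X : Matrix (Fin N) (Fin N) ℝ) : ‖X.map Complex.ofReal‖ = ‖X‖ := by
  simp only [Matrix.linfty_opNorm_def, Matrix.map_apply, Complex.nnnorm_real]

set_option maxHeartbeats 2000000 in
lemma hurwitz_exp_pow_bound (M : Matrix (Fin N) (Fin N) ℝ) (hM : IsHurwitz M) :
    ∃ K₀ : ℝ, 1 ≤ K₀ ∧ ∃ r : ℝ, 0 < r ∧ r < 1 ∧ ∀ k : ℕ, ‖(exp M) ^ k‖ ≤ K₀ * r ^ k := by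
  set Mc := M.map Complex.ofReal with hMc
  have hfin := Matrix.finite_spectrum (R := ℂ) Mc
  set T : Finset ℝ := insert (-1) (hfin.toFinset.image Complex.re) with hT
  have hTne : T.Nonempty := ⟨-1, Finset.mem_insert_self _ _⟩
  set θ := T.max' hTne with hθ
  have hθneg : θ < 0 := by
    rw [hθ, Finset.max'_lt_iff]
    intro y hy
    rcases Finset.mem_insert.mp hy with h | h
    · rw [h]; norm_num
    · obtain ⟨μ, hμ, rfl⟩ := Finset.mem_image.mp h
      exact hM μ (hfin.mem_toFinset.mp hμ)
  have hθle : ∀ μ ∈ spectrum ℂ Mc, μ.re ≤ θ := fun μ hμ =>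
    Finset.le_max' _ _ (Finset.mem_insert_of_mem (Finset.mem_image_of_mem _ (hfin.mem_toFinset.mpr hμ)))
  set a := exp Mc with ha
  set r : ℝ := (Real.exp θ + 1) / 2 with hr
  have hexpθ0 : 0 < Real.exp θ := Real.exp_pos θ
  have hexpθ1 : Real.exp θ < 1 := Real.exp_lt_one_iff.mpr hθneg
  have hr0 : 0 < r := by rw [hr]; linarith
  have hr1 : r < 1 := by rw [hr]; linarith
  have hθr : Real.exp θ < r := by rw [hr]; linarith
  have hρ : spectralRadius ℂ a ≤ ENNReal.ofReal (Real.exp θ) := by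
    refine iSup₂_le fun μ hμ => ?_
    obtain ⟨lam, hlam, rfl⟩ := spectrum_exp_subset Mc hμ
    rw [← ENNReal.ofReal_coe_nnreal, coe_nnnorm]
    apply ENNReal.ofReal_le_ofReal
    rw [Complex.norm_exp]
    exact Real.exp_le_exp.mpr (hθle lam hlam)
  have hlt : spectralRadius ℂ a < ENNReal.ofReal r :=
    lt_of_le_of_lt hρ ((ENNReal.ofReal_lt_ofReal_iff (by linarith)).mpr hθr)
  have hev : ∀ᶠ k : ℕ in atTop, (‖a ^ k‖₊ : ℝ≥0∞) ^ (1/(k:ℝ)) < ENNReal.ofReal r :=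
    (spectrum.pow_nnnorm_pow_one_div_tendsto_nhds_spectralRadius a).eventually_lt_const hlt
  obtain ⟨N₀, hN₀⟩ := Filter.eventually_atTop.mp hev
  have hkey : ∀ k, N₀ ≤ k → 1 ≤ k → ‖a ^ k‖ ≤ r ^ k := by
    intro k hk hk1
    have h := hN₀ k hk
    have hkne : ((k:ℝ)) ≠ 0 := by positivity
    have h2 : ((‖a ^ k‖₊ : ℝ≥0∞) ^ (1/(k:ℝ))) ^ (k:ℕ) ≤ (ENNReal.ofReal r) ^ (k:ℕ) :=
      pow_le_pow_left' h.le k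
    rw [← ENNReal.rpow_natCast ((‖a ^ k‖₊ : ℝ≥0∞) ^ (1/(k:ℝ))) k, ← ENNReal.rpow_mul,
      one_div, inv_mul_cancel₀ hkne, ENNReal.rpow_one, ← ENNReal.ofReal_pow hr0.le,
      ← ENNReal.ofReal_coe_nnreal, coe_nnnorm, ENNReal.ofReal_le_ofReal_iff (by positivity)] at h2
    exact h2
  set K₀ : ℝ := 1 + ∑ j ∈ Finset.range (N₀+1), ‖a^j‖ / r^j with hK₀def
  have hsum_nonneg : 0 ≤ ∑ j ∈ Finset.range (N₀+1), ‖a^j‖ / r^j :=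
    Finset.sum_nonneg fun j _ => by positivity
  have hK₀1 : 1 ≤ K₀ := by rw [hK₀def]; linarith
  have hK₀ : ∀ k : ℕ, ‖a ^ k‖ ≤ K₀ * r ^ k := by
    intro k
    by_cases hcase : N₀ ≤ k ∧ 1 ≤ k
    · calc ‖a ^ k‖ ≤ r ^ k := hkey k hcase.1 hcase.2
        _ ≤ K₀ * r ^ k := le_mul_of_one_le_left (by positivity) hK₀1
    · have hkN : k ≤ N₀ := by
        rcases not_and_or.mp hcase with h | h
        · exact le_of_not_ge h
        · omega
      have hmem : k ∈ Finset.range (N₀+1) := Finset.mem_range.mpr (by omega)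
      have hterm : ‖a^k‖ / r^k ≤ ∑ j ∈ Finset.range (N₀+1), ‖a^j‖ / r^j :=
        Finset.single_le_sum (f := fun j => ‖a^j‖ / r^j) (fun j _ => by positivity) hmem
      have : ‖a^k‖ / r^k ≤ K₀ := by rw [hK₀def]; linarith
      calc ‖a ^ k‖ = (‖a^k‖ / r^k) * r^k := by field_simp
        _ ≤ K₀ * r ^ k := mul_le_mul_of_nonneg_right this (by positivity)
  -- transfer to the real matrix
  have hmap : (exp M).map Complex.ofReal = a := by
    have h1 : (Complex.ofRealHom.mapMatrix : Matrix (Fin N) (Fin N) ℝ →+* Matrix (Fin N) (Fin N) ℂ)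
        (exp M) = exp (Complex.ofRealHom.mapMatrix M) := by
      apply map_exp
      apply AddMonoidHomClass.isometry_of_norm _ (fun X => norm_map_ofReal' X) |>.continuous
    have h2 : exp Mc = exp Mc := rfl
    rw [RingHom.mapMatrix_apply, RingHom.mapMatrix_apply] at h1
    rw [ha, hMc, ← h2]
    exact h1
  have hreal : ∀ k : ℕ, ‖(exp M) ^ k‖ ≤ K₀ * r ^ k := by
    intro k
    have : ((exp M) ^ k).map Complex.ofReal = a ^ k := by
      have hco : (Complex.ofReal : ℝ → ℂ) = ⇑Complex.ofRealHom := rfl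
      rw [← hmap, hco, ← RingHom.mapMatrix_apply, ← RingHom.mapMatrix_apply, map_pow]
    calc ‖(exp M) ^ k‖ = ‖((exp M) ^ k).map Complex.ofReal‖ := (norm_map_ofReal' _).symm
      _ = ‖a ^ k‖ := by rw [this]
      _ ≤ K₀ * r ^ k := hK₀ k
  exact ⟨K₀, hK₀1, r, hr0, hr1, hreal⟩

set_option maxHeartbeats 1000000 in
lemma hurwitz_exp_decay (M : Matrix (Fin N) (Fin N) ℝ) (hM : IsHurwitz M) :
    ∃ K > 0, ∃ ε > 0, ∀ t : ℝ, 0 ≤ t → ‖exp (t • M)‖ ≤ K * Real.exp (-ε * t) := by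
  obtain ⟨K₀, hK₀1, r, hr0, hr1, hreal⟩ := hurwitz_exp_pow_bound M hM
  have hcont : Continuous fun s : ℝ => exp (s • M) :=
    exp_continuous.comp (continuous_id.smul continuous_const)
  obtain ⟨s₀, _, hs₀max⟩ := isCompact_Icc.exists_isMaxOn (Set.nonempty_Icc.mpr zero_le_one)
    hcont.norm.continuousOn
  have hs₀ : ∀ s ∈ Set.Icc (0:ℝ) 1, ‖exp (s • M)‖ ≤ ‖exp (s₀ • M)‖ := fun s hsm => hs₀max hsm
  set C₁ : ℝ := ‖exp (s₀ • M)‖ with hC₁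
  have hC₁0 : 0 ≤ C₁ := norm_nonneg _
  set ε : ℝ := - Real.log r with hε
  have hεpos : 0 < ε := by
    rw [hε]
    simpa using Real.log_neg hr0 hr1
  refine ⟨C₁ * K₀ * Real.exp ε + 1, by positivity, ε, hεpos, fun t ht => ?_⟩
  set k : ℕ := ⌊t⌋₊ with hk
  set s : ℝ := t - k with hs
  have hs0 : 0 ≤ s := by
    rw [hs]
    simpa using Nat.floor_le ht
  have hs1 : s ≤ 1 := by
    have := Nat.lt_floor_add_one t
    rw [hs]; push_cast at this ⊢; linarith
  have hsplit : t • M = s • M + (k:ℝ) • M := by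
    rw [← add_smul]
    congr 1
    rw [hs]; ring
  have hcomm : Commute (s • M) ((k:ℝ) • M) := ((Commute.refl M).smul_left s).smul_right (k:ℝ)
  have hexp_split : exp (t • M) = exp (s • M) * exp ((k:ℝ) • M) := by
    rw [hsplit]; exact exp_add_of_commute hcomm
  have hnat : ((k:ℝ) • M) = (k • M : Matrix (Fin N) (Fin N) ℝ) :=
    Nat.cast_smul_eq_nsmul ℝ k M
  have hexpk : exp ((k:ℝ) • M) = (exp M) ^ k := by
    rw [hnat]; exact NormedSpace.exp_nsmul k M
  have hnorm1 : ‖exp (s • M)‖ ≤ C₁ := hs₀ s ⟨hs0, hs1⟩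
  have hrk : r ^ k ≤ Real.exp ε * Real.exp (-ε * t) := by
    have h1 : r ^ k = Real.exp ((k:ℝ) * Real.log r) := by
      rw [Real.exp_nat_mul, Real.exp_log hr0]
    have h2 : t - 1 ≤ (k:ℝ) := by
      have := Nat.lt_floor_add_one t
      rw [hk]; push_cast at this ⊢; linarith
    have h3 : (k:ℝ) * Real.log r ≤ ε - ε * t := by
      have hlogr : Real.log r = -ε := by rw [hε]; ring
      rw [hlogr]
      have : ε * (t - 1) ≤ ε * (k:ℝ) := mul_le_mul_of_nonneg_left h2 hεpos.le
      nlinarith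
    rw [h1, ← Real.exp_add]
    exact Real.exp_le_exp.mpr (by linarith)
  calc ‖exp (t • M)‖ = ‖exp (s • M) * (exp M) ^ k‖ := by rw [hexp_split, hexpk]
    _ ≤ ‖exp (s • M)‖ * ‖(exp M) ^ k‖ := norm_mul_le _ _
    _ ≤ C₁ * (K₀ * r ^ k) := mul_le_mul hnorm1 (hreal k) (norm_nonneg _) hC₁0
    _ ≤ C₁ * (K₀ * (Real.exp ε * Real.exp (-ε * t))) := by
        apply mul_le_mul_of_nonneg_left _ hC₁0
        exact mul_le_mul_of_nonneg_left hrk (by linarith)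
    _ = C₁ * K₀ * Real.exp ε * Real.exp (-ε * t) := by ring
    _ ≤ (C₁ * K₀ * Real.exp ε + 1) * Real.exp (-ε * t) := by
        apply mul_le_mul_of_nonneg_right _ (Real.exp_pos _).le
        linarith

/-- `mulVec` as a continuous bilinear map. -/
noncomputable def matVecCLM (N : ℕ) :
    Matrix (Fin N) (Fin N) ℝ →L[ℝ] (Fin N → ℝ) →L[ℝ] (Fin N → ℝ) :=
  LinearMap.toContinuousLinearMap
    ((LinearMap.toContinuousLinearMap :
        ((Fin N → ℝ) →ₗ[ℝ] (Fin N → ℝ)) ≃ₗ[ℝ] ((Fin N → ℝ) →L[ℝ] (Fin N → ℝ))).toLinearMap.comp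
      (Matrix.toLin' : Matrix (Fin N) (Fin N) ℝ ≃ₗ[ℝ] _).toLinearMap)

@[simp] lemma matVecCLM_apply (X : Matrix (Fin N) (Fin N) ℝ) (v : Fin N → ℝ) :
    matVecCLM N X v = X *ᵥ v := by
  simp [matVecCLM, Matrix.toLin'_apply]

lemma tendsto_zero_forced (M : Matrix (Fin N) (Fin N) ℝ)
    (K ε : ℝ) (hK : 0 < K) (hε : 0 < ε)
    (hdecay : ∀ t : ℝ, 0 ≤ t → ‖exp (t • M)‖ ≤ K * Real.exp (-ε * t))
    (z f : ℝ → Fin N → ℝ) (c' lam : ℝ) (hc' : 0 ≤ c') (hlam : 0 < lam)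
    (hf : ∀ t ≥ (0:ℝ), ‖f t‖ ≤ c' * Real.exp (-lam * t))
    (hz : ∀ t, HasDerivAt z (M *ᵥ z t + f t) t) :
    Tendsto z atTop (nhds 0) := by
  set ε' := min ε lam with hε'
  have hε'pos : 0 < ε' := lt_min hε hlam
  have hmain : ∀ T : ℝ, 0 ≤ T →
      ‖z T‖ ≤ K * Real.exp (-ε * T) * ‖z 0‖ + K * c' * Real.exp (-ε' * T) * T := by
    intro T hT
    set w : ℝ → Fin N → ℝ := fun t => matVecCLM N (exp ((T - t) • M)) (z t) with hwdef
    have hw : ∀ t : ℝ, HasDerivAt w (exp ((T - t) • M) *ᵥ f t) t := by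
      intro t
      have hF : HasDerivAt (fun u : ℝ => exp (u • M)) (exp ((T - t) • M) * M) (T - t) :=
        hasDerivAt_exp_smul_const (𝕂 := ℝ) M (T - t)
      have hu : HasDerivAt (fun s : ℝ => T - s) (-1) t := by
        simpa using (hasDerivAt_id t).const_sub T
      have hF2 : HasDerivAt (fun s : ℝ => exp ((T - s) • M))
          ((-1 : ℝ) • (exp ((T - t) • M) * M)) t := hF.scomp t hu
      have hF3 : HasDerivAt (fun s : ℝ => matVecCLM N (exp ((T - s) • M)))
          (matVecCLM N ((-1 : ℝ) • (exp ((T - t) • M) * M))) t :=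
        ((matVecCLM N).hasFDerivAt.comp_hasDerivAt t hF2)
      have hprod := hF3.clm_apply (hz t)
      refine HasDerivAt.congr_deriv hprod ?_
      have h1 : matVecCLM N ((-1 : ℝ) • (exp ((T - t) • M) * M)) (z t)
          = -(exp ((T - t) • M) *ᵥ (M *ᵥ z t)) := by
        rw [_root_.map_smul]
        simp [Matrix.mulVec_mulVec]
      have h2 : matVecCLM N (exp ((T - t) • M)) (M *ᵥ z t + f t)
          = exp ((T - t) • M) *ᵥ (M *ᵥ z t) + exp ((T - t) • M) *ᵥ f t := by
        simp [Matrix.mulVec_add]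
      rw [h1, h2]
      abel
    have hC : ∀ t ∈ Set.Icc (0:ℝ) T, ‖exp ((T - t) • M) *ᵥ f t‖
        ≤ K * c' * Real.exp (-ε' * T) := by
      intro t ht
      have h1 : ‖exp ((T - t) • M) *ᵥ f t‖ ≤ ‖exp ((T - t) • M)‖ * ‖f t‖ :=
        Matrix.linfty_opNorm_mulVec _ _
      have h2 : ‖exp ((T - t) • M)‖ ≤ K * Real.exp (-ε * (T - t)) :=
        hdecay (T - t) (by linarith [ht.2])
      have h3 : ‖f t‖ ≤ c' * Real.exp (-lam * t) := hf t ht.1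
      have h4 : Real.exp (-ε * (T - t)) * Real.exp (-lam * t) ≤ Real.exp (-ε' * T) := by
        rw [← Real.exp_add]
        apply Real.exp_le_exp.mpr
        have hε1 : ε' ≤ ε := min_le_left _ _
        have hε2 : ε' ≤ lam := min_le_right _ _
        nlinarith [ht.1, ht.2, sub_nonneg.mpr ht.2]
      calc ‖exp ((T - t) • M) *ᵥ f t‖ ≤ ‖exp ((T - t) • M)‖ * ‖f t‖ := h1
        _ ≤ (K * Real.exp (-ε * (T - t))) * (c' * Real.exp (-lam * t)) :=
            mul_le_mul h2 h3 (norm_nonneg _) (by positivity)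
        _ = K * c' * (Real.exp (-ε * (T - t)) * Real.exp (-lam * t)) := by ring
        _ ≤ K * c' * Real.exp (-ε' * T) := by
            apply mul_le_mul_of_nonneg_left h4 (by positivity)
    have hmvt := norm_image_sub_le_of_norm_deriv_le_segment'
      (f := w) (f' := fun t => exp ((T - t) • M) *ᵥ f t) (a := 0) (b := T)
      (C := K * c' * Real.exp (-ε' * T))
      (fun t ht => (hw t).hasDerivWithinAt) (fun t ht => hC t (Set.Ico_subset_Icc_self ht)) T (Set.right_mem_Icc.mpr hT)
    have hwT : w T = z T := by
      simp [hwdef]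
    have hw0 : w 0 = exp (T • M) *ᵥ z 0 := by
      simp [hwdef]
    have hw0n : ‖w 0‖ ≤ K * Real.exp (-ε * T) * ‖z 0‖ := by
      rw [hw0]
      calc ‖exp (T • M) *ᵥ z 0‖ ≤ ‖exp (T • M)‖ * ‖z 0‖ := Matrix.linfty_opNorm_mulVec _ _
        _ ≤ K * Real.exp (-ε * T) * ‖z 0‖ :=
            mul_le_mul_of_nonneg_right (hdecay T hT) (norm_nonneg _)
    calc ‖z T‖ = ‖(w T - w 0) + w 0‖ := by rw [hwT]; ring_nf
      _ ≤ ‖w T - w 0‖ + ‖w 0‖ := norm_add_le _ _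
      _ ≤ K * c' * Real.exp (-ε' * T) * (T - 0) + (K * Real.exp (-ε * T) * ‖z 0‖) := by
          exact add_le_add hmvt hw0n
      _ = K * Real.exp (-ε * T) * ‖z 0‖ + K * c' * Real.exp (-ε' * T) * T := by ring
  -- now pass to the limit
  have h1 : Tendsto (fun T : ℝ => K * Real.exp (-ε * T) * ‖z 0‖) atTop (nhds 0) := by
    have hb : Tendsto (fun T : ℝ => -ε * T) atTop atBot :=
      tendsto_id.const_mul_atTop_of_neg (neg_lt_zero.mpr hε)
    have := (Real.tendsto_exp_atBot.comp hb).const_mul K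
    simpa using this.mul_const ‖z 0‖
  have h2 : Tendsto (fun T : ℝ => K * c' * Real.exp (-ε' * T) * T) atTop (nhds 0) := by
    have h3 : Tendsto (fun T : ℝ => (ε' * T) ^ 1 * Real.exp (-(ε' * T))) atTop (nhds 0) :=
      (Real.tendsto_pow_mul_exp_neg_atTop_nhds_zero 1).comp (tendsto_id.const_mul_atTop hε'pos)
    have h4 := (h3.const_mul (K * c' / ε'))
    rw [mul_zero] at h4
    have heq : ∀ T : ℝ, K * c' / ε' * ((ε' * T) ^ 1 * Real.exp (-(ε' * T)))
        = K * c' * Real.exp (-ε' * T) * T := by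
      intro T
      have : -(ε' * T) = -ε' * T := by ring
      rw [this]
      field_simp
    exact h4.congr heq
  have hbound := h1.add h2
  rw [add_zero] at hbound
  apply squeeze_zero_norm' _ hbound
  filter_upwards [eventually_ge_atTop (0:ℝ)] with T hT
  exact hmain T hT

lemma HasDerivAt.const_mulVec' {a b : ℕ} (X : Matrix (Fin a) (Fin b) ℝ) {g : ℝ → Fin b → ℝ}
    {g' : Fin b → ℝ} {t : ℝ} (hg : HasDerivAt g g' t) :
    HasDerivAt (fun s => X *ᵥ g s) (X *ᵥ g') t := by
  have := (LinearMap.toContinuousLinearMap X.mulVecLin).hasFDerivAt.comp_hasDerivAt t hg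
  exact this

theorem stmt7 {n m l q n₀ : ℕ}
    (A : Matrix (Fin n) (Fin n) ℝ) (B : Matrix (Fin n) (Fin m) ℝ)
    (C : Matrix (Fin l) (Fin n) ℝ) (D : Matrix (Fin l) (Fin m) ℝ)
    (E : Matrix (Fin n) (Fin q) ℝ) (S : Matrix (Fin q) (Fin q) ℝ)
    (S₀ : Matrix (Fin n₀) (Fin n₀) ℝ) (F₀ : Matrix (Fin l) (Fin n₀) ℝ)
    (X₁ : Matrix (Fin n) (Fin q) ℝ) (U₁ : Matrix (Fin m) (Fin q) ℝ)
    (hreg11 : X₁ * S = A * X₁ + B * U₁ + E)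
    (hreg12 : C * X₁ + D * U₁ = 0)
    (X₂ : Matrix (Fin n) (Fin n₀) ℝ) (U₂ : Matrix (Fin m) (Fin n₀) ℝ)
    (hreg21 : X₂ * S₀ = A * X₂ + B * U₂)
    (hreg22 : C * X₂ + D * U₂ = F₀)
    (K₁ : Matrix (Fin m) (Fin n) ℝ) (hK₁ : IsHurwitz (A + B * K₁))
    (K₂ : Matrix (Fin m) (Fin q) ℝ) (hK₂ : K₂ = U₁ - K₁ * X₁)
    (K₃ : Matrix (Fin m) (Fin n₀) ℝ) (hK₃ : K₃ = U₂ - K₁ * X₂)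
    (d : ℝ → Fin q → ℝ) (r : ℝ → Fin n₀ → ℝ) (x : ℝ → Fin n → ℝ) (u : ℝ → Fin m → ℝ)
    (η : ℝ → Fin n₀ → ℝ) (c lam : ℝ) (hc : 0 < c) (hlam : 0 < lam)
    (hη : ∀ t ≥ (0:ℝ), ‖η t - r t‖ ≤ c * Real.exp (-lam * t))
    (hu : ∀ t, u t = K₁.mulVec (x t) + K₂.mulVec (d t) + K₃.mulVec (η t))
    (hd : ∀ t, HasDerivAt d (S.mulVec (d t)) t)
    (hr : ∀ t, HasDerivAt r (S₀.mulVec (r t)) t)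
    (hx : ∀ t, HasDerivAt x (A.mulVec (x t) + B.mulVec (u t) + E.mulVec (d t)) t) :
    Tendsto (fun t => C.mulVec (x t) + D.mulVec (u t) - F₀.mulVec (r t)) atTop (nhds 0) := by
  classical
  set M : Matrix (Fin n) (Fin n) ℝ := A + B * K₁ with hM
  set z : ℝ → Fin n → ℝ := fun t => x t - X₁ *ᵥ d t - X₂ *ᵥ r t with hzdef
  set f : ℝ → Fin n → ℝ := fun t => (B * K₃) *ᵥ (η t - r t) with hfdef
  -- derivative identity
  have key : ∀ t, (A *ᵥ x t + B *ᵥ u t + E *ᵥ d t) - X₁ *ᵥ (S *ᵥ d t) - X₂ *ᵥ (S₀ *ᵥ r t)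
      = M *ᵥ z t + f t := by
    intro t
    have e1 : X₁ *ᵥ (S *ᵥ d t) = A *ᵥ (X₁ *ᵥ d t) + B *ᵥ (U₁ *ᵥ d t) + E *ᵥ d t := by
      rw [Matrix.mulVec_mulVec, hreg11]
      simp only [Matrix.add_mulVec, ← Matrix.mulVec_mulVec]
    have e2 : X₂ *ᵥ (S₀ *ᵥ r t) = A *ᵥ (X₂ *ᵥ r t) + B *ᵥ (U₂ *ᵥ r t) := by
      rw [Matrix.mulVec_mulVec, hreg21]
      simp only [Matrix.add_mulVec, ← Matrix.mulVec_mulVec]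
    simp only [hu t, hK₂, hK₃, hM, hzdef, hfdef, e1, e2]
    simp only [Matrix.mul_sub, Matrix.add_mulVec, Matrix.sub_mulVec, Matrix.mulVec_add,
      Matrix.mulVec_sub, ← Matrix.mulVec_mulVec]
    abel
  have hzd : ∀ t, HasDerivAt z (M *ᵥ z t + f t) t := by
    intro t
    have h1 : HasDerivAt (fun s => X₁ *ᵥ d s) (X₁ *ᵥ (S *ᵥ d t)) t :=
      HasDerivAt.const_mulVec' X₁ (hd t)
    have h2 : HasDerivAt (fun s => X₂ *ᵥ r s) (X₂ *ᵥ (S₀ *ᵥ r t)) t :=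
      HasDerivAt.const_mulVec' X₂ (hr t)
    have h3 := ((hx t).sub h1).sub h2
    rw [key t] at h3
    exact h3
  -- bound on the forcing term
  have hfb : ∀ t ≥ (0:ℝ), ‖f t‖ ≤ (‖B * K₃‖ * c) * Real.exp (-lam * t) := by
    intro t ht
    calc ‖f t‖ ≤ ‖B * K₃‖ * ‖η t - r t‖ := Matrix.linfty_opNorm_mulVec _ _
      _ ≤ ‖B * K₃‖ * (c * Real.exp (-lam * t)) :=
          mul_le_mul_of_nonneg_left (hη t ht) (norm_nonneg _)
      _ = (‖B * K₃‖ * c) * Real.exp (-lam * t) := by ring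
  obtain ⟨K, hKpos, ε, hεpos, hdecay⟩ := hurwitz_exp_decay M hK₁
  have hz0 : Tendsto z atTop (nhds 0) :=
    tendsto_zero_forced M K ε hKpos hεpos hdecay z f (‖B * K₃‖ * c) lam
      (by positivity) hlam hfb hzd
  -- error formula
  have herr : ∀ t, C *ᵥ x t + D *ᵥ u t - F₀ *ᵥ r t
      = (C + D * K₁) *ᵥ z t + (D * K₃) *ᵥ (η t - r t) := by
    intro t
    have h0 : C *ᵥ (X₁ *ᵥ d t) + D *ᵥ (U₁ *ᵥ d t) = 0 := by
      rw [Matrix.mulVec_mulVec, Matrix.mulVec_mulVec, ← Matrix.add_mulVec, hreg12,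
        Matrix.zero_mulVec]
    have hF : F₀ *ᵥ r t = C *ᵥ (X₂ *ᵥ r t) + D *ᵥ (U₂ *ᵥ r t) := by
      rw [← hreg22]
      simp only [Matrix.add_mulVec, ← Matrix.mulVec_mulVec]
    have hmain : C *ᵥ x t + D *ᵥ u t - F₀ *ᵥ r t
        = ((C + D * K₁) *ᵥ z t + (D * K₃) *ᵥ (η t - r t))
          + (C *ᵥ (X₁ *ᵥ d t) + D *ᵥ (U₁ *ᵥ d t)) := by
      simp only [hu t, hK₂, hK₃, hF, hzdef]
      simp only [Matrix.mul_sub, Matrix.add_mulVec, Matrix.sub_mulVec, Matrix.mulVec_add,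
        Matrix.mulVec_sub, ← Matrix.mulVec_mulVec]
      abel
    rw [hmain, h0, add_zero]
  -- conclude
  have hzero : Tendsto (fun t => (C + D * K₁) *ᵥ z t) atTop (nhds 0) := by
    have hcont : Continuous fun v : Fin n → ℝ => (C + D * K₁) *ᵥ v :=
      (LinearMap.toContinuousLinearMap (C + D * K₁).mulVecLin).continuous
    have h := (hcont.tendsto 0).comp hz0
    rw [Matrix.mulVec_zero] at h
    exact h
  have hsecond : Tendsto (fun t => (D * K₃) *ᵥ (η t - r t)) atTop (nhds 0) := by
    apply squeeze_zero_norm' (a := fun t => ‖D * K₃‖ * c * Real.exp (-lam * t))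
    · filter_upwards [eventually_ge_atTop (0:ℝ)] with t ht
      calc ‖(D * K₃) *ᵥ (η t - r t)‖ ≤ ‖D * K₃‖ * ‖η t - r t‖ :=
            Matrix.linfty_opNorm_mulVec _ _
        _ ≤ ‖D * K₃‖ * (c * Real.exp (-lam * t)) :=
            mul_le_mul_of_nonneg_left (hη t ht) (norm_nonneg _)
        _ = ‖D * K₃‖ * c * Real.exp (-lam * t) := by ring
    · have hb : Tendsto (fun t : ℝ => -lam * t) atTop atBot :=
        tendsto_id.const_mul_atTop_of_neg (neg_lt_zero.mpr hlam)
      have := (Real.tendsto_exp_atBot.comp hb).const_mul (‖D * K₃‖ * c)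
      simpa using this
  have hsum := hzero.add hsecond
  rw [add_zero] at hsum
  apply hsum.congr
  intro t
  exact (herr t).symm
end

section
/- Let A ∈ ℝ^{n×n}, B ∈ ℝ^{n×m}, C ∈ ℝ^{l×n}, D ∈ ℝ^{l×m}, E ∈ ℝ^{n×q}, S ∈ ℝ^{q×q}, S₀ ∈ ℝ^{n₀×n₀}, F₀ ∈ ℝ^{l×n₀}. Suppose X₁, U₁ satisfy X₁S = AX₁ + BU₁ + E and 0 = CX₁ + DU₁, and X₂, U₂ satisfy X₂S₀ = AX₂ + BU₂ and 0 = CX₂ + DU₂ − F₀. Let K₁ ∈ ℝ^{m×n}, K₂ = U₁ − K₁X₁, K₃ = U₂ − K₁X₂. Let d, r, x, η be differentiable with d' = S d, r' = S₀ r, x' = A x + B u + E d, where u = K₁x + K₂d + K₃η. Then x̄(t) := x(t) − X₁d(t) − X₂r(t) satisfies x̄'(t) = (A + BK₁)x̄(t) + BK₃(η(t) − r(t)), and C x(t) + D u(t) − F₀ r(t) = (C + DK₁)x̄(t) + DK₃(η(t) − r(t)) for all t. -/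
open Matrix Filter


lemma mulVec_hasDerivAt' {p k : ℕ} (M : Matrix (Fin p) (Fin k) ℝ)
    {f : ℝ → Fin k → ℝ} {f' : Fin k → ℝ} {t : ℝ} (hf : HasDerivAt f f' t) :
    HasDerivAt (fun s => M.mulVec (f s)) (M.mulVec f') t := by
  have := (M.mulVecLin.toContinuousLinearMap.hasFDerivAt (x := f t)).comp_hasDerivAt t hf
  simpa [Function.comp_def] using this

theorem stmt8 {n m l q n₀ : ℕ}
    (A : Matrix (Fin n) (Fin n) ℝ) (B : Matrix (Fin n) (Fin m) ℝ)
    (C : Matrix (Fin l) (Fin n) ℝ) (D : Matrix (Fin l) (Fin m) ℝ)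
    (E : Matrix (Fin n) (Fin q) ℝ) (S : Matrix (Fin q) (Fin q) ℝ)
    (S₀ : Matrix (Fin n₀) (Fin n₀) ℝ) (F₀ : Matrix (Fin l) (Fin n₀) ℝ)
    (X₁ : Matrix (Fin n) (Fin q) ℝ) (U₁ : Matrix (Fin m) (Fin q) ℝ)
    (hreg11 : X₁ * S = A * X₁ + B * U₁ + E)
    (hreg12 : C * X₁ + D * U₁ = 0)
    (X₂ : Matrix (Fin n) (Fin n₀) ℝ) (U₂ : Matrix (Fin m) (Fin n₀) ℝ)
    (hreg21 : X₂ * S₀ = A * X₂ + B * U₂)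
    (hreg22 : C * X₂ + D * U₂ = F₀)
    (K₁ : Matrix (Fin m) (Fin n) ℝ)
    (K₂ : Matrix (Fin m) (Fin q) ℝ) (hK₂ : K₂ = U₁ - K₁ * X₁)
    (K₃ : Matrix (Fin m) (Fin n₀) ℝ) (hK₃ : K₃ = U₂ - K₁ * X₂)
    (d : ℝ → Fin q → ℝ) (r : ℝ → Fin n₀ → ℝ) (x : ℝ → Fin n → ℝ)
    (η : ℝ → Fin n₀ → ℝ) (u : ℝ → Fin m → ℝ)
    (hu : ∀ t, u t = K₁.mulVec (x t) + K₂.mulVec (d t) + K₃.mulVec (η t))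
    (hd : ∀ t, HasDerivAt d (S.mulVec (d t)) t)
    (hr : ∀ t, HasDerivAt r (S₀.mulVec (r t)) t)
    (hη : Differentiable ℝ η)
    (hx : ∀ t, HasDerivAt x (A.mulVec (x t) + B.mulVec (u t) + E.mulVec (d t)) t) :
    (∀ t, HasDerivAt (fun s => x s - X₁.mulVec (d s) - X₂.mulVec (r s))
        ((A + B * K₁).mulVec (x t - X₁.mulVec (d t) - X₂.mulVec (r t))
          + (B * K₃).mulVec (η t - r t)) t)
    ∧ (∀ t, C.mulVec (x t) + D.mulVec (u t) - F₀.mulVec (r t)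
        = (C + D * K₁).mulVec (x t - X₁.mulVec (d t) - X₂.mulVec (r t))
          + (D * K₃).mulVec (η t - r t)) := by
  subst hK₂ hK₃
  have hAX₁ : A * X₁ = X₁ * S - B * U₁ - E := by rw [hreg11]; abel
  have hAX₂ : A * X₂ = X₂ * S₀ - B * U₂ := by rw [hreg21]; abel
  have hCX₁ : C * X₁ = -(D * U₁) := eq_neg_of_add_eq_zero_left hreg12
  have hCX₂ : C * X₂ = F₀ - D * U₂ := by rw [← hreg22]; abel
  constructor
  · intro t
    have h1 : HasDerivAt (fun s => x s - X₁.mulVec (d s) - X₂.mulVec (r s))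
        (A.mulVec (x t) + B.mulVec (u t) + E.mulVec (d t)
          - X₁.mulVec (S.mulVec (d t)) - X₂.mulVec (S₀.mulVec (r t))) t :=
      ((hx t).sub (mulVec_hasDerivAt' X₁ (hd t))).sub (mulVec_hasDerivAt' X₂ (hr t))
    convert h1 using 1
    rw [hu t]
    simp only [mulVec_add, mulVec_sub, add_mulVec, sub_mulVec, mulVec_mulVec,
      Matrix.mul_sub, Matrix.mul_add, Matrix.add_mul, Matrix.sub_mul,
      Matrix.mul_assoc, hAX₁, hAX₂]
    abel
  · intro t
    rw [hu t]
    simp only [mulVec_add, mulVec_sub, add_mulVec, sub_mulVec, neg_mulVec, mulVec_mulVec,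
      Matrix.mul_sub, Matrix.mul_add, Matrix.add_mul, Matrix.sub_mul,
      Matrix.mul_assoc, hCX₁, hCX₂]
    abel
end

section
/- Let A ∈ ℝ^{n×n}, B ∈ ℝ^{n×m}, C ∈ ℝ^{l×n}, D ∈ ℝ^{l×m}, E ∈ ℝ^{n×q}, S ∈ ℝ^{q×q}, S₀ ∈ ℝ^{n₀×n₀}, F₀ ∈ ℝ^{l×n₀}. Suppose X₁, U₁ satisfy X₁S = AX₁ + BU₁ + E and 0 = CX₁ + DU₁, and X₂, U₂ satisfy X₂S₀ = AX₂ + BU₂ and 0 = CX₂ + DU₂ − F₀. Let K₁ be such that A + BK₁ is Hurwitz, K₂ = U₁ − K₁X₁, K₃ = U₂ − K₁X₂, and let L₁ ∈ ℝ^{n×l}, L₂ ∈ ℝ^{q×l} be such that the block matrix A_c = [[A + L₁C, E],[L₂C, S]] is Hurwitz. Let x, d, r, ξ, ζ be differentiable with d' = S d, r' = S₀ r, x' = A x + B u + E d, y = C x + D u, ξ' = A ξ + E ζ + B u − L₁(y − ŷ), ζ' = S ζ − L₂(y − ŷ), ŷ = C ξ + D u, and u = K₁ξ + K₂ζ + K₃η,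 where η : [0,∞) → ℝ^{n₀} satisfies ‖η(t) − r(t)‖ ≤ c·e^{−λt} for some constants c > 0, λ > 0. Then e(t) = y(t) − F₀ r(t) → 0 as t → ∞ for every initial condition. -/
open Matrix Filter

open Polynomial MeasureTheory intervalIntegral


lemma norm_cexp (z : ℂ) : ‖Complex.exp z‖ = Real.exp z.re := by
  rw [Complex.norm_exp]

lemma scalar_decay (μ : ℂ) (hμ : μ.re < 0) (v f : ℝ → ℂ)
    (hv : ∀ t, HasDerivAt v (μ * v t + f t) t)
    (hfi : ∀ b, 0 ≤ b → IntervalIntegrable f volume 0 b)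
    (hf : Tendsto f atTop (nhds 0)) : Tendsto v atTop (nhds 0) := by
  set α : ℝ := -μ.re with hαdef
  have hα : (0:ℝ) < α := by simp only [hαdef]; linarith
  have hexpc : Continuous fun s : ℝ => Complex.exp (-(s:ℂ)*μ) :=
    Complex.continuous_exp.comp ((Complex.continuous_ofReal.neg).mul continuous_const)
  have hw : ∀ t : ℝ, HasDerivAt (fun s : ℝ => Complex.exp (-(s:ℂ)*μ) * v s)
      (Complex.exp (-(t:ℂ)*μ) * f t) t := by
    intro t
    have h1 : HasDerivAt (fun s : ℝ => -(s:ℂ)*μ) (-μ) t := by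
      simpa using ((Complex.ofRealCLM.hasDerivAt (x := t)).neg.mul_const μ)
    have h3 := h1.cexp.mul (hv t)
    refine h3.congr_deriv ?_
    ring
  have key : ∀ a b : ℝ, IntervalIntegrable f volume a b →
      Complex.exp (-(b:ℂ)*μ) * v b
        = Complex.exp (-(a:ℂ)*μ) * v a + ∫ s in a..b, Complex.exp (-(s:ℂ)*μ) * f s := by
    intro a b hab
    have hint : IntervalIntegrable (fun s => Complex.exp (-(s:ℂ)*μ) * f s) volume a b :=
      hab.continuousOn_mul hexpc.continuousOn
    have h := intervalIntegral.integral_eq_sub_of_hasDerivAt (fun t _ => hw t) hint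
    rw [h]; ring
  rw [NormedAddCommGroup.tendsto_nhds_zero]
  intro ε hε
  obtain ⟨T₀, hT₀⟩ := eventually_atTop.mp
    ((NormedAddCommGroup.tendsto_nhds_zero.mp hf (ε*α/4) (by positivity)))
  set T : ℝ := max T₀ 0 with hTdef
  have hT0 : (0:ℝ) ≤ T := le_max_right _ _
  have hfT : ∀ s ≥ T, ‖f s‖ ≤ ε*α/4 := fun s hs => (hT₀ s (le_trans (le_max_left _ _) hs)).le
  have main : ∀ t ≥ T, ‖v t‖ ≤ Real.exp (-α*(t-T)) * ‖v T‖ + ε/4 := by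
    intro t ht
    have hfiTt : IntervalIntegrable f volume T t :=
      (hfi T hT0).symm.trans (hfi t (le_trans hT0 ht))
    have hrep := key T t hfiTt
    have hv_eq : v t = Complex.exp ((t:ℂ)*μ) * (Complex.exp (-(T:ℂ)*μ) * v T
        + ∫ s in T..t, Complex.exp (-(s:ℂ)*μ) * f s) := by
      rw [← hrep, ← mul_assoc, ← Complex.exp_add]
      simp
    rw [hv_eq, norm_mul, norm_cexp]
    have hsplit : ‖Complex.exp (-(T:ℂ)*μ) * v T
        + ∫ s in T..t, Complex.exp (-(s:ℂ)*μ) * f s‖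
        ≤ ‖Complex.exp (-(T:ℂ)*μ)‖ * ‖v T‖ + ∫ s in T..t, Real.exp (α*s) * (ε*α/4) := by
      refine (norm_add_le _ _).trans (add_le_add (by rw [norm_mul]) ?_)
      refine (intervalIntegral.norm_integral_le_integral_norm ht).trans ?_
      refine intervalIntegral.integral_mono_on ht (hfiTt.continuousOn_mul hexpc.continuousOn).norm
        (((Real.continuous_exp.comp (continuous_const.mul continuous_id)).mul
          continuous_const).intervalIntegrable _ _) ?_
      intro s hs
      rw [norm_mul, norm_cexp]
      have hre1 : (-(s:ℂ)*μ).re = α * s := by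
        simp only [hαdef, Complex.neg_re, Complex.neg_im, Complex.mul_re, Complex.ofReal_re, Complex.ofReal_im]
        ring
      rw [hre1]
      exact mul_le_mul_of_nonneg_left (hfT s hs.1) (Real.exp_pos _).le
    have hder : ∀ s : ℝ, HasDerivAt (fun s : ℝ => Real.exp (α*s)/α) (Real.exp (α*s)) s := by
      intro s
      have h1 : HasDerivAt (fun x : ℝ => α * x) α s := by
        simpa using (hasDerivAt_id s).const_mul α
      have h3 := ((Real.hasDerivAt_exp (α*s)).comp s h1).div_const α
      refine h3.congr_deriv ?_
      field_simp
    have hintcomp : (∫ s in T..t, Real.exp (α*s) * (ε*α/4))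
        = (ε*α/4) * ((Real.exp (α*t) - Real.exp (α*T))/α) := by
      have hint := intervalIntegral.integral_eq_sub_of_hasDerivAt (a := T) (b := t)
        (fun s _ => hder s)
        ((Real.continuous_exp.comp (continuous_const.mul continuous_id)).intervalIntegrable _ _)
      rw [intervalIntegral.integral_mul_const, hint]
      ring
    calc Real.exp (((t:ℂ)*μ).re) * ‖Complex.exp (-(T:ℂ)*μ) * v T
          + ∫ s in T..t, Complex.exp (-(s:ℂ)*μ) * f s‖
        ≤ Real.exp (((t:ℂ)*μ).re) * (Real.exp (α*T) * ‖v T‖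
            + (ε*α/4) * ((Real.exp (α*t) - Real.exp (α*T))/α)) := by
          refine mul_le_mul_of_nonneg_left ?_ (Real.exp_pos _).le
          have hexpTre : ‖Complex.exp (-(T:ℂ)*μ)‖ = Real.exp (α*T) := by
            rw [norm_cexp]
            congr 1
            simp only [hαdef, Complex.neg_re, Complex.neg_im, Complex.mul_re, Complex.ofReal_re,
              Complex.ofReal_im]
            ring
          rw [← hintcomp, ← hexpTre]
          exact hsplit
      _ ≤ Real.exp (-α*(t-T)) * ‖v T‖ + ε/4 := by
          have hre : ((t:ℂ)*μ).re = -(α*t) := by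
            simp only [hαdef, Complex.mul_re, Complex.ofReal_re, Complex.ofReal_im]
            ring
          rw [hre, mul_add]
          have e1 : Real.exp (-(α*t)) * (Real.exp (α*T) * ‖v T‖)
              = Real.exp (-α*(t-T)) * ‖v T‖ := by
            rw [← mul_assoc, ← Real.exp_add]
            ring_nf
          have hb : Real.exp (-(α*t)) * (Real.exp (α*t) - Real.exp (α*T)) ≤ 1 := by
            have h1 : Real.exp (-(α*t)) * Real.exp (α*t) = 1 := by
              rw [← Real.exp_add]; simp
            nlinarith [Real.exp_pos (-(α*t)), Real.exp_pos (α*T)]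
          have e2 : Real.exp (-(α*t)) * ((ε*α/4) * ((Real.exp (α*t) - Real.exp (α*T))/α)) ≤ ε/4 :=
            calc Real.exp (-(α*t)) * ((ε*α/4) * ((Real.exp (α*t) - Real.exp (α*T))/α))
                = (ε/4) * (Real.exp (-(α*t)) * (Real.exp (α*t) - Real.exp (α*T))) := by
                  field_simp
              _ ≤ (ε/4) * 1 := mul_le_mul_of_nonneg_left hb (by positivity)
              _ = ε/4 := by ring
          rw [e1]
          exact add_le_add le_rfl e2
  have hdecay : Tendsto (fun t => Real.exp (-α*(t-T)) * ‖v T‖ + ε/4) atTop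
      (nhds (0 * ‖v T‖ + ε/4)) := by
    refine Tendsto.add (Tendsto.mul_const _ ?_) tendsto_const_nhds
    exact Real.tendsto_exp_atBot.comp
      ((tendsto_atTop_add_const_right atTop (-T) tendsto_id).const_mul_atTop_of_neg
        (by linarith))
  rw [zero_mul, zero_add] at hdecay
  have hev : ∀ᶠ t in atTop, Real.exp (-α*(t-T)) * ‖v T‖ + ε/4 < ε/2 :=
    hdecay.eventually_lt_const (by linarith)
  filter_upwards [hev, eventually_ge_atTop T] with t h1 h2
  calc ‖v t‖ ≤ _ := main t h2
    _ < ε/2 := h1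
    _ < ε := by linarith



section helpers

variable {𝕜 : Type*} [NontriviallyNormedField 𝕜] {ι κ : Type*} [Fintype κ]

lemma hasDerivAt_mulVec_apply (M : Matrix ι κ 𝕜) {g : ℝ → κ → 𝕜} {g' : κ → 𝕜} {t : ℝ}
    [NormedAlgebra ℝ 𝕜]
    (hg : ∀ j, HasDerivAt (fun t => g t j) (g' j) t) (i : ι) :
    HasDerivAt (fun t => M.mulVec (g t) i) (M.mulVec g' i) t := by
  simp only [Matrix.mulVec, dotProduct]
  exact HasDerivAt.fun_sum fun j _ => (hg j).const_mul (M i j)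

lemma continuous_mulVec_apply (M : Matrix ι κ 𝕜) {g : ℝ → κ → 𝕜}
    (hg : ∀ j, Continuous fun t => g t j) (i : ι) :
    Continuous fun t => M.mulVec (g t) i := by
  simp only [Matrix.mulVec, dotProduct]
  exact continuous_finset_sum _ fun j _ => continuous_const.mul (hg j)

lemma tendsto_mulVec_apply (M : Matrix ι κ ℂ) {g : ℝ → κ → ℂ}
    (hg : ∀ j, Tendsto (fun t => g t j) atTop (nhds 0)) (i : ι) :
    Tendsto (fun t => M.mulVec (g t) i) atTop (nhds 0) := by
  have h := tendsto_finset_sum (Finset.univ : Finset κ)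
    (f := fun j t => M i j * g t j) (a := fun _ => (0:ℂ))
    (fun j _ => by simpa using (hg j).const_mul (M i j))
  simpa [Matrix.mulVec, dotProduct] using h

lemma intervalIntegrable_mulVec_apply (M : Matrix ι κ ℂ) {g : ℝ → κ → ℂ} {b : ℝ}
    (hg : ∀ j, IntervalIntegrable (fun t => g t j) volume 0 b) (i : ι) :
    IntervalIntegrable (fun t => M.mulVec (g t) i) volume 0 b := by
  have h := IntervalIntegrable.sum (μ := volume) (a := 0) (b := b) (Finset.univ : Finset κ)
    (f := fun j => fun t => M i j * g t j) (fun j _ => (hg j).const_mul (M i j))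
  simpa [Matrix.mulVec, dotProduct, Finset.sum_fn] using h

end helpers

lemma list_decay {ι : Type*} [Fintype ι] [DecidableEq ι] (Mc : Matrix ι ι ℂ) :
    ∀ (L : List ℂ), (∀ μ ∈ L, μ.re < 0) →
    ∀ (v f : ℝ → ι → ℂ),
    (∀ t, HasDerivAt v (Mc.mulVec (v t) + f t) t) →
    (∀ i b, 0 ≤ b → IntervalIntegrable (fun t => f t i) volume 0 b) →
    (∀ i, Tendsto (fun t => f t i) atTop (nhds 0)) →
    (∀ i, Tendsto
      (fun t => ((Polynomial.aeval Mc) (L.map (fun μ => X - Polynomial.C μ)).prod).mulVec (v t) i)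
      atTop (nhds 0)) →
    ∀ i, Tendsto (fun t => v t i) atTop (nhds 0) := by
  intro L
  induction L with
  | nil =>
    intro _ v f hv hfi hf htend i
    simpa using htend i
  | cons μ L' ih =>
    intro hroots v f hv hfi hf htend i
    have hμ : μ.re < 0 := hroots μ List.mem_cons_self
    set N : Matrix ι ι ℂ := (Polynomial.aeval Mc) (L'.map (fun μ => X - Polynomial.C μ)).prod
      with hNdef
    set w : ℝ → ι → ℂ := fun t => N.mulVec (v t) with hwdef
    have hvcomp : ∀ j t, HasDerivAt (fun t => v t j) ((Mc.mulVec (v t) + f t) j) t :=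
      fun j t => hasDerivAt_pi.mp (hv t) j
    have hvcont : ∀ j, Continuous fun t => v t j := fun j =>
      continuous_iff_continuousAt.mpr fun t => (hvcomp j t).continuousAt
    have hwcont : ∀ j, Continuous fun t => w t j := fun j =>
      continuous_mulVec_apply N hvcont j
    have hcomm : N * Mc = Mc * N := by
      have h1 : (Polynomial.aeval Mc) ((L'.map (fun μ => X - Polynomial.C μ)).prod * X)
          = (Polynomial.aeval Mc) (X * (L'.map (fun μ => X - Polynomial.C μ)).prod) := by
        rw [mul_comm]
      simpa [_root_.map_mul] using h1
    have hw : ∀ t j, HasDerivAt (fun t => w t j) ((Mc.mulVec (w t) + N.mulVec (f t)) j) t := by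
      intro t j
      have h := hasDerivAt_mulVec_apply N (g := v) (g' := Mc.mulVec (v t) + f t)
        (fun j' => hvcomp j' t) j
      have heq : N.mulVec (Mc.mulVec (v t) + f t) = Mc.mulVec (w t) + N.mulVec (f t) := by
        rw [Matrix.mulVec_add, hwdef]
        congr 1
        rw [Matrix.mulVec_mulVec, Matrix.mulVec_mulVec, hcomm]
      rw [← heq]
      exact h
    -- (Mc - μ•1) * N annihilates v up to tendsto-zero
    have hfact : ((Polynomial.aeval Mc)
        (((μ :: L').map (fun μ => X - Polynomial.C μ)).prod)) = (Mc - μ • 1) * N := by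
      have hXC : (Polynomial.aeval Mc) (X - Polynomial.C μ) = Mc - μ • 1 := by
        rw [map_sub, Polynomial.aeval_X, Polynomial.aeval_C, Algebra.algebraMap_eq_smul_one]
      rw [List.map_cons, List.prod_cons, _root_.map_mul, hXC, hNdef]
    have hresid : ∀ j, Tendsto (fun t => Mc.mulVec (w t) j - μ * w t j) atTop (nhds 0) := by
      intro j
      have h := htend j
      rw [hfact] at h
      have heq : ∀ t, ((Mc - μ • 1) * N).mulVec (v t) j = Mc.mulVec (w t) j - μ * w t j := by
        intro t
        rw [← Matrix.mulVec_mulVec, Matrix.sub_mulVec]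
        simp [Matrix.smul_mulVec, Matrix.one_mulVec, hwdef, Pi.smul_apply, smul_eq_mul]
      exact h.congr (fun t => (heq t))
    -- each component of w decays
    have hwz : ∀ j, Tendsto (fun t => w t j) atTop (nhds 0) := by
      intro j
      refine scalar_decay μ hμ _ (fun t => (Mc.mulVec (w t) j - μ * w t j) + N.mulVec (f t) j)
        ?_ ?_ ?_
      · intro t
        have h := hw t j
        convert h using 1
        simp only [Pi.add_apply]
        ring
      · intro b hb
        refine IntervalIntegrable.add ?_ (intervalIntegrable_mulVec_apply N
          (fun j' => hfi j' b hb) j)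
        refine Continuous.intervalIntegrable ?_ _ _
        exact (continuous_mulVec_apply Mc hwcont j).sub (continuous_const.mul (hwcont j))
      · have := (hresid j).add (tendsto_mulVec_apply N (fun j' => hf j') j)
        simpa using this
    exact ih (fun μ' hμ' => hroots μ' (List.mem_cons_of_mem μ hμ')) v f hv hfi hf hwz i




lemma root_mem_spectrum {ι : Type*} [Fintype ι] [DecidableEq ι] (Mc : Matrix ι ι ℂ)
    (μ : ℂ) (hroot : Mc.charpoly.IsRoot μ) : μ ∈ spectrum ℂ Mc := by
  rw [spectrum.mem_iff]
  rw [Matrix.isUnit_iff_isUnit_det]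
  have hdet : ((algebraMap ℂ (Matrix ι ι ℂ)) μ - Mc).det = Mc.charpoly.eval μ := by
    rw [Matrix.charpoly, ← Polynomial.coe_evalRingHom, RingHom.map_det]
    congr 1
    ext i j
    simp only [RingHom.mapMatrix_apply, Matrix.map_apply, Matrix.charmatrix_apply,
      Matrix.sub_apply, coe_evalRingHom, Polynomial.eval_sub, Polynomial.eval_C]
    by_cases h : i = j <;>
      simp [h, Matrix.algebraMap_matrix_apply, Matrix.diagonal_apply, Polynomial.eval_X]
  rw [hdet, hroot.eq_zero]
  exact not_isUnit_zero
lemma hurwitz_master {ι : Type*} [Fintype ι] [DecidableEq ι] (M : Matrix ι ι ℝ)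
    (hM : IsHurwitz M) (v f : ℝ → ι → ℝ)
    (hv : ∀ t, HasDerivAt v (M.mulVec (v t) + f t) t)
    (hfi : ∀ i b, (0:ℝ) ≤ b → IntervalIntegrable (fun t => f t i) volume 0 b)
    (hf : Tendsto f atTop (nhds 0)) : Tendsto v atTop (nhds 0) := by
  classical
  set Mc : Matrix ι ι ℂ := M.map Complex.ofReal with hMcdef
  set vc : ℝ → ι → ℂ := fun t i => (v t i : ℂ) with hvcdef
  set fc : ℝ → ι → ℂ := fun t i => (f t i : ℂ) with hfcdef
  -- complexified dynamics
  have hvc : ∀ t, HasDerivAt vc (Mc.mulVec (vc t) + fc t) t := by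
    intro t
    rw [hasDerivAt_pi]
    intro i
    have h := (hasDerivAt_pi.mp (hv t) i).ofReal_comp
    have heq : ((Mc.mulVec (vc t) + fc t) i) = (((M.mulVec (v t) + f t) i : ℝ) : ℂ) := by
      simp only [Pi.add_apply, Matrix.mulVec, dotProduct, hMcdef, hvcdef, hfcdef,
        Matrix.map_apply, Complex.ofReal_add, Complex.ofReal_sum, Complex.ofReal_mul]
    rw [heq]
    exact h
  -- the roots of the charpoly
  set L : List ℂ := Mc.charpoly.roots.toList with hLdef
  have hroots : ∀ μ ∈ L, μ.re < 0 := by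
    intro μ hμ
    have : μ ∈ Mc.charpoly.roots := by
      rw [← Multiset.mem_toList]; exact hμ
    have hroot : Mc.charpoly.IsRoot μ :=
      (Polynomial.mem_roots (p := Mc.charpoly) (Matrix.charpoly_monic Mc).ne_zero).mp this
    exact hM μ (root_mem_spectrum Mc μ hroot)
  have hprod : (L.map (fun μ => X - Polynomial.C μ)).prod = Mc.charpoly := by
    have hsplit : Mc.charpoly = (Multiset.map (fun a => X - Polynomial.C a)
        Mc.charpoly.roots).prod :=
      (IsAlgClosed.splits _).eq_prod_roots_of_monic (Matrix.charpoly_monic Mc)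
    rw [hsplit, hLdef]
    rw [← Multiset.coe_toList Mc.charpoly.roots, Multiset.map_coe, Multiset.prod_coe]
    simp
  have hzero : (Polynomial.aeval Mc) (L.map (fun μ => X - Polynomial.C μ)).prod = 0 := by
    rw [hprod]
    exact Matrix.aeval_self_charpoly Mc
  have hfc_i : ∀ i, Tendsto (fun t => fc t i) atTop (nhds 0) := by
    intro i
    have h := (tendsto_pi_nhds.mp hf) i
    have := (Complex.continuous_ofReal.tendsto 0).comp h
    simpa [hfcdef, Function.comp_def] using this
  have hfci : ∀ i b, (0:ℝ) ≤ b → IntervalIntegrable (fun t => fc t i) volume 0 b := by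
    intro i b hb
    have h := hfi i b hb
    rw [intervalIntegrable_iff] at h ⊢
    exact Complex.ofRealCLM.integrable_comp h
  have hvz := list_decay Mc L hroots vc fc hvc hfci hfc_i (by
    intro i
    rw [hzero]
    simpa using tendsto_const_nhds)
  rw [tendsto_pi_nhds]
  intro i
  have h := (Complex.continuous_re.tendsto 0).comp (hvz i)
  simpa [hvcdef, Function.comp_def] using h





/-- `mulVec` as a continuous linear map. -/
noncomputable def mulVecCLM {ι κ : Type*} [Fintype κ] [Fintype ι] (M : Matrix ι κ ℝ) :
    (κ → ℝ) →L[ℝ] (ι → ℝ) :=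
  LinearMap.toContinuousLinearMap M.mulVecLin

@[simp] lemma mulVecCLM_apply {ι κ : Type*} [Fintype κ] [Fintype ι] (M : Matrix ι κ ℝ)
    (v : κ → ℝ) : mulVecCLM M v = M.mulVec v := rfl

theorem stmt10 {n m l q n₀ : ℕ}
    (A : Matrix (Fin n) (Fin n) ℝ) (B : Matrix (Fin n) (Fin m) ℝ)
    (C : Matrix (Fin l) (Fin n) ℝ) (D : Matrix (Fin l) (Fin m) ℝ)
    (E : Matrix (Fin n) (Fin q) ℝ) (S : Matrix (Fin q) (Fin q) ℝ)
    (S₀ : Matrix (Fin n₀) (Fin n₀) ℝ) (F₀ : Matrix (Fin l) (Fin n₀) ℝ)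
    (X₁ : Matrix (Fin n) (Fin q) ℝ) (U₁ : Matrix (Fin m) (Fin q) ℝ)
    (hreg11 : X₁ * S = A * X₁ + B * U₁ + E)
    (hreg12 : C * X₁ + D * U₁ = 0)
    (X₂ : Matrix (Fin n) (Fin n₀) ℝ) (U₂ : Matrix (Fin m) (Fin n₀) ℝ)
    (hreg21 : X₂ * S₀ = A * X₂ + B * U₂)
    (hreg22 : C * X₂ + D * U₂ = F₀)
    (K₁ : Matrix (Fin m) (Fin n) ℝ) (hK₁ : IsHurwitz (A + B * K₁))
    (K₂ : Matrix (Fin m) (Fin q) ℝ) (hK₂ : K₂ = U₁ - K₁ * X₁)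
    (K₃ : Matrix (Fin m) (Fin n₀) ℝ) (hK₃ : K₃ = U₂ - K₁ * X₂)
    (L₁ : Matrix (Fin n) (Fin l) ℝ) (L₂ : Matrix (Fin q) (Fin l) ℝ)
    (hAc : IsHurwitz (Matrix.fromBlocks (A + L₁ * C) E (L₂ * C) S))
    (x : ℝ → Fin n → ℝ) (d : ℝ → Fin q → ℝ) (r : ℝ → Fin n₀ → ℝ)
    (ξ : ℝ → Fin n → ℝ) (ζ : ℝ → Fin q → ℝ)
    (u : ℝ → Fin m → ℝ) (y yhat : ℝ → Fin l → ℝ)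
    (η : ℝ → Fin n₀ → ℝ) (c lam : ℝ) (hc : 0 < c) (hlam : 0 < lam)
    (hη : ∀ t ≥ (0:ℝ), ‖η t - r t‖ ≤ c * Real.exp (-lam * t))
    (hd : ∀ t, HasDerivAt d (S.mulVec (d t)) t)
    (hr : ∀ t, HasDerivAt r (S₀.mulVec (r t)) t)
    (hx : ∀ t, HasDerivAt x (A.mulVec (x t) + B.mulVec (u t) + E.mulVec (d t)) t)
    (hy : ∀ t, y t = C.mulVec (x t) + D.mulVec (u t))
    (hyhat : ∀ t, yhat t = C.mulVec (ξ t) + D.mulVec (u t))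
    (hξ : ∀ t, HasDerivAt ξ
      (A.mulVec (ξ t) + E.mulVec (ζ t) + B.mulVec (u t) - L₁.mulVec (y t - yhat t)) t)
    (hζ : ∀ t, HasDerivAt ζ (S.mulVec (ζ t) - L₂.mulVec (y t - yhat t)) t)
    (hu : ∀ t, u t = K₁.mulVec (ξ t) + K₂.mulVec (ζ t) + K₃.mulVec (η t)) :
    Tendsto (fun t => y t - F₀.mulVec (r t)) atTop (nhds 0) := by
  classical
  -- observer errors
  have hyd : ∀ t, y t - yhat t = C.mulVec (x t) - C.mulVec (ξ t) := by
    intro t; rw [hy, hyhat]; abel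
  have hex : ∀ t, HasDerivAt (fun t => ξ t - x t)
      ((A + L₁ * C).mulVec (ξ t - x t) + E.mulVec (ζ t - d t)) t := by
    intro t
    have h := (hξ t).sub (hx t)
    refine h.congr_deriv ?_
    rw [hyd t]
    simp only [Matrix.add_mulVec, Matrix.mulVec_sub, Matrix.mulVec_add,
      Matrix.sub_mulVec, ← Matrix.mulVec_mulVec]
    abel
  have heζ : ∀ t, HasDerivAt (fun t => ζ t - d t)
      ((L₂ * C).mulVec (ξ t - x t) + S.mulVec (ζ t - d t)) t := by
    intro t
    have h := (hζ t).sub (hd t)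
    refine h.congr_deriv ?_
    rw [hyd t]
    simp only [Matrix.add_mulVec, Matrix.mulVec_sub, Matrix.mulVec_add,
      Matrix.sub_mulVec, ← Matrix.mulVec_mulVec]
    abel
  -- combined observer error dynamics
  set Ac : Matrix (Fin n ⊕ Fin q) (Fin n ⊕ Fin q) ℝ :=
    Matrix.fromBlocks (A + L₁ * C) E (L₂ * C) S with hAcdef
  set w : ℝ → (Fin n ⊕ Fin q) → ℝ := fun t => Sum.elim (ξ t - x t) (ζ t - d t) with hwdef
  have hwderiv : ∀ t, HasDerivAt w (Ac.mulVec (w t) + (fun _ => (0:ℝ)) ) t := by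
    intro t
    rw [hasDerivAt_pi]
    intro i
    have hblock : Ac.mulVec (w t) + (fun _ => (0:ℝ)) = Sum.elim
        ((A + L₁ * C).mulVec (ξ t - x t) + E.mulVec (ζ t - d t))
        ((L₂ * C).mulVec (ξ t - x t) + S.mulVec (ζ t - d t)) := by
      rw [hAcdef, Matrix.fromBlocks_mulVec]
      funext j
      cases j <;> simp [hwdef]
    rw [hblock]
    cases i with
    | inl i => exact hasDerivAt_pi.mp (hex t) i
    | inr i => exact hasDerivAt_pi.mp (heζ t) i
  have hwz : Tendsto w atTop (nhds 0) := by
    refine hurwitz_master Ac hAc w (fun _ _ => 0) hwderiv ?_ ?_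
    · intro i b _; exact intervalIntegrable_const
    · exact tendsto_const_nhds
  have hex0 : Tendsto (fun t => ξ t - x t) atTop (nhds 0) := by
    rw [tendsto_pi_nhds]
    intro i
    have := (tendsto_pi_nhds.mp hwz) (Sum.inl i)
    simpa [hwdef] using this
  have heζ0 : Tendsto (fun t => ζ t - d t) atTop (nhds 0) := by
    rw [tendsto_pi_nhds]
    intro i
    have := (tendsto_pi_nhds.mp hwz) (Sum.inr i)
    simpa [hwdef] using this
  -- η error
  have hη0 : Tendsto (fun t => η t - r t) atTop (nhds 0) := by
    refine squeeze_zero_norm' (a := fun t => c * Real.exp (-lam * t)) ?_ ?_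
    · filter_upwards [eventually_ge_atTop (0:ℝ)] with t ht
      exact hη t ht
    · have h1 : Tendsto (fun t : ℝ => -lam * t) atTop atBot :=
        tendsto_id.const_mul_atTop_of_neg (by linarith)
      have := (Real.tendsto_exp_atBot.comp h1).const_mul c
      simpa using this
  -- tracking error dynamics
  have hzderiv : ∀ t, HasDerivAt (fun t => x t - X₁.mulVec (d t) - X₂.mulVec (r t))
      ((A + B * K₁).mulVec (x t - X₁.mulVec (d t) - X₂.mulVec (r t))
        + B.mulVec (K₁.mulVec (ξ t - x t) + K₂.mulVec (ζ t - d t)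
            + K₃.mulVec (η t - r t))) t := by
    intro t
    have hX₁d : HasDerivAt (fun t => X₁.mulVec (d t)) (X₁.mulVec (S.mulVec (d t))) t := by
      rw [hasDerivAt_pi]
      intro i
      exact hasDerivAt_mulVec_apply X₁ (fun j => hasDerivAt_pi.mp (hd t) j) i
    have hX₂r : HasDerivAt (fun t => X₂.mulVec (r t)) (X₂.mulVec (S₀.mulVec (r t))) t := by
      rw [hasDerivAt_pi]
      intro i
      exact hasDerivAt_mulVec_apply X₂ (fun j => hasDerivAt_pi.mp (hr t) j) i
    have h := ((hx t).sub hX₁d).sub hX₂r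
    refine h.congr_deriv ?_
    rw [hu t, hK₂, hK₃, Matrix.mulVec_mulVec, Matrix.mulVec_mulVec, hreg11, hreg21]
    simp only [Matrix.add_mulVec, Matrix.sub_mulVec, Matrix.mulVec_add, Matrix.mulVec_sub,
      ← Matrix.mulVec_mulVec]
    abel
  -- abbreviations
  set z : ℝ → Fin n → ℝ := fun t => x t - X₁.mulVec (d t) - X₂.mulVec (r t) with hzdef
  set G : ℝ → Fin m → ℝ := fun t => K₁.mulVec (ξ t - x t) + K₂.mulVec (ζ t - d t)
    + K₃.mulVec (η t - r t) with hGdef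
  set F : ℝ → Fin n → ℝ := fun t => B.mulVec (G t) with hFdef
  have hzderiv' : ∀ t, HasDerivAt z ((A + B * K₁).mulVec (z t) + F t) t := hzderiv
  -- limit of the input G and F
  have hGsum : Tendsto G atTop (nhds 0) := by
    have h1 := ((mulVecCLM K₁).continuous.tendsto 0).comp hex0
    have h2 := ((mulVecCLM K₂).continuous.tendsto 0).comp heζ0
    have h3 := ((mulVecCLM K₃).continuous.tendsto 0).comp hη0
    simp only [Function.comp_def, mulVecCLM_apply, map_zero] at h1 h2 h3
    have := (h1.add h2).add h3
    simpa [hGdef] using this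
  have hF0 : Tendsto F atTop (nhds 0) := by
    have := ((mulVecCLM B).continuous.tendsto 0).comp hGsum
    simp only [Function.comp_def, mulVecCLM_apply, map_zero] at this
    exact this
  -- continuity facts
  have hxcont : Continuous x := continuous_iff_continuousAt.2 fun t => (hx t).continuousAt
  have hξcont : Continuous ξ := continuous_iff_continuousAt.2 fun t => (hξ t).continuousAt
  have hζcont : Continuous ζ := continuous_iff_continuousAt.2 fun t => (hζ t).continuousAt
  have hdcont : Continuous d := continuous_iff_continuousAt.2 fun t => (hd t).continuousAt
  have hrcont : Continuous r := continuous_iff_continuousAt.2 fun t => (hr t).continuousAt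
  have hzcont : Continuous z := continuous_iff_continuousAt.2 fun t => (hzderiv' t).continuousAt
  -- measurability of F
  have hFmeas : Measurable F := by
    have h1 : Measurable (deriv z) := measurable_deriv z
    have h2 : Continuous fun t => (A + B * K₁).mulVec (z t) :=
      (mulVecCLM (A + B * K₁)).continuous.comp hzcont
    have hFeq : F = fun t => deriv z t - (A + B * K₁).mulVec (z t) := by
      funext t
      rw [(hzderiv' t).deriv]
      abel
    rw [hFeq]
    exact h1.sub h2.measurable
  -- integrability of F on [0, b]
  have hFi : ∀ i b, (0:ℝ) ≤ b → IntervalIntegrable (fun t => F t i) volume 0 b := by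
    intro i b hb
    have hHcont : Continuous fun t => K₁.mulVec (ξ t - x t) + K₂.mulVec (ζ t - d t) :=
      ((mulVecCLM K₁).continuous.comp (hξcont.sub hxcont)).add
        ((mulVecCLM K₂).continuous.comp (hζcont.sub hdcont))
    obtain ⟨C₁, hC₁⟩ := (isCompact_Icc (a := (0:ℝ)) (b := b)).exists_bound_of_continuousOn
      hHcont.continuousOn
    have hbound : ∀ t ∈ Set.Icc (0:ℝ) b,
        ‖F t‖ ≤ ‖mulVecCLM B‖ * (C₁ + ‖mulVecCLM K₃‖ * c) := by
      intro t ht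
      have hGt : ‖G t‖ ≤ C₁ + ‖mulVecCLM K₃‖ * c := by
        have hsplit : G t = (K₁.mulVec (ξ t - x t) + K₂.mulVec (ζ t - d t))
            + K₃.mulVec (η t - r t) := by
          rw [hGdef]
        rw [hsplit]
        refine (norm_add_le _ _).trans (add_le_add (hC₁ t ht) ?_)
        have h3 : ‖K₃.mulVec (η t - r t)‖ ≤ ‖mulVecCLM K₃‖ * ‖η t - r t‖ :=
          (mulVecCLM K₃).le_opNorm _
        refine h3.trans ?_
        refine mul_le_mul_of_nonneg_left ?_ (norm_nonneg _)
        refine (hη t ht.1).trans ?_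
        have : Real.exp (-lam * t) ≤ 1 := by
          rw [Real.exp_le_one_iff]
          nlinarith [ht.1]
        nlinarith
      have h1 : ‖F t‖ ≤ ‖mulVecCLM B‖ * ‖G t‖ := (mulVecCLM B).le_opNorm _
      refine h1.trans (mul_le_mul_of_nonneg_left hGt (norm_nonneg _))
    rw [intervalIntegrable_iff]
    have hmeas_i : Measurable fun t => F t i := (measurable_pi_apply i).comp hFmeas
    refine Integrable.mono' (g := fun _ => ‖mulVecCLM B‖ * (C₁ + ‖mulVecCLM K₃‖ * c))
      (integrableOn_const ?_) hmeas_i.aestronglyMeasurable ?_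
    · rw [Set.uIoc_of_le hb]
      exact measure_Ioc_lt_top.ne
    · refine (ae_restrict_iff' measurableSet_uIoc).2 (Filter.Eventually.of_forall ?_)
      intro t ht
      have ht' : t ∈ Set.Icc (0:ℝ) b := by
        rw [Set.uIoc_of_le hb] at ht
        exact ⟨ht.1.le, ht.2⟩
      calc ‖F t i‖ ≤ ‖F t‖ := norm_le_pi_norm (F t) i
        _ ≤ _ := hbound t ht'
  -- tracking error tends to zero
  have hz0 : Tendsto z atTop (nhds 0) := hurwitz_master (A + B * K₁) hK₁ z F hzderiv' hFi hF0
  -- final output identity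
  have hkey : ∀ t, y t - F₀.mulVec (r t) = (C + D * K₁).mulVec (z t) + D.mulVec (G t) := by
    intro t
    have hCX₁ : C * X₁ = -(D * U₁) := eq_neg_of_add_eq_zero_left hreg12
    have hcd : C.mulVec (X₁.mulVec (d t)) = -(D.mulVec (U₁.mulVec (d t))) := by
      rw [Matrix.mulVec_mulVec, Matrix.mulVec_mulVec, hCX₁, Matrix.neg_mulVec]
    rw [hy t, hu t, ← hreg22]
    simp only [hGdef, hzdef, hK₂, hK₃]
    simp only [Matrix.add_mulVec, Matrix.sub_mulVec, Matrix.mulVec_add, Matrix.mulVec_sub,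
      ← Matrix.mulVec_mulVec]
    rw [hcd]
    abel
  have hfinal : Tendsto (fun t => (C + D * K₁).mulVec (z t) + D.mulVec (G t)) atTop (nhds 0) := by
    have h1 := ((mulVecCLM (C + D * K₁)).continuous.tendsto 0).comp hz0
    have h2 := ((mulVecCLM D).continuous.tendsto 0).comp hGsum
    simp only [Function.comp_def, mulVecCLM_apply, map_zero] at h1 h2
    have h3 := h1.add h2
    rw [add_zero] at h3
    exact h3
  exact hfinal.congr (fun t => (hkey t).symm)
end

section
/- Let A ∈ ℝ^{n×n}, B ∈ ℝ^{n×m}, E ∈ ℝ^{n×q}, S ∈ ℝ^{q×q}, L ∈ ℝ^{q×n}. Let x, d, ζ be differentiable functions and u any function such that x' = A x + B u + E d, d' = S d, and ζ' = (S + LE)ζ + (LA − SL − LEL)x + LBu. Then the reduced-order estimation error d̂ := ζ − Lx − d satisfies d̂'(t) = (S + LE) d̂(t) for all t. -/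
open Matrix

theorem stmt12 {n m q : ℕ}
    (A : Matrix (Fin n) (Fin n) ℝ) (B : Matrix (Fin n) (Fin m) ℝ)
    (E : Matrix (Fin n) (Fin q) ℝ) (S : Matrix (Fin q) (Fin q) ℝ)
    (L : Matrix (Fin q) (Fin n) ℝ)
    (x : ℝ → Fin n → ℝ) (d : ℝ → Fin q → ℝ) (ζ : ℝ → Fin q → ℝ)
    (u : ℝ → Fin m → ℝ)
    (hx : ∀ t, HasDerivAt x (A.mulVec (x t) + B.mulVec (u t) + E.mulVec (d t)) t)
    (hd : ∀ t, HasDerivAt d (S.mulVec (d t)) t)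
    (hζ : ∀ t, HasDerivAt ζ
      ((S + L * E).mulVec (ζ t) + (L * A - S * L - L * E * L).mulVec (x t)
        + (L * B).mulVec (u t)) t) :
    ∀ t, HasDerivAt (fun s => ζ s - L.mulVec (x s) - d s)
      ((S + L * E).mulVec (ζ t - L.mulVec (x t) - d t)) t := by
  intro t
  have hLx : HasDerivAt (fun s => L.mulVec (x s))
      (L.mulVec (A.mulVec (x t) + B.mulVec (u t) + E.mulVec (d t))) t :=
    (((Matrix.mulVecLin L).toContinuousLinearMap.hasFDerivAt.comp_hasDerivAt t (hx t)))
  have h := ((hζ t).sub hLx).sub (hd t)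
  refine h.congr_deriv ?_
  simp only [Matrix.mulVec_add, Matrix.mulVec_sub, Matrix.add_mulVec,
    Matrix.sub_mulVec, Matrix.mulVec_mulVec, Matrix.add_mul, Matrix.sub_mul, Matrix.mul_assoc]
  abel
end

section
/- Let A ∈ ℝ^{n×n}, B ∈ ℝ^{n×m}, C ∈ ℝ^{l×n}, D ∈ ℝ^{l×m}, E ∈ ℝ^{n×q}, S ∈ ℝ^{q×q}, S₀ ∈ ℝ^{n₀×n₀}, F₀ ∈ ℝ^{l×n₀}. Suppose X₁, U₁ satisfy X₁S = AX₁ + BU₁ + E and 0 = CX₁ + DU₁, and X₂, U₂ satisfy X₂S₀ = AX₂ + BU₂ and 0 = CX₂ + DU₂ − F₀. Let K₁ be such that A + BK₁ is Hurwitz, K₂ = U₁ − K₁X₁, K₃ = U₂ − K₁X₂, and let L ∈ ℝ^{q×n} be such that S + LE is Hurwitz. Let x, d, r, ζ be differentiable with d' = S d, r' = S₀ r, x' = A x + B u + E d, ζ' = (S + LE)ζ + (LA − SL − LEL)x + LBu, and u = K₁x + K₂(ζ − Lx) + K₃η, where η : [0,∞) → ℝ^{n₀} satisfies ‖η(t)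 − r(t)‖ ≤ c·e^{−λt} for some constants c > 0, λ > 0. Then e(t) = C x(t) + D u(t) − F₀ r(t) → 0 as t → ∞ for every initial condition. -/
set_option maxHeartbeats 1000000

open Matrix Filter

open NormedSpace MeasureTheory intervalIntegral

set_option linter.unusedSectionVars false

section HurwitzAux

attribute [local instance] Matrix.linftyOpNormedAddCommGroup Matrix.linftyOpNormedRing
  Matrix.linftyOpNormedAlgebra

variable {ι : Type*} [Fintype ι] [DecidableEq ι]


noncomputable def mvCLM {κ : Type*} [Fintype κ] {R : Type*} [NontriviallyNormedField R]
    [CompleteSpace R] (A : Matrix κ ι R) : (ι → R) →L[R] (κ → R) :=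
  LinearMap.toContinuousLinearMap (Matrix.mulVecLin A)

@[simp] lemma mvCLM_apply {κ : Type*} [Fintype κ] {R : Type*} [NontriviallyNormedField R]
    [CompleteSpace R] (A : Matrix κ ι R) (v : ι → R) : mvCLM A v = A.mulVec v := by
  simp [mvCLM]

noncomputable def vmCLM {R : Type*} [NontriviallyNormedField R] [CompleteSpace R] (v : ι → R) :
    Matrix ι ι R →L[R] (ι → R) :=
  LinearMap.toContinuousLinearMap
    { toFun := fun A : Matrix ι ι R => A.mulVec v
      map_add' := fun A B => Matrix.add_mulVec A B v
      map_smul' := fun c A => Matrix.smul_mulVec c A v }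

@[simp] lemma vmCLM_apply {R : Type*} [NontriviallyNormedField R] [CompleteSpace R] (v : ι → R)
    (A : Matrix ι ι R) : vmCLM v A = A.mulVec v := by
  simp [vmCLM]

lemma hasDerivAt_mulVec {κ : Type*} [Fintype κ] (A : Matrix κ ι ℝ) {g : ℝ → ι → ℝ}
    {g' : ι → ℝ} {t : ℝ} (hg : HasDerivAt g g' t) :
    HasDerivAt (fun s => A.mulVec (g s)) (A.mulVec g') t := by
  have := (mvCLM A).hasFDerivAt.comp_hasDerivAt t hg
  simpa [Function.comp_def] using this

noncomputable def matCLM : Matrix ι ι ℝ →L[ℝ] ((ι → ℝ) →L[ℝ] (ι → ℝ)) :=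
  LinearMap.toContinuousLinearMap
    { toFun := fun A => mvCLM A
      map_add' := fun A B => by ext w; simp [Matrix.add_mulVec]
      map_smul' := fun c A => by ext w; simp [Matrix.smul_mulVec]
      : Matrix ι ι ℝ →ₗ[ℝ] ((ι → ℝ) →L[ℝ] (ι → ℝ)) }

@[simp] lemma matCLM_apply (A : Matrix ι ι ℝ) (w : ι → ℝ) : matCLM A w = A.mulVec w := by
  simp [matCLM]

lemma norm_coe_complex (w : ι → ℝ) : ‖(Complex.ofReal ∘ w : ι → ℂ)‖ = ‖w‖ := by
  simp [Pi.norm_def, Function.comp, Complex.nnnorm_real]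

lemma mapMatrix_continuous : Continuous
    (fun A : Matrix ι ι ℝ => (Complex.ofRealHom.mapMatrix : Matrix ι ι ℝ →+* Matrix ι ι ℂ) A) := by
  let L : Matrix ι ι ℝ →ₗ[ℝ] Matrix ι ι ℂ :=
    { toFun := fun A => A.map Complex.ofReal
      map_add' := fun A B => by ext i j; simp [Matrix.map_apply]
      map_smul' := fun r A => by ext i j; simp [Matrix.map_apply] }
  exact L.continuous_of_finiteDimensional

lemma exp_map_complex (M : Matrix ι ι ℝ) (t : ℝ) :
    (exp (t • M)).map Complex.ofReal = exp ((t:ℂ) • M.map Complex.ofReal) := by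
  have h1 : (exp (t • M)).map Complex.ofReal
      = (Complex.ofRealHom.mapMatrix : Matrix ι ι ℝ →+* Matrix ι ι ℂ) (exp (t • M)) := rfl
  rw [h1]
  erw [map_exp (Complex.ofRealHom.mapMatrix : Matrix ι ι ℝ →+* Matrix ι ι ℂ)
    mapMatrix_continuous]
  congr 1
  ext i j
  simp [Matrix.map_apply]

lemma genEig_decay (Mc : Matrix ι ι ℂ) (μ : ℂ) (hμre : μ.re < 0) (K : ℕ) (v : ι → ℂ)
    (hv : ((Mc - μ • 1) ^ K).mulVec v = 0) :
    ∃ Cv : ℝ, 0 ≤ Cv ∧ ∃ α : ℝ, 0 < α ∧ ∀ t : ℝ, 0 ≤ t →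
      ‖(exp ((t:ℂ) • Mc)).mulVec v‖ ≤ Cv * Real.exp (-α * t) := by
  set N : Matrix ι ι ℂ := Mc - μ • 1 with hN
  set δ : ℝ := -μ.re / 2 with hδ
  have hδpos : 0 < δ := by rw [hδ]; linarith
  refine ⟨∑ j ∈ Finset.range K, ‖(N ^ j).mulVec v‖ / δ ^ j, by positivity, δ, hδpos, ?_⟩
  intro t ht
  -- split the exponential
  have hcomm : Commute (((t:ℂ) * μ) • (1 : Matrix ι ι ℂ)) ((t:ℂ) • N) :=
    (Commute.one_left ((t:ℂ) • N)).smul_left ((t:ℂ) * μ)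
  have h1 : (t:ℂ) • Mc = ((t:ℂ) * μ) • (1 : Matrix ι ι ℂ) + (t:ℂ) • N := by
    rw [hN]; module
  have hexp1 : exp (((t:ℂ) * μ) • (1 : Matrix ι ι ℂ))
      = Complex.exp ((t:ℂ) * μ) • (1 : Matrix ι ι ℂ) := by
    rw [Algebra.smul_def ((t:ℂ) * μ) (1 : Matrix ι ι ℂ), mul_one]
    erw [← algebraMap_exp_comm]
    rw [Algebra.algebraMap_eq_smul_one, Complex.exp_eq_exp_ℂ]
  have hsplit : exp ((t:ℂ) • Mc) = Complex.exp ((t:ℂ) * μ) • exp ((t:ℂ) • N) := by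
    rw [h1, Matrix.exp_add_of_commute _ _ hcomm, hexp1, smul_mul_assoc, one_mul]
  -- power series truncation
  have hNj : ∀ j, j ∉ Finset.range K →
      ((j.factorial : ℂ))⁻¹ • (((t:ℂ) • N) ^ j).mulVec v = 0 := by
    intro j hj
    rw [Finset.mem_range, not_lt] at hj
    have hjj : N ^ j = N ^ (j - K) * N ^ K := by rw [← pow_add]; congr 1; omega
    rw [smul_pow, Matrix.smul_mulVec, hjj, ← Matrix.mulVec_mulVec, hv,
      Matrix.mulVec_zero, smul_zero, smul_zero]
  have hser : (exp ((t:ℂ) • N)).mulVec v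
      = ∑ j ∈ Finset.range K, ((j.factorial : ℂ))⁻¹ • (((t:ℂ) • N) ^ j).mulVec v := by
    have h2 : (exp ((t:ℂ) • N)).mulVec v
        = vmCLM v (∑' j : ℕ, ((j.factorial : ℂ))⁻¹ • ((t:ℂ) • N) ^ j) := by
      rw [exp_eq_tsum ℂ]; simp
    rw [h2, (vmCLM v).map_tsum (expSeries_summable' ((t:ℂ) • N))]
    rw [tsum_eq_sum (f := fun j => vmCLM v (((j.factorial : ℂ))⁻¹ • ((t:ℂ) • N) ^ j))
      (s := Finset.range K) (fun j hj => by simpa using hNj j hj)]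
    simp
  have hterm : ∀ j : ℕ, (δ*t)^j ≤ (j.factorial : ℝ) * Real.exp (δ*t) := by
    intro j
    have h0 : (0:ℝ) ≤ δ*t := by positivity
    have h1 := Real.sum_le_exp_of_nonneg h0 (j+1)
    have h2 : (δ*t)^j / (j.factorial : ℝ) ≤ Real.exp (δ*t) :=
      le_trans (Finset.single_le_sum (f := fun i => (δ*t)^i / (i.factorial : ℝ))
        (fun i _ => by positivity) (Finset.self_mem_range_succ j)) h1
    have hfac : (0:ℝ) < (j.factorial : ℝ) := by positivity
    calc (δ*t)^j = ((δ*t)^j / (j.factorial : ℝ)) * (j.factorial : ℝ) := by field_simp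
    _ ≤ Real.exp (δ*t) * (j.factorial : ℝ) := by gcongr
    _ = (j.factorial : ℝ) * Real.exp (δ*t) := mul_comm _ _
  have hμδ : μ.re = -(2*δ) := by rw [hδ]; ring
  calc ‖(exp ((t:ℂ) • Mc)).mulVec v‖
      = Real.exp (t * μ.re) * ‖(exp ((t:ℂ) • N)).mulVec v‖ := by
        rw [hsplit, Matrix.smul_mulVec, norm_smul, Complex.norm_exp]
        norm_num
    _ ≤ Real.exp (t * μ.re) * ∑ j ∈ Finset.range K,
          (j.factorial : ℝ)⁻¹ * (t^j * ‖(N^j).mulVec v‖) := by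
        apply mul_le_mul_of_nonneg_left _ (Real.exp_nonneg _)
        rw [hser]
        refine (norm_sum_le _ _).trans ?_
        apply Finset.sum_le_sum
        intro j hj
        rw [smul_pow, Matrix.smul_mulVec, smul_smul, norm_smul]
        simp [abs_of_nonneg ht, mul_assoc]
    _ ≤ Real.exp (t * μ.re) * ∑ j ∈ Finset.range K,
          (Real.exp (δ*t) * (‖(N^j).mulVec v‖ / δ^j)) := by
        apply mul_le_mul_of_nonneg_left _ (Real.exp_nonneg _)
        apply Finset.sum_le_sum
        intro j hj
        have h3 : t^j ≤ (j.factorial : ℝ) * Real.exp (δ*t) / δ^j := by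
          rw [le_div_iff₀ (by positivity)]
          calc t^j * δ^j = (δ*t)^j := by rw [mul_pow]; ring
          _ ≤ (j.factorial : ℝ) * Real.exp (δ*t) := hterm j
        have hfac : (0:ℝ) < (j.factorial : ℝ) := by positivity
        calc (j.factorial : ℝ)⁻¹ * (t^j * ‖(N^j).mulVec v‖)
            ≤ (j.factorial : ℝ)⁻¹ * (((j.factorial : ℝ) * Real.exp (δ*t) / δ^j) * ‖(N^j).mulVec v‖) := by
              gcongr
          _ = Real.exp (δ*t) * (‖(N^j).mulVec v‖ / δ^j) := by field_simp
    _ = (∑ j ∈ Finset.range K, ‖(N^j).mulVec v‖ / δ^j) * Real.exp (-δ * t) := by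
        rw [← Finset.mul_sum, ← mul_assoc, ← Real.exp_add]
        rw [mul_comm (Real.exp _)]
        congr 1
        rw [hμδ]; ring_nf

lemma complex_decay_all (Mc : Matrix ι ι ℂ) (hM : ∀ μ ∈ spectrum ℂ Mc, μ.re < 0) (w : ι → ℂ) :
    ∃ Cv : ℝ, 0 ≤ Cv ∧ ∃ α : ℝ, 0 < α ∧ ∀ t : ℝ, 0 ≤ t →
      ‖(exp ((t:ℂ) • Mc)).mulVec w‖ ≤ Cv * Real.exp (-α * t) := by
  set f : Module.End ℂ (ι → ℂ) := Matrix.toLinAlgEquiv' Mc with hf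
  have hw : w ∈ ⨆ μ : ℂ, f.maxGenEigenspace μ := by
    rw [Module.End.iSup_maxGenEigenspace_eq_top]; trivial
  refine Submodule.iSup_induction' (p := fun μ : ℂ => f.maxGenEigenspace μ) (motive := fun w _ => ∃ Cv : ℝ, 0 ≤ Cv ∧ ∃ α : ℝ, 0 < α ∧
    ∀ t : ℝ, 0 ≤ t → ‖(exp ((t:ℂ) • Mc)).mulVec w‖ ≤ Cv * Real.exp (-α * t)) ?_ ?_ ?_ hw
  · intro μ v hvμ
    rcases (Module.End.mem_maxGenEigenspace f μ v).mp hvμ with ⟨k, hk⟩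
    by_cases hv0 : v = 0
    · exact ⟨0, le_rfl, 1, one_pos, by simp [hv0]⟩
    have hvmem : v ∈ f.genEigenspace μ (k : ℕ∞) :=
      Module.End.mem_genEigenspace_nat.mpr hk
    have h1 : f.HasUnifEigenvalue μ (k : ℕ∞) :=
      Submodule.ne_bot_iff _ |>.mpr ⟨v, hvmem, hv0⟩
    have h2 : f.HasUnifEigenvalue μ 1 := h1.lt (by norm_num)
    have hμspec : μ ∈ spectrum ℂ Mc := by
      have := h2.mem_spectrum
      rwa [hf, AlgEquiv.spectrum_eq Matrix.toLinAlgEquiv' Mc] at this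
    have hμre : μ.re < 0 := hM μ hμspec
    have hpow : (f - μ • 1) ^ k = Matrix.toLinAlgEquiv' ((Mc - μ • 1) ^ k) := by
      rw [map_pow, map_sub, _root_.map_smul, _root_.map_one]
    have hk' : ((Mc - μ • 1) ^ k).mulVec v = 0 := by
      rw [hpow] at hk
      exact hk
    exact genEig_decay Mc μ hμre k v hk'
  · exact ⟨0, le_rfl, 1, one_pos, by simp⟩
  · rintro w₁ w₂ h₁ h₂ ⟨C₁, hC₁, α₁, hα₁, hb₁⟩ ⟨C₂, hC₂, α₂, hα₂, hb₂⟩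
    refine ⟨C₁ + C₂, by positivity, min α₁ α₂, lt_min hα₁ hα₂, ?_⟩
    intro t ht
    rw [Matrix.mulVec_add]
    refine (norm_add_le _ _).trans ?_
    have e₁ : Real.exp (-α₁ * t) ≤ Real.exp (-(min α₁ α₂) * t) := by
      apply Real.exp_le_exp.mpr; nlinarith [min_le_left α₁ α₂]
    have e₂ : Real.exp (-α₂ * t) ≤ Real.exp (-(min α₁ α₂) * t) := by
      apply Real.exp_le_exp.mpr; nlinarith [min_le_right α₁ α₂]
    calc ‖(exp ((t:ℂ) • Mc)).mulVec w₁‖ + ‖(exp ((t:ℂ) • Mc)).mulVec w₂‖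
        ≤ C₁ * Real.exp (-α₁ * t) + C₂ * Real.exp (-α₂ * t) := add_le_add (hb₁ t ht) (hb₂ t ht)
      _ ≤ C₁ * Real.exp (-(min α₁ α₂) * t) + C₂ * Real.exp (-(min α₁ α₂) * t) := by
          gcongr
      _ = (C₁ + C₂) * Real.exp (-(min α₁ α₂) * t) := by ring

lemma hurwitz_decay (M : Matrix ι ι ℝ) (hM : IsHurwitz M) :
    ∃ CM α : ℝ, 0 < CM ∧ 0 < α ∧ ∀ v : ι → ℝ, ∀ t : ℝ, 0 ≤ t →
      ‖(exp (t • M)).mulVec v‖ ≤ CM * Real.exp (-α * t) * ‖v‖ := by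
  set Mc : Matrix ι ι ℂ := M.map Complex.ofReal with hMc
  rcases isEmpty_or_nonempty ι with hι | hι
  · refine ⟨1, 1, one_pos, one_pos, ?_⟩
    intro v t ht
    have h0 : (exp (t • M)).mulVec v = 0 := Subsingleton.elim _ _
    rw [h0, norm_zero]
    positivity
  choose Cb hCb αb hαb hbb using fun j : ι =>
    complex_decay_all Mc hM (fun i => if j = i then (1:ℂ) else 0)
  have hne : (Finset.univ : Finset ι).Nonempty := Finset.univ_nonempty
  set α := Finset.univ.inf' hne αb with hα
  have hαpos : 0 < α := by
    rw [hα, Finset.lt_inf'_iff]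
    exact fun j _ => hαb j
  refine ⟨(∑ j, Cb j) + 1, α, ?_, hαpos, ?_⟩
  · have : 0 ≤ ∑ j, Cb j := Finset.sum_nonneg fun j _ => hCb j
    linarith
  intro v t ht
  -- pass to complex
  have hcoe : (Complex.ofReal ∘ ((exp (t • M)).mulVec v) : ι → ℂ)
      = (exp ((t:ℂ) • Mc)).mulVec (Complex.ofReal ∘ v) := by
    funext i
    rw [Function.comp_apply]
    rw [show (Complex.ofReal : ℝ → ℂ) = ⇑Complex.ofRealHom from rfl]
    rw [RingHom.map_mulVec]
    rw [show (exp (t • M)).map ⇑Complex.ofRealHom = exp ((t:ℂ) • Mc) from exp_map_complex M t]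
    rfl
  have hnorm : ‖(exp (t • M)).mulVec v‖
      = ‖(exp ((t:ℂ) • Mc)).mulVec (Complex.ofReal ∘ v)‖ := by
    rw [← hcoe, norm_coe_complex]
  rw [hnorm]
  -- decompose v into basis vectors
  have hdecomp : (Complex.ofReal ∘ v : ι → ℂ)
      = ∑ j : ι, (v j : ℂ) • (fun i => if j = i then (1:ℂ) else 0) := by
    funext i
    simp only [Finset.sum_apply, Pi.smul_apply, smul_eq_mul, mul_ite, mul_one, mul_zero,
      Function.comp_apply]
    rw [Finset.sum_ite_eq' Finset.univ i (fun j => (v j : ℂ))]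
    simp
  have hsum : (exp ((t:ℂ) • Mc)).mulVec (Complex.ofReal ∘ v)
      = ∑ j : ι, (v j : ℂ) • (exp ((t:ℂ) • Mc)).mulVec (fun i => if j = i then (1:ℂ) else 0) := by
    rw [hdecomp, ← mvCLM_apply, map_sum]
    simp only [_root_.map_smul, mvCLM_apply]
  rw [hsum]
  refine (norm_sum_le _ _).trans ?_
  have hterm : ∀ j : ι,
      ‖(v j : ℂ) • (exp ((t:ℂ) • Mc)).mulVec (fun i => if j = i then (1:ℂ) else 0)‖
      ≤ Cb j * Real.exp (-α * t) * ‖v‖ := by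
    intro j
    rw [norm_smul]
    have h1 : ‖(v j : ℂ)‖ ≤ ‖v‖ := by
      rw [Complex.norm_real]
      exact norm_le_pi_norm v j
    have h2 : ‖(exp ((t:ℂ) • Mc)).mulVec (fun i => if j = i then (1:ℂ) else 0)‖
        ≤ Cb j * Real.exp (-α * t) := by
      refine (hbb j t ht).trans ?_
      have : Real.exp (-αb j * t) ≤ Real.exp (-α * t) := by
        apply Real.exp_le_exp.mpr
        have := Finset.inf'_le αb (Finset.mem_univ j)
        nlinarith
      exact mul_le_mul_of_nonneg_left this (hCb j)
    calc ‖(v j : ℂ)‖ * ‖(exp ((t:ℂ) • Mc)).mulVec (fun i => if j = i then (1:ℂ) else 0)‖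
        ≤ ‖v‖ * (Cb j * Real.exp (-α * t)) := by
          apply mul_le_mul h1 h2 (norm_nonneg _) (norm_nonneg _)
      _ = Cb j * Real.exp (-α * t) * ‖v‖ := by ring
  refine (Finset.sum_le_sum fun j _ => hterm j).trans ?_
  rw [← Finset.sum_mul, ← Finset.sum_mul]
  have h3 : (0:ℝ) ≤ Real.exp (-α * t) * ‖v‖ := by positivity
  rw [mul_assoc, mul_assoc]
  have h4 : (∑ j, Cb j) ≤ (∑ j, Cb j) + 1 := by linarith
  exact mul_le_mul_of_nonneg_right h4 h3

lemma ode_bound (M : Matrix ι ι ℝ) (hM : IsHurwitz M)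
    (y g : ℝ → ι → ℝ) (hy : ∀ t, HasDerivAt y (M.mulVec (y t) + g t) t)
    (cf lam : ℝ) (hlam : 0 < lam) (hg : ∀ t ≥ (0:ℝ), ‖g t‖ ≤ cf * Real.exp (-lam * t)) :
    ∃ c' β : ℝ, 0 < β ∧ ∀ t ≥ (0:ℝ), ‖y t‖ ≤ c' * Real.exp (-β * t) := by
  obtain ⟨CM, α, hCM, hα, hdec⟩ := hurwitz_decay M hM
  have hcf : 0 ≤ cf := le_trans (norm_nonneg (g 0)) (by simpa using hg 0 le_rfl)
  set E : ℝ → Matrix ι ι ℝ := fun s => exp (s • (-M)) with hE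
  have hEderiv : ∀ t, HasDerivAt E (E t * (-M)) t := fun t => hasDerivAt_exp_smul_const (-M) t
  have hEcont : Continuous E := by
    rw [continuous_iff_continuousAt]
    exact fun s => (hEderiv s).continuousAt
  set z : ℝ → ι → ℝ := fun s => (E s).mulVec (y s) with hzdef
  have hz : ∀ t, HasDerivAt z ((E t).mulVec (g t)) t := by
    intro t
    have hc : HasDerivAt (fun s => matCLM (E s)) (matCLM (E t * (-M))) t := by
      exact matCLM.hasFDerivAt.comp_hasDerivAt t (hEderiv t)
    have h2 := hc.clm_apply (hy t)
    have hfun : (fun s => matCLM (E s) (y s)) = z := by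
      funext s; simp [hzdef]
    rw [hfun] at h2
    refine h2.congr_deriv ?_; symm
    simp only [matCLM_apply]
    rw [Matrix.mul_neg, Matrix.neg_mulVec, Matrix.mulVec_add, ← Matrix.mulVec_mulVec]
    abel
  -- integrability of the forcing term in the z-equation
  have hzmeas : Measurable (deriv z) := measurable_deriv z
  have hderiv_eq : deriv z = fun s => (E s).mulVec (g s) := funext fun s => (hz s).deriv
  have key : ∀ T : ℝ, 0 ≤ T → ‖y T‖ ≤ CM * Real.exp (-α * T) * ‖y 0‖
      + CM * cf * T * Real.exp (-(min α lam) * T) := by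
    intro T hT
    obtain ⟨KE, hKE⟩ := (isCompact_uIcc (a := (0:ℝ)) (b := T)).exists_bound_of_continuousOn
      (hEcont.continuousOn)
    have hint : IntervalIntegrable (fun s => (E s).mulVec (g s)) volume 0 T := by
      rw [← hderiv_eq, intervalIntegrable_iff]
      apply MeasureTheory.Integrable.mono'
        (intervalIntegrable_iff.mp (_root_.intervalIntegrable_const (c := KE * cf)))
        hzmeas.aestronglyMeasurable
      refine ((ae_restrict_mem measurableSet_uIoc).mono (fun s hs => ?_))
      rw [hderiv_eq]
      have hs' : s ∈ Set.uIcc (0:ℝ) T := Set.uIoc_subset_uIcc hs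
      have hs0 : 0 ≤ s := by
        rcases hs with ⟨h1, h2⟩
        have : min 0 T = 0 := min_eq_left hT
        rw [this] at h1; exact le_of_lt h1
      calc ‖(E s).mulVec (g s)‖ ≤ ‖E s‖ * ‖g s‖ := Matrix.linfty_opNorm_mulVec _ _
        _ ≤ KE * cf := by
            apply mul_le_mul (hKE s hs') ((hg s hs0).trans ?_) (norm_nonneg _)
              ((norm_nonneg (E 0)).trans (hKE 0 Set.left_mem_uIcc))
            calc cf * Real.exp (-lam * s) ≤ cf * 1 := by
                  apply mul_le_mul_of_nonneg_left _ hcf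
                  rw [Real.exp_le_one_iff]
                  nlinarith
              _ = cf := mul_one cf
    have hftc : ∫ s in (0:ℝ)..T, (E s).mulVec (g s) = z T - z 0 :=
      integral_eq_sub_of_hasDerivAt (fun s _ => hz s) hint
    -- invert the exponential
    have hcomm : Commute (T • M) (T • (-M)) :=
      (((Commute.refl M).neg_right).smul_left T).smul_right T
    have hinv : exp (T • M) * E T = 1 := by
      rw [hE]; beta_reduce; rw [← Matrix.exp_add_of_commute _ _ hcomm]
      rw [show T • M + T • (-M) = 0 by module, exp_zero]
    have hyT : y T = (exp (T • M)).mulVec (z 0) +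
        (exp (T • M)).mulVec (∫ s in (0:ℝ)..T, (E s).mulVec (g s)) := by
      rw [hftc, Matrix.mulVec_sub]
      have : (exp (T • M)).mulVec (z T) = y T := by
        rw [hzdef]
        rw [Matrix.mulVec_mulVec, hinv, Matrix.one_mulVec]
      rw [this]
      abel
    have hz0 : z 0 = y 0 := by
      rw [hzdef]; simp [hE]
    -- bound the two pieces
    have hb1 : ‖(exp (T • M)).mulVec (z 0)‖ ≤ CM * Real.exp (-α * T) * ‖y 0‖ := by
      rw [hz0]; exact hdec (y 0) T hT
    have hswap : (exp (T • M)).mulVec (∫ s in (0:ℝ)..T, (E s).mulVec (g s))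
        = ∫ s in (0:ℝ)..T, (exp ((T - s) • M)).mulVec (g s) := by
      rw [← mvCLM_apply]
      rw [← (mvCLM (exp (T • M))).intervalIntegral_comp_comm hint]
      apply intervalIntegral.integral_congr
      intro s hs
      simp only [mvCLM_apply]
      rw [Matrix.mulVec_mulVec]
      congr 1
      have hcms : Commute (T • M) (s • (-M)) :=
        (((Commute.refl M).neg_right).smul_left T).smul_right s
      rw [hE]; beta_reduce; rw [← Matrix.exp_add_of_commute _ _ hcms,
        show T • M + s • (-M) = (T - s) • M by module]
    have hb2 : ‖∫ s in (0:ℝ)..T, (exp ((T - s) • M)).mulVec (g s)‖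
        ≤ CM * cf * Real.exp (-(min α lam) * T) * T := by
      have hbnd : ∀ s ∈ Set.uIoc (0:ℝ) T,
          ‖(exp ((T - s) • M)).mulVec (g s)‖ ≤ CM * cf * Real.exp (-(min α lam) * T) := by
        intro s hs
        rw [Set.uIoc_of_le hT] at hs
        obtain ⟨hs0, hsT⟩ := hs
        have hs0' : (0:ℝ) ≤ s := le_of_lt hs0
        have hTs : (0:ℝ) ≤ T - s := by linarith
        calc ‖(exp ((T - s) • M)).mulVec (g s)‖
            ≤ CM * Real.exp (-α * (T - s)) * ‖g s‖ := hdec (g s) (T - s) hTs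
          _ ≤ CM * Real.exp (-α * (T - s)) * (cf * Real.exp (-lam * s)) := by
              apply mul_le_mul_of_nonneg_left (hg s hs0')
              positivity
          _ = CM * cf * (Real.exp (-α * (T - s)) * Real.exp (-lam * s)) := by ring
          _ ≤ CM * cf * Real.exp (-(min α lam) * T) := by
              apply mul_le_mul_of_nonneg_left _ (by positivity)
              rw [← Real.exp_add, Real.exp_le_exp]
              have h1 : min α lam ≤ α := min_le_left _ _
              have h2 : min α lam ≤ lam := min_le_right _ _
              nlinarith
      calc ‖∫ s in (0:ℝ)..T, (exp ((T - s) • M)).mulVec (g s)‖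
          ≤ CM * cf * Real.exp (-(min α lam) * T) * |T - 0| :=
            intervalIntegral.norm_integral_le_of_norm_le_const hbnd
        _ = CM * cf * Real.exp (-(min α lam) * T) * T := by
            rw [sub_zero, abs_of_nonneg hT]
    calc ‖y T‖ ≤ ‖(exp (T • M)).mulVec (z 0)‖
          + ‖(exp (T • M)).mulVec (∫ s in (0:ℝ)..T, (E s).mulVec (g s))‖ := by
          rw [hyT]; exact norm_add_le _ _
      _ ≤ CM * Real.exp (-α * T) * ‖y 0‖ + CM * cf * Real.exp (-(min α lam) * T) * T := by
          apply add_le_add hb1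
          rw [hswap]; exact hb2
      _ = CM * Real.exp (-α * T) * ‖y 0‖ + CM * cf * T * Real.exp (-(min α lam) * T) := by
          ring
  -- convert to a clean exponential bound
  set β := min α lam with hβ
  have hβpos : 0 < β := lt_min hα hlam
  refine ⟨CM * ‖y 0‖ + CM * cf * (2 / β), β / 2, by positivity, ?_⟩
  intro t ht
  have h1 := key t ht
  have h2 : Real.exp (-α * t) ≤ Real.exp (-(β/2) * t) := by
    rw [Real.exp_le_exp]
    have : β ≤ α := min_le_left _ _
    nlinarith
  have h3 : t * Real.exp (-β * t) ≤ (2 / β) * Real.exp (-(β/2) * t) := by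
    have hx : (β/2) * t ≤ Real.exp ((β/2) * t) := by
      have := Real.add_one_le_exp ((β/2) * t)
      linarith
    have h4 : t ≤ (2/β) * Real.exp ((β/2) * t) := by
      rw [← mul_le_mul_iff_right₀ (by positivity : (0:ℝ) < β/2)]
      calc (β/2) * t ≤ Real.exp ((β/2) * t) := hx
        _ = (β/2) * ((2/β) * Real.exp ((β/2) * t)) := by field_simp
    calc t * Real.exp (-β * t) ≤ ((2/β) * Real.exp ((β/2) * t)) * Real.exp (-β * t) := by
          apply mul_le_mul_of_nonneg_right h4 (Real.exp_nonneg _)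
      _ = (2/β) * Real.exp (-(β/2) * t) := by
          rw [mul_assoc, ← Real.exp_add]
          congr 2
          ring
  calc ‖y t‖ ≤ CM * Real.exp (-α * t) * ‖y 0‖ + CM * cf * t * Real.exp (-β * t) := h1
    _ ≤ CM * Real.exp (-(β/2) * t) * ‖y 0‖ + CM * cf * ((2/β) * Real.exp (-(β/2) * t)) := by
        apply add_le_add
        · apply mul_le_mul_of_nonneg_right _ (norm_nonneg _)
          exact mul_le_mul_of_nonneg_left h2 (le_of_lt hCM)
        · rw [mul_assoc]
          apply mul_le_mul_of_nonneg_left h3 (by positivity)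
    _ = (CM * ‖y 0‖ + CM * cf * (2 / β)) * Real.exp (-(β/2) * t) := by ring

lemma tendsto_zero_of_exp_bound {κ : Type*} [Fintype κ] (w : ℝ → κ → ℝ) (c β : ℝ)
    (hβ : 0 < β) (h : ∀ t ≥ (0:ℝ), ‖w t‖ ≤ c * Real.exp (-β * t)) :
    Filter.Tendsto w Filter.atTop (nhds 0) := by
  apply squeeze_zero_norm' ((Filter.eventually_ge_atTop (0:ℝ)).mono h)
  have h1 : Filter.Tendsto (fun t : ℝ => β * t) Filter.atTop Filter.atTop :=
    Filter.Tendsto.const_mul_atTop hβ Filter.tendsto_id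
  have h3 : Filter.Tendsto (fun t : ℝ => Real.exp (-(β * t))) Filter.atTop (nhds 0) :=
    Real.tendsto_exp_atBot.comp (Filter.tendsto_neg_atTop_atBot.comp h1)
  have h4 := h3.const_mul c
  simpa [neg_mul] using h4

theorem stmt13 {n m l q n₀ : ℕ}
    (A : Matrix (Fin n) (Fin n) ℝ) (B : Matrix (Fin n) (Fin m) ℝ)
    (C : Matrix (Fin l) (Fin n) ℝ) (D : Matrix (Fin l) (Fin m) ℝ)
    (E : Matrix (Fin n) (Fin q) ℝ) (S : Matrix (Fin q) (Fin q) ℝ)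
    (S₀ : Matrix (Fin n₀) (Fin n₀) ℝ) (F₀ : Matrix (Fin l) (Fin n₀) ℝ)
    (X₁ : Matrix (Fin n) (Fin q) ℝ) (U₁ : Matrix (Fin m) (Fin q) ℝ)
    (hreg11 : X₁ * S = A * X₁ + B * U₁ + E)
    (hreg12 : C * X₁ + D * U₁ = 0)
    (X₂ : Matrix (Fin n) (Fin n₀) ℝ) (U₂ : Matrix (Fin m) (Fin n₀) ℝ)
    (hreg21 : X₂ * S₀ = A * X₂ + B * U₂)
    (hreg22 : C * X₂ + D * U₂ = F₀)
    (K₁ : Matrix (Fin m) (Fin n) ℝ) (hK₁ : IsHurwitz (A + B * K₁))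
    (K₂ : Matrix (Fin m) (Fin q) ℝ) (hK₂ : K₂ = U₁ - K₁ * X₁)
    (K₃ : Matrix (Fin m) (Fin n₀) ℝ) (hK₃ : K₃ = U₂ - K₁ * X₂)
    (L : Matrix (Fin q) (Fin n) ℝ) (hL : IsHurwitz (S + L * E))
    (x : ℝ → Fin n → ℝ) (d : ℝ → Fin q → ℝ) (r : ℝ → Fin n₀ → ℝ)
    (ζ : ℝ → Fin q → ℝ) (u : ℝ → Fin m → ℝ)
    (η : ℝ → Fin n₀ → ℝ) (c lam : ℝ) (hc : 0 < c) (hlam : 0 < lam)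
    (hη : ∀ t ≥ (0:ℝ), ‖η t - r t‖ ≤ c * Real.exp (-lam * t))
    (hd : ∀ t, HasDerivAt d (S.mulVec (d t)) t)
    (hr : ∀ t, HasDerivAt r (S₀.mulVec (r t)) t)
    (hx : ∀ t, HasDerivAt x (A.mulVec (x t) + B.mulVec (u t) + E.mulVec (d t)) t)
    (hζ : ∀ t, HasDerivAt ζ
      ((S + L * E).mulVec (ζ t) + (L * A - S * L - L * E * L).mulVec (x t)
        + (L * B).mulVec (u t)) t)
    (hu : ∀ t, u t = K₁.mulVec (x t) + K₂.mulVec (ζ t - L.mulVec (x t)) + K₃.mulVec (η t)) :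
    Tendsto (fun t => C.mulVec (x t) + D.mulVec (u t) - F₀.mulVec (r t)) atTop (nhds 0) := by
  -- observer error
  set ε : ℝ → Fin q → ℝ := fun t => ζ t - L.mulVec (x t) - d t with hεdef
  have hεderiv : ∀ t, HasDerivAt ε ((S + L * E).mulVec (ε t) + 0) t := by
    intro t
    have h1 := ((hζ t).sub (hasDerivAt_mulVec L (hx t))).sub (hd t)
    refine h1.congr_deriv ?_; symm
    simp only [hεdef, add_zero]
    simp only [Matrix.mulVec_sub, Matrix.mulVec_add, Matrix.add_mulVec, Matrix.sub_mulVec,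
      ← Matrix.mulVec_mulVec]
    abel
  obtain ⟨c₁, β₁, hβ₁, hbε⟩ := ode_bound (S + L * E) hL ε (fun _ => 0) hεderiv 0 1 one_pos
    (fun t _ => by simp)
  have hc₁ : 0 ≤ c₁ := le_trans (norm_nonneg (ε 0)) (by simpa using hbε 0 le_rfl)
  -- tracking error
  set w : ℝ → Fin n → ℝ := fun t => x t - X₁.mulVec (d t) - X₂.mulVec (r t) with hwdef
  set gg : ℝ → Fin n → ℝ :=
    fun t => (B * K₂).mulVec (ε t) + (B * K₃).mulVec (η t - r t) with hggdef
  have hE' : E = X₁ * S - A * X₁ - B * U₁ := by rw [hreg11]; abel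
  have hwderiv : ∀ t, HasDerivAt w ((A + B * K₁).mulVec (w t) + gg t) t := by
    intro t
    have h1 := ((hx t).sub (hasDerivAt_mulVec X₁ (hd t))).sub (hasDerivAt_mulVec X₂ (hr t))
    refine h1.congr_deriv ?_; symm
    rw [hu t]
    have hs0 : X₂.mulVec (S₀.mulVec (r t)) = (A * X₂ + B * U₂).mulVec (r t) := by
      rw [Matrix.mulVec_mulVec, hreg21]
    rw [hs0]
    subst hK₂ hK₃ hE'
    simp only [hwdef, hggdef, hεdef]
    simp only [Matrix.mulVec_sub, Matrix.mulVec_add, Matrix.add_mulVec, Matrix.sub_mulVec,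
      ← Matrix.mulVec_mulVec]
    abel
  -- bound on gg
  set Cg : ℝ := ‖mvCLM (B * K₂)‖ * c₁ + ‖mvCLM (B * K₃)‖ * c
  have hgg : ∀ t ≥ (0:ℝ), ‖gg t‖ ≤ Cg * Real.exp (-(min β₁ lam) * t) := by
    intro t ht
    have h1 : ‖(B * K₂).mulVec (ε t)‖ ≤ ‖mvCLM (B * K₂)‖ * (c₁ * Real.exp (-β₁ * t)) := by
      rw [← mvCLM_apply]
      exact ((mvCLM (B * K₂)).le_opNorm (ε t)).trans
        (mul_le_mul_of_nonneg_left (hbε t ht) (norm_nonneg _))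
    have h2 : ‖(B * K₃).mulVec (η t - r t)‖
        ≤ ‖mvCLM (B * K₃)‖ * (c * Real.exp (-lam * t)) := by
      rw [← mvCLM_apply]
      exact ((mvCLM (B * K₃)).le_opNorm (η t - r t)).trans
        (mul_le_mul_of_nonneg_left (hη t ht) (norm_nonneg _))
    have e₁ : Real.exp (-β₁ * t) ≤ Real.exp (-(min β₁ lam) * t) := by
      rw [Real.exp_le_exp]; nlinarith [min_le_left β₁ lam]
    have e₂ : Real.exp (-lam * t) ≤ Real.exp (-(min β₁ lam) * t) := by
      rw [Real.exp_le_exp]; nlinarith [min_le_right β₁ lam]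
    calc ‖gg t‖ ≤ ‖(B * K₂).mulVec (ε t)‖ + ‖(B * K₃).mulVec (η t - r t)‖ := norm_add_le _ _
      _ ≤ ‖mvCLM (B * K₂)‖ * (c₁ * Real.exp (-β₁ * t))
          + ‖mvCLM (B * K₃)‖ * (c * Real.exp (-lam * t)) := add_le_add h1 h2
      _ ≤ ‖mvCLM (B * K₂)‖ * (c₁ * Real.exp (-(min β₁ lam) * t))
          + ‖mvCLM (B * K₃)‖ * (c * Real.exp (-(min β₁ lam) * t)) := by
          apply add_le_add <;> apply mul_le_mul_of_nonneg_left _ (norm_nonneg _)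
          · exact mul_le_mul_of_nonneg_left e₁ hc₁
          · exact mul_le_mul_of_nonneg_left e₂ (le_of_lt hc)
      _ = Cg * Real.exp (-(min β₁ lam) * t) := by simp only [Cg]; ring
  obtain ⟨c₂, β₂, hβ₂, hbw⟩ := ode_bound (A + B * K₁) hK₁ w gg hwderiv Cg (min β₁ lam)
    (lt_min hβ₁ hlam) hgg
  -- error decomposition
  have herr : (fun t => C.mulVec (x t) + D.mulVec (u t) - F₀.mulVec (r t))
      = fun t => (C + D * K₁).mulVec (w t) + (D * K₂).mulVec (ε t)
        + (D * K₃).mulVec (η t - r t)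
        + ((C * X₁ + D * U₁).mulVec (d t) + (C * X₂ + D * U₂ - F₀).mulVec (r t)) := by
    funext t
    rw [hu t]
    subst hK₂ hK₃
    simp only [hwdef, hεdef]
    simp only [Matrix.mulVec_sub, Matrix.mulVec_add, Matrix.add_mulVec, Matrix.sub_mulVec,
      ← Matrix.mulVec_mulVec]
    abel
  rw [herr, hreg12, hreg22]
  simp only [Matrix.zero_mulVec, sub_self, zero_add, add_zero, Matrix.zero_mulVec]
  -- each piece tends to zero
  have t1 : Filter.Tendsto (fun t => (C + D * K₁).mulVec (w t)) Filter.atTop (nhds 0) := by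
    have hw0 := tendsto_zero_of_exp_bound w c₂ β₂ hβ₂ hbw
    have := ((mvCLM (C + D * K₁)).continuous.tendsto 0).comp hw0
    simpa [Function.comp_def] using this
  have t2 : Filter.Tendsto (fun t => (D * K₂).mulVec (ε t)) Filter.atTop (nhds 0) := by
    have hε0 := tendsto_zero_of_exp_bound ε c₁ β₁ hβ₁ hbε
    have := ((mvCLM (D * K₂)).continuous.tendsto 0).comp hε0
    simpa [Function.comp_def] using this
  have t3 : Filter.Tendsto (fun t => (D * K₃).mulVec (η t - r t)) Filter.atTop (nhds 0) := by
    have hη0 := tendsto_zero_of_exp_bound (fun t => η t - r t) c lam hlam hη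
    have := ((mvCLM (D * K₃)).continuous.tendsto 0).comp hη0
    simpa [Function.comp_def] using this
  have := (t1.add t2).add t3
  simpa using this

end HurwitzAux
end

section
/- Let N ≥ 1 and for each i ∈ {1,…,N} let Aᵢ ∈ ℝ^{nᵢ×nᵢ}, Bᵢ ∈ ℝ^{nᵢ×mᵢ}, Cᵢ ∈ ℝ^{l×nᵢ}, Dᵢ ∈ ℝ^{l×mᵢ}, Eᵢ ∈ ℝ^{nᵢ×qᵢ}, Sᵢ ∈ ℝ^{qᵢ×qᵢ}; let S₀ ∈ ℝ^{n₀×n₀}, F₀ ∈ ℝ^{l×n₀}. Assume: (i) for each i there exist Xᵢ₁, Uᵢ₁ with Xᵢ₁Sᵢ = AᵢXᵢ₁ + BᵢUᵢ₁ + Eᵢ, 0 = CᵢXᵢ₁ + DᵢUᵢ₁, and Xᵢ₂, Uᵢ₂ with Xᵢ₂S₀ = AᵢXᵢ₂ + BᵢUᵢ₂, 0 = CᵢXᵢ₂ + DᵢUᵢ₂ − F₀; (ii) Kᵢ₁ with Aᵢ + BᵢKᵢ₁ Hurwitz, Kᵢ₂ = Uᵢ₁ − Kᵢ₁Xᵢ₁,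 Kᵢ₃ = Uᵢ₂ − Kᵢ₁Xᵢ₂; (iii) P ∈ ℝ^{n₀×n₀} symmetric positive definite with S₀ᵀP + PS₀ − 2F₀ᵀF₀ negative definite, matrices H₁,…,H_κ ∈ ℝ^{N×N} symmetric positive definite with all eigenvalues ≥ λ̄ > 0, L₀ = −max{1/λ̄,1}·P⁻¹F₀ᵀ, and a switching signal σ : [0,∞) → {1,…,κ} constant on intervals [tⱼ, tⱼ₊₁) of a strictly increasing unbounded time sequence. Let r' = S₀r, and for each i let dᵢ' = Sᵢdᵢ, xᵢ' = Aᵢxᵢ + Bᵢuᵢ + Eᵢdᵢ, and uᵢ = Kᵢ₁xᵢ + Kᵢ₂dᵢ + Kᵢ₃ηᵢ, where the stacked observer error η̄ = (η₁ − r, …, η_N − r) is continuous, differentiable on each switching interval, and satisfies η̄' = (I_N ⊗ S₀ + H_{σ(t)} ⊗ (L₀F₀)) η̄. Then for every initial condition, eᵢ(t) = Cᵢxᵢ(t) + Dᵢuᵢ(t) − F₀ r(t) → 0 as t → ∞ for all i ∈ {1,…,N}. -/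
open Matrix Filter Kronecker

namespace Stmt15Aux

open Polynomial


lemma continuous_mulVec' {ι κ' : Type*} [Fintype ι] [Fintype κ'] {𝕜 : Type*} [RCLike 𝕜]
    (M : Matrix κ' ι 𝕜) : Continuous fun v : ι → 𝕜 => M.mulVec v := by
  refine continuous_pi fun i => ?_
  simp only [Matrix.mulVec, dotProduct]
  exact continuous_finset_sum _ fun j _ => continuous_const.mul (continuous_apply j)

lemma tendsto_mulVec_zero {α : Type*} {ι κ' : Type*} [Fintype ι] [Fintype κ'] {𝕜 : Type*}
    [RCLike 𝕜] (M : Matrix κ' ι 𝕜) {f : α → ι → 𝕜} {l : Filter α}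
    (hf : Tendsto f l (nhds 0)) : Tendsto (fun s => M.mulVec (f s)) l (nhds 0) := by
  have := ((continuous_mulVec' M).tendsto 0).comp hf
  simpa [Matrix.mulVec_zero, Function.comp_def] using this

lemma hasDerivAt_mulVec {ι κ' : Type*} [Fintype ι] [Fintype κ'] {𝕜 : Type*} [RCLike 𝕜]
    (M : Matrix κ' ι 𝕜)
    {f : ℝ → ι → 𝕜} {f' : ι → 𝕜} {t : ℝ} (hf : HasDerivAt f f' t) :
    HasDerivAt (fun s => M.mulVec (f s)) (M.mulVec f') t := by
  rw [hasDerivAt_pi] at hf ⊢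
  intro i
  simp only [Matrix.mulVec, dotProduct]
  exact HasDerivAt.fun_sum fun j _ => ((hf j).const_mul (M i j))

/-- Core scalar decay lemma: `y' = a • y + g`, `Re a < 0`, `g → 0` implies `y → 0`. -/
lemma decay {k : ℕ} {a : ℂ} (ha : a.re < 0) {y g : ℝ → Fin k → ℂ}
    (hy : ∀ t, HasDerivAt y (a • y t + g t) t)
    (hgc : ContinuousOn g (Set.Ici (0:ℝ)))
    (hg : Tendsto g atTop (nhds 0)) : Tendsto y atTop (nhds 0) := by
  have hδ : (0:ℝ) < -a.re := by linarith
  set δ : ℝ := -a.re with hδdef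
  rw [Metric.tendsto_atTop]
  intro ε hε
  obtain ⟨T₁, hT₁⟩ := Metric.tendsto_atTop.mp hg (ε * δ / 4) (by positivity)
  set T₀ : ℝ := max T₁ 0 with hT₀def
  have hT₀0 : (0:ℝ) ≤ T₀ := le_max_right _ _
  have hgb : ∀ s, T₀ ≤ s → ‖g s‖ ≤ ε * δ / 4 := by
    intro s hs
    have := hT₁ s (le_trans (le_max_left _ _) hs)
    rw [dist_zero_right] at this; exact this.le
  set φ : ℝ → Fin k → ℂ := fun s => Complex.exp (-(a * s)) • y s with hφdef
  have hφ : ∀ s : ℝ, HasDerivAt φ (Complex.exp (-(a * s)) • g s) s := by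
    intro s
    have h1 : HasDerivAt (fun u : ℝ => -(a * (u:ℂ))) (-a) s := by
      simpa using (Complex.ofRealCLM.hasDerivAt (x := s)).const_mul (-a)
    have h2 := h1.cexp
    have h3 := h2.smul (hy s)
    refine h3.congr_deriv (Eq.symm ?_)
    rw [smul_add, smul_smul]
    module
  have hnexp : ∀ s : ℝ, ‖Complex.exp (-(a * s))‖ = Real.exp (δ * s) := by
    intro s
    rw [Complex.norm_exp]
    congr 1
    simp [hδdef, Complex.mul_re]
  have key : ∀ t, T₀ ≤ t → ‖y t‖ ≤ Real.exp (a.re * t) * ‖φ T₀‖ + ε / 4 := by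
    intro t ht
    have hsub : Set.uIcc T₀ t ⊆ Set.Ici (0:ℝ) := by
      rw [Set.uIcc_of_le ht]
      exact fun s hs => le_trans hT₀0 hs.1
    have hcont : ContinuousOn (fun s : ℝ => Complex.exp (-(a * s)) • g s) (Set.uIcc T₀ t) := by
      refine ContinuousOn.smul (f := fun s : ℝ => Complex.exp (-(a * s))) (Continuous.continuousOn ?_) (hgc.mono hsub)
      exact Complex.continuous_exp.comp ((continuous_const.mul Complex.continuous_ofReal).neg)
    have hint : IntervalIntegrable (fun s : ℝ => Complex.exp (-(a * s)) • g s)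
        MeasureTheory.volume T₀ t := hcont.intervalIntegrable
    have hFTC := intervalIntegral.integral_eq_sub_of_hasDerivAt (fun s _ => hφ s) hint
    have hφt : φ t = φ T₀ + ∫ s in T₀..t, Complex.exp (-(a * s)) • g s := by
      rw [hFTC]; abel
    have hyt : y t = Complex.exp (a * t) • φ t := by
      rw [hφdef]
      simp only
      rw [smul_smul, ← Complex.exp_add]
      norm_num
    have hIb : ‖∫ s in T₀..t, Complex.exp (-(a * s)) • g s‖ ≤ (ε / 4) * Real.exp (δ * t) := by
      have h1 : ‖∫ s in T₀..t, Complex.exp (-(a * s)) • g s‖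
          ≤ ∫ s in T₀..t, ‖Complex.exp (-(a * s)) • g s‖ :=
        intervalIntegral.norm_integral_le_integral_norm ht
      have hcont2 : Continuous fun s : ℝ => (ε * δ / 4) * Real.exp (δ * s) :=
        continuous_const.mul (Real.continuous_exp.comp (continuous_const.mul continuous_id))
      have h2 : ∫ s in T₀..t, ‖Complex.exp (-(a * s)) • g s‖
          ≤ ∫ s in T₀..t, (ε * δ / 4) * Real.exp (δ * s) := by
        apply intervalIntegral.integral_mono_on ht hcont.norm.intervalIntegrable
          (hcont2.intervalIntegrable _ _)
        intro s hs
        rw [norm_smul, hnexp s]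
        calc Real.exp (δ * s) * ‖g s‖ ≤ Real.exp (δ * s) * (ε * δ / 4) := by
              exact mul_le_mul_of_nonneg_left (hgb s hs.1) (Real.exp_pos _).le
          _ = (ε * δ / 4) * Real.exp (δ * s) := mul_comm _ _
      have hexpd : ∀ s : ℝ, HasDerivAt (fun u : ℝ => Real.exp (δ * u) / δ)
          (Real.exp (δ * s)) s := by
        intro s
        have h := (((hasDerivAt_id s).const_mul δ).exp).div_const δ
        simpa [mul_comm, mul_div_cancel_left₀ _ hδ.ne'] using h
      have hI : (∫ s in T₀..t, Real.exp (δ * s))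
          = Real.exp (δ * t) / δ - Real.exp (δ * T₀) / δ := by
        apply intervalIntegral.integral_eq_sub_of_hasDerivAt (fun s _ => hexpd s)
        exact (Real.continuous_exp.comp (continuous_const.mul continuous_id)).intervalIntegrable _ _
      have h3 : ∫ s in T₀..t, (ε * δ / 4) * Real.exp (δ * s)
          = (ε * δ / 4) * (Real.exp (δ * t) / δ - Real.exp (δ * T₀) / δ) := by
        rw [intervalIntegral.integral_const_mul, hI]
      have h4 : (ε * δ / 4) * (Real.exp (δ * t) / δ - Real.exp (δ * T₀) / δ)
          ≤ (ε / 4) * Real.exp (δ * t) := by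
        have he1 := Real.exp_pos (δ * T₀)
        have he2 := Real.exp_pos (δ * t)
        rw [mul_sub]
        have : (ε * δ / 4) * (Real.exp (δ * t) / δ) = (ε / 4) * Real.exp (δ * t) := by
          field_simp
        have hnn : 0 ≤ ε * δ / 4 * (Real.exp (δ * T₀) / δ) := by positivity
        linarith
      linarith [h1, h2, h3 ▸ h4]
    have hnexp2 : ‖Complex.exp (a * t)‖ = Real.exp (a.re * t) := by
      rw [Complex.norm_exp]
      congr 1
      simp [Complex.mul_re]
    calc ‖y t‖ = ‖Complex.exp (a * t)‖ * ‖φ t‖ := by rw [hyt, norm_smul]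
      _ ≤ ‖Complex.exp (a * t)‖ * (‖φ T₀‖ + ‖∫ s in T₀..t, Complex.exp (-(a * s)) • g s‖) := by
          rw [hφt]
          exact mul_le_mul_of_nonneg_left (norm_add_le _ _) (norm_nonneg _)
      _ ≤ Real.exp (a.re * t) * ‖φ T₀‖ + Real.exp (a.re * t) * ((ε/4) * Real.exp (δ * t)) := by
          rw [hnexp2, mul_add]
          have := mul_le_mul_of_nonneg_left hIb (Real.exp_pos (a.re * t)).le
          linarith
      _ = Real.exp (a.re * t) * ‖φ T₀‖ + (ε/4) * Real.exp (a.re * t + δ * t) := by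
          rw [Real.exp_add]; ring
      _ = Real.exp (a.re * t) * ‖φ T₀‖ + ε / 4 := by
          rw [show a.re * t + δ * t = 0 by rw [hδdef]; ring, Real.exp_zero, mul_one]
  have hlim : Tendsto (fun t : ℝ => Real.exp (a.re * t) * ‖φ T₀‖) atTop (nhds 0) := by
    have h1 : Tendsto (fun t : ℝ => a.re * t) atTop atBot :=
      Tendsto.const_mul_atTop_of_neg ha tendsto_id
    have h2 := (Real.tendsto_exp_atBot.comp h1).mul_const ‖φ T₀‖
    simpa using h2
  obtain ⟨T₂, hT₂⟩ := Metric.tendsto_atTop.mp hlim (ε / 2) (by positivity)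
  refine ⟨max T₀ T₂, fun t ht => ?_⟩
  have ht₀ : T₀ ≤ t := le_trans (le_max_left _ _) ht
  have ht₂ : T₂ ≤ t := le_trans (le_max_right _ _) ht
  have h1 := key t ht₀
  have h2 := hT₂ t ht₂
  rw [dist_zero_right] at h2 ⊢
  rw [Real.norm_eq_abs, abs_of_nonneg (by positivity)] at h2
  calc ‖y t‖ ≤ Real.exp (a.re * t) * ‖φ T₀‖ + ε / 4 := h1
    _ < ε / 2 + ε / 4 := by linarith
    _ < ε := by linarith


lemma cascade {k : ℕ} (Mc : Matrix (Fin k) (Fin k) ℂ) (l : List ℂ) (hl : ∀ a ∈ l, a.re < 0) :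
    ∀ z g : ℝ → Fin k → ℂ,
      (∀ t, HasDerivAt z (Mc.mulVec (z t) + g t) t) →
      ContinuousOn g (Set.Ici (0:ℝ)) → Tendsto g atTop (nhds 0) →
      (∀ t, ((l.map (fun a => Mc - a • 1)).prod).mulVec (z t) = 0) →
      Tendsto z atTop (nhds 0) := by
  induction l with
  | nil =>
    intro z g hz hgc hg hann
    have hz0 : ∀ t, z t = 0 := fun t => by simpa using hann t
    have : z = fun _ => 0 := funext hz0
    rw [this]
    exact tendsto_const_nhds
  | cons a l ih =>
    intro z g hz hgc hg hann
    have ha := hl a List.mem_cons_self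
    have hl' : ∀ b ∈ l, b.re < 0 := fun b hb => hl b (List.mem_cons_of_mem _ hb)
    have hone : ∀ b : ℂ, Commute (b • (1 : Matrix (Fin k) (Fin k) ℂ)) Mc :=
      fun b => (Commute.one_left Mc).smul_left b
    have hcomm : ∀ b c : ℂ, Commute (Mc - b • 1) (Mc - c • 1) := by
      intro b c
      exact ((Commute.refl Mc).sub_right ((hone c).symm)).sub_left
        ((hone b).sub_right (((Commute.refl (1 : Matrix (Fin k) (Fin k) ℂ)).smul_left b).smul_right c))
    have hcommM : Commute (Mc - a • 1) Mc := (Commute.refl Mc).sub_left (hone a)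
    set zt : ℝ → Fin k → ℂ := fun t => (Mc - a • 1).mulVec (z t) with hztdef
    have hztderiv : ∀ t, HasDerivAt zt (Mc.mulVec (zt t) + (Mc - a • 1).mulVec (g t)) t := by
      intro t
      have h := hasDerivAt_mulVec (Mc - a • 1) (hz t)
      convert h using 1
      rw [Matrix.mulVec_add]
      congr 1
      rw [Matrix.mulVec_mulVec, Matrix.mulVec_mulVec, hcommM.eq]
    have hann' : ∀ t, ((l.map (fun b => Mc - b • 1)).prod).mulVec (zt t) = 0 := by
      intro t
      have hc : Commute (Mc - a • 1) ((l.map (fun b => Mc - b • 1)).prod) := by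
        apply Commute.list_prod_right
        intro y hy'
        obtain ⟨b, _, rfl⟩ := List.mem_map.mp hy'
        exact hcomm a b
      rw [Matrix.mulVec_mulVec, ← hc.eq]
      simpa using hann t
    have hzt0 : Tendsto zt atTop (nhds 0) :=
      ih hl' zt (fun t => (Mc - a • 1).mulVec (g t)) hztderiv
        ((continuous_mulVec' _).comp_continuousOn hgc) (tendsto_mulVec_zero _ hg) hann'
    have hzcont : Continuous z :=
      continuous_iff_continuousAt.mpr fun t => (hz t).differentiableAt.continuousAt
    have hder : ∀ t, HasDerivAt z (a • z t + (zt t + g t)) t := by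
      intro t
      convert hz t using 1
      rw [hztdef]
      simp only [Matrix.sub_mulVec, Matrix.smul_mulVec, Matrix.one_mulVec]
      abel
    refine decay ha hder ?_ ?_
    · exact (((continuous_mulVec' _).comp hzcont).continuousOn).add hgc
    · simpa using hzt0.add hg

lemma hurwitz_tendsto {k : ℕ} {M : Matrix (Fin k) (Fin k) ℝ}
    (hM : ∀ μ ∈ spectrum ℂ (M.map Complex.ofReal), μ.re < 0)
    {x g : ℝ → Fin k → ℝ}
    (hx : ∀ t, HasDerivAt x (M.mulVec (x t) + g t) t)
    (hgc : ContinuousOn g (Set.Ici (0:ℝ)))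
    (hg : Tendsto g atTop (nhds 0)) : Tendsto x atTop (nhds 0) := by
  classical
  set Mc : Matrix (Fin k) (Fin k) ℂ := M.map Complex.ofReal with hMcdef
  set zc : ℝ → Fin k → ℂ := fun t i => (x t i : ℂ) with hzcdef
  set gc : ℝ → Fin k → ℂ := fun t i => (g t i : ℂ) with hgcdef
  -- complexified ODE
  have hmulcast : ∀ v : Fin k → ℝ, Mc.mulVec (fun i => (v i : ℂ)) = fun i => ((M.mulVec v i : ℝ) : ℂ) := by
    intro v
    funext i
    simp [Matrix.mulVec, dotProduct, hMcdef, Matrix.map_apply]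
  have hzderiv : ∀ t, HasDerivAt zc (Mc.mulVec (zc t) + gc t) t := by
    intro t
    rw [hasDerivAt_pi]
    intro i
    have h := (hasDerivAt_pi.mp (hx t) i).ofReal_comp
    refine h.congr_deriv (Eq.symm ?_)
    rw [hzcdef]
    simp only [Pi.add_apply]
    rw [hmulcast]
    push_cast
    simp [hgcdef]
  -- characteristic polynomial roots
  set p : Polynomial ℂ := Mc.charpoly with hpdef
  have hmonic : p.Monic := Matrix.charpoly_monic Mc
  have hsplit : p = (Multiset.map (fun a => X - C a) p.roots).prod :=
    (IsAlgClosed.splits p).eq_prod_roots_of_monic hmonic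
  set L : List ℂ := p.roots.toList with hLdef
  have hLprod : ((L.map (fun a => X - C a)).prod : ℂ[X]) = p := by
    conv_rhs => rw [hsplit]
    rw [← Multiset.coe_toList p.roots, Multiset.map_coe, Multiset.prod_coe]
  have hCH : ((L.map (fun a => Mc - a • (1 : Matrix (Fin k) (Fin k) ℂ))).prod) = 0 := by
    have h0 : Polynomial.aeval Mc p = 0 := Matrix.aeval_self_charpoly Mc
    have hmapeq : (L.map (fun a => Mc - a • (1 : Matrix (Fin k) (Fin k) ℂ)))
        = (L.map (fun a => (X : ℂ[X]) - C a)).map (Polynomial.aeval Mc) := by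
      rw [List.map_map]
      congr 1
      funext b
      simp [Algebra.algebraMap_eq_smul_one]
    rw [hmapeq, ← map_list_prod (Polynomial.aeval Mc : ℂ[X] →ₐ[ℂ] Matrix (Fin k) (Fin k) ℂ), hLprod, h0]
  have hdetp : ∀ b : ℂ, p.eval b = (b • (1 : Matrix (Fin k) (Fin k) ℂ) - Mc).det := by
    intro b
    rw [hpdef, Matrix.charpoly, ← Polynomial.coe_evalRingHom, RingHom.map_det]
    congr 1
    ext i j
    by_cases h : i = j <;>
      simp [h, Matrix.charmatrix_apply, Matrix.one_apply, Matrix.diagonal_apply,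
        Matrix.smul_apply, Matrix.sub_apply, RingHom.mapMatrix_apply, Matrix.map_apply]
  have hroots : ∀ b ∈ L, b.re < 0 := by
    intro b hb
    apply hM
    rw [hLdef, Multiset.mem_toList] at hb
    have hb' : p.IsRoot b := (Polynomial.mem_roots hmonic.ne_zero).mp hb
    rw [spectrum.mem_iff]
    intro hunit
    rw [Matrix.isUnit_iff_isUnit_det] at hunit
    have : ((algebraMap ℂ (Matrix (Fin k) (Fin k) ℂ)) b - Mc).det = 0 := by
      rw [Algebra.algebraMap_eq_smul_one, ← hdetp b]
      exact hb'
    rw [this] at hunit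
    exact (by simp : ¬ IsUnit (0:ℂ)) hunit
  have hgccont : ContinuousOn gc (Set.Ici (0:ℝ)) := by
    rw [continuousOn_pi]
    intro i
    exact Complex.continuous_ofReal.comp_continuousOn ((continuousOn_pi.mp hgc) i)
  have hgc0 : Tendsto gc atTop (nhds 0) := by
    rw [tendsto_pi_nhds]
    intro i
    have := (tendsto_pi_nhds.mp hg) i
    have h2 := (Complex.continuous_ofReal.tendsto 0).comp this
    simpa [Function.comp_def] using h2
  have hann : ∀ t, ((L.map (fun a => Mc - a • 1)).prod).mulVec (zc t) = 0 := by
    intro t; rw [hCH, Matrix.zero_mulVec]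
  have hzc0 := cascade Mc L hroots zc gc hzderiv hgccont hgc0 hann
  rw [tendsto_pi_nhds]
  intro i
  have := (tendsto_pi_nhds.mp hzc0) i
  have h2 := (Complex.continuous_re.tendsto 0).comp this
  simpa [hzcdef, Function.comp_def] using h2


lemma continuous_quad {ι : Type*} [Fintype ι] (Q : Matrix ι ι ℝ) :
    Continuous fun v : ι → ℝ => v ⬝ᵥ Q.mulVec v := by
  simp only [dotProduct, Matrix.mulVec]
  exact continuous_finset_sum _ fun i _ => (continuous_apply i).mul
    (continuous_finset_sum _ fun j _ => continuous_const.mul (continuous_apply j))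

/-- Comparison of two positive definite quadratic forms. -/
lemma quad_comp {ι : Type*} [Fintype ι] [DecidableEq ι] [Nonempty ι] {R P : Matrix ι ι ℝ}
    (hR : R.PosDef) (hP : P.PosDef) :
    ∃ c > 0, ∀ v : ι → ℝ, c * (v ⬝ᵥ P.mulVec v) ≤ v ⬝ᵥ R.mulVec v := by
  set Sp : Set (ι → ℝ) := Metric.sphere 0 1 with hSpdef
  have hcomp : IsCompact Sp := isCompact_sphere 0 1
  have hne : Sp.Nonempty := NormedSpace.sphere_nonempty.mpr zero_le_one
  obtain ⟨vmin, hvmin, hminR⟩ :=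
    hcomp.exists_isMinOn hne (continuous_quad R).continuousOn
  obtain ⟨vmax, hvmax, hmaxP⟩ :=
    hcomp.exists_isMaxOn hne (continuous_quad P).continuousOn
  set cR := vmin ⬝ᵥ R.mulVec vmin with hcRdef
  set cP := vmax ⬝ᵥ P.mulVec vmax with hcPdef
  have hsne : ∀ v ∈ Sp, v ≠ 0 := by
    intro v hv h0
    rw [hSpdef, Metric.mem_sphere, h0, dist_self] at hv
    norm_num at hv
  have hstar : ∀ v : ι → ℝ, star v = v := fun v => funext fun i => rfl
  have hcR : 0 < cR := by
    have := hR.dotProduct_mulVec_pos (hsne vmin hvmin)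
    rwa [hstar] at this
  have hcP : 0 < cP := by
    have := hP.dotProduct_mulVec_pos (hsne vmax hvmax)
    rwa [hstar] at this
  refine ⟨cR / cP, by positivity, fun v => ?_⟩
  rcases eq_or_ne v 0 with rfl | hv0
  · simp [Matrix.mulVec_zero]
  · set w : ι → ℝ := ‖v‖⁻¹ • v with hwdef
    have hnv : ‖v‖ ≠ 0 := norm_ne_zero_iff.mpr hv0
    have hw : w ∈ Sp := by
      rw [hSpdef, Metric.mem_sphere, dist_zero_right, hwdef, norm_smul]
      simp [abs_of_nonneg (inv_nonneg.mpr (norm_nonneg v)), inv_mul_cancel₀ hnv]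
    have hveq : v = ‖v‖ • w := by
      rw [hwdef, smul_smul, mul_inv_cancel₀ hnv, one_smul]
    have hscaleR : v ⬝ᵥ R.mulVec v = ‖v‖^2 * (w ⬝ᵥ R.mulVec w) := by
      conv_lhs => rw [hveq]
      rw [smul_dotProduct, Matrix.mulVec_smul, dotProduct_smul]
      simp [smul_smul, sq]
      ring
    have hscaleP : v ⬝ᵥ P.mulVec v = ‖v‖^2 * (w ⬝ᵥ P.mulVec w) := by
      conv_lhs => rw [hveq]
      rw [smul_dotProduct, Matrix.mulVec_smul, dotProduct_smul]
      simp [smul_smul, sq]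
      ring
    have h1 : cR ≤ w ⬝ᵥ R.mulVec w := hminR hw
    have h2 : w ⬝ᵥ P.mulVec w ≤ cP := hmaxP hw
    rw [hscaleR, hscaleP]
    have hn2 : (0:ℝ) < ‖v‖^2 := by positivity
    rw [div_mul_eq_mul_div, div_le_iff₀ hcP]
    nlinarith [mul_le_mul_of_nonneg_left h2 hcR.le, mul_le_mul_of_nonneg_right h1 hcP.le, hn2.le,
      mul_le_mul_of_nonneg_left (mul_le_mul_of_nonneg_left h2 hcR.le) hn2.le,
      mul_le_mul_of_nonneg_left (mul_le_mul_of_nonneg_right h1 hcP.le) hn2.le]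
/-- Quadratic form of `1 ⊗ₖ Q` decomposes blockwise. -/
lemma quad_kron_one {N k : ℕ} (Q : Matrix (Fin k) (Fin k) ℝ) (v : Fin N × Fin k → ℝ) :
    v ⬝ᵥ ((1 : Matrix (Fin N) (Fin N) ℝ) ⊗ₖ Q).mulVec v
      = ∑ i : Fin N, (fun j => v (i,j)) ⬝ᵥ Q.mulVec (fun j => v (i,j)) := by
  simp only [dotProduct, Matrix.mulVec, Matrix.kroneckerMap_apply, Matrix.one_apply]
  rw [Fintype.sum_prod_type]
  refine Finset.sum_congr rfl fun i _ => ?_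
  refine Finset.sum_congr rfl fun j _ => ?_
  congr 1
  rw [Fintype.sum_prod_type]
  rw [Finset.sum_eq_single i]
  · refine Finset.sum_congr rfl fun j' _ => by simp
  · intro i' _ hne
    apply Finset.sum_eq_zero
    intro j' _
    simp [Ne.symm hne]
  · intro h; exact absurd (Finset.mem_univ i) h

lemma HasDerivAt.dotProduct' {ι : Type*} [Fintype ι] {f g : ℝ → ι → ℝ} {f' g' : ι → ℝ} {t : ℝ}
    (hf : HasDerivAt f f' t) (hg : HasDerivAt g g' t) :
    HasDerivAt (fun s => f s ⬝ᵥ g s) (f' ⬝ᵥ g t + f t ⬝ᵥ g') t := by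
  simp only [dotProduct]
  rw [← Finset.sum_add_distrib]
  exact HasDerivAt.fun_sum fun i _ => ((hasDerivAt_pi.mp hf i).mul (hasDerivAt_pi.mp hg i))

lemma dot_shift {ι : Type*} [Fintype ι] (M N : Matrix ι ι ℝ) (v : ι → ℝ) :
    (M.mulVec v) ⬝ᵥ N.mulVec v = v ⬝ᵥ ((Mᵀ * N).mulVec v) := by
  rw [← Matrix.mulVec_mulVec]
  conv_rhs => rw [Matrix.dotProduct_mulVec, Matrix.vecMul_transpose]

lemma posSemidef_kron {N k : ℕ} {A : Matrix (Fin N) (Fin N) ℝ} {B : Matrix (Fin k) (Fin k) ℝ}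
    (hA : A.PosSemidef) (hB : B.PosSemidef) : (A ⊗ₖ B).PosSemidef := by
  exact hA.kronecker hB


lemma dotProduct_self_nonneg' {ι : Type*} [Fintype ι] (v : ι → ℝ) : 0 ≤ v ⬝ᵥ v :=
  Finset.sum_nonneg fun i _ => mul_self_nonneg _

lemma etabar_tendsto {N n₀ κ l : ℕ}
    (S₀ : Matrix (Fin n₀) (Fin n₀) ℝ) (F₀ : Matrix (Fin l) (Fin n₀) ℝ)
    (P : Matrix (Fin n₀) (Fin n₀) ℝ) (hP : P.PosDef)
    (hLyap : (-(S₀ᵀ * P + P * S₀ - (2:ℝ) • (F₀ᵀ * F₀))).PosDef)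
    (H : Fin κ → Matrix (Fin N) (Fin N) ℝ) (hH : ∀ p, (H p).PosDef)
    (lb : ℝ) (hlb : 0 < lb) (heig : ∀ p, (H p - lb • 1).PosSemidef)
    (L₀ : Matrix (Fin n₀) (Fin l) ℝ) (hL₀ : L₀ = -(max (1/lb) 1) • (P⁻¹ * F₀ᵀ))
    (ts : ℕ → ℝ) (ht0 : ts 0 = 0) (htmono : StrictMono ts)
    (htlim : Tendsto ts atTop atTop)
    (σ : ℝ → Fin κ)
    (ηbar : ℝ → Fin N × Fin n₀ → ℝ)
    (hηc : ContinuousOn ηbar (Set.Ici 0))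
    (hηd : ∀ j, ∀ s ∈ Set.Ioo (ts j) (ts (j+1)),
      HasDerivAt ηbar
        ((((1 : Matrix (Fin N) (Fin N) ℝ) ⊗ₖ S₀) + (H (σ s)) ⊗ₖ (L₀ * F₀)).mulVec (ηbar s)) s) :
    ∀ pt : Fin N × Fin n₀, Tendsto (fun t => ηbar t pt) atTop (nhds 0) := by
  rcases Nat.eq_zero_or_pos n₀ with h0 | hn₀pos
  · intro pt; exact (Fin.cast h0 pt.2).elim0
  set μ : ℝ := max (1/lb) 1 with hμdef
  have hμpos : (0:ℝ) < μ := lt_of_lt_of_le one_pos (le_max_right _ _)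
  have hμlb : 1 ≤ μ * lb := by
    have h1 : 1/lb ≤ μ := le_max_left _ _
    have := mul_le_mul_of_nonneg_right h1 hlb.le
    rwa [one_div_mul_cancel hlb.ne'] at this
  set R : Matrix (Fin n₀) (Fin n₀) ℝ := -(S₀ᵀ * P + P * S₀ - (2:ℝ) • (F₀ᵀ * F₀)) with hRdef
  set Pb : Matrix (Fin N × Fin n₀) (Fin N × Fin n₀) ℝ
    := (1 : Matrix (Fin N) (Fin N) ℝ) ⊗ₖ P with hPbdef
  have hPt : Pᵀ = P := by
    have := hP.1
    rwa [Matrix.IsHermitian, Matrix.conjTranspose_eq_transpose_of_trivial] at this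
  have hHt : ∀ p, (H p)ᵀ = H p := by
    intro p
    have := (hH p).1
    rwa [Matrix.IsHermitian, Matrix.conjTranspose_eq_transpose_of_trivial] at this
  have hPinv : P * P⁻¹ = 1 := Matrix.mul_nonsing_inv P (isUnit_iff_ne_zero.mpr hP.det_pos.ne')
  have hinvP : P⁻¹ * P = 1 := Matrix.nonsing_inv_mul P (isUnit_iff_ne_zero.mpr hP.det_pos.ne')
  have hPL : P * (L₀ * F₀) = (-μ) • (F₀ᵀ * F₀) := by
    rw [hL₀, Matrix.smul_mul, Matrix.mul_smul]
    congr 1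
    rw [← Matrix.mul_assoc, ← Matrix.mul_assoc, hPinv, Matrix.one_mul]
  have hLtP : (L₀ * F₀)ᵀ * P = (-μ) • (F₀ᵀ * F₀) := by
    rw [hL₀, Matrix.smul_mul, Matrix.transpose_smul, Matrix.transpose_mul,
      Matrix.transpose_mul, Matrix.transpose_nonsing_inv, hPt, Matrix.transpose_transpose,
      Matrix.smul_mul]
    congr 1
    rw [Matrix.mul_assoc F₀ᵀ (F₀ * P⁻¹) P, Matrix.mul_assoc F₀ P⁻¹ P, hinvP, Matrix.mul_one]
  -- key matrix identity
  have hkey : ∀ p : Fin κ,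
      ((1 : Matrix (Fin N) (Fin N) ℝ) ⊗ₖ S₀ + H p ⊗ₖ (L₀ * F₀))ᵀ * Pb
        + Pb * ((1 : Matrix (Fin N) (Fin N) ℝ) ⊗ₖ S₀ + H p ⊗ₖ (L₀ * F₀))
        + (1 : Matrix (Fin N) (Fin N) ℝ) ⊗ₖ R
      = (-2 : ℝ) • ((μ • H p - 1) ⊗ₖ (F₀ᵀ * F₀)) := by
    intro p
    have e1 : ((1 : Matrix (Fin N) (Fin N) ℝ) ⊗ₖ S₀ + H p ⊗ₖ (L₀ * F₀))ᵀ * Pb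
        = (1 : Matrix (Fin N) (Fin N) ℝ) ⊗ₖ (S₀ᵀ * P) + (-μ) • (H p ⊗ₖ (F₀ᵀ * F₀)) := by
      rw [Matrix.transpose_add, ← Matrix.kroneckerMap_transpose, ← Matrix.kroneckerMap_transpose,
        Matrix.transpose_one, hHt, hPbdef, Matrix.add_mul, ← Matrix.mul_kronecker_mul,
        ← Matrix.mul_kronecker_mul]
      simp only [Matrix.one_mul, Matrix.mul_one]
      rw [hLtP, Matrix.kronecker_smul]
    have e2 : Pb * ((1 : Matrix (Fin N) (Fin N) ℝ) ⊗ₖ S₀ + H p ⊗ₖ (L₀ * F₀))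
        = (1 : Matrix (Fin N) (Fin N) ℝ) ⊗ₖ (P * S₀) + (-μ) • (H p ⊗ₖ (F₀ᵀ * F₀)) := by
      rw [hPbdef, Matrix.mul_add, ← Matrix.mul_kronecker_mul, ← Matrix.mul_kronecker_mul]
      simp only [Matrix.one_mul, Matrix.mul_one]
      rw [hPL, Matrix.kronecker_smul]
    have e3 : (1 : Matrix (Fin N) (Fin N) ℝ) ⊗ₖ R
        = (-1:ℝ) • ((1 : Matrix (Fin N) (Fin N) ℝ) ⊗ₖ (S₀ᵀ * P))
          + (-1:ℝ) • ((1 : Matrix (Fin N) (Fin N) ℝ) ⊗ₖ (P * S₀))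
          + (2:ℝ) • ((1 : Matrix (Fin N) (Fin N) ℝ) ⊗ₖ (F₀ᵀ * F₀)) := by
      rw [hRdef, show -(S₀ᵀ * P + P * S₀ - (2:ℝ) • (F₀ᵀ * F₀))
          = (-1:ℝ) • (S₀ᵀ * P) + ((-1:ℝ) • (P * S₀) + (2:ℝ) • (F₀ᵀ * F₀)) by module,
        Matrix.kronecker_add, Matrix.kronecker_add, Matrix.kronecker_smul,
        Matrix.kronecker_smul, Matrix.kronecker_smul]
      module
    have e4 : (μ • H p - 1) ⊗ₖ (F₀ᵀ * F₀)
        = μ • (H p ⊗ₖ (F₀ᵀ * F₀)) - (1 : Matrix (Fin N) (Fin N) ℝ) ⊗ₖ (F₀ᵀ * F₀) := by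
      rw [show μ • H p - 1 = μ • H p + (-1:ℝ) • (1 : Matrix (Fin N) (Fin N) ℝ) by module,
        Matrix.add_kronecker, Matrix.smul_kronecker, Matrix.smul_kronecker]
      module
    rw [e1, e2, e3, e4]
    module
  -- positive semidefiniteness of correction term
  have hPSD : ∀ p : Fin κ, ((μ • H p - 1) ⊗ₖ (F₀ᵀ * F₀)).PosSemidef := by
    intro p
    apply posSemidef_kron
    · refine Matrix.PosSemidef.of_dotProduct_mulVec_nonneg ?_ ?_
      · rw [Matrix.IsHermitian, Matrix.conjTranspose_eq_transpose_of_trivial,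
          Matrix.transpose_sub, Matrix.transpose_smul, Matrix.transpose_one, hHt]
      · intro v
        have hstar : star v = v := funext fun _ => rfl
        have h2 : 0 ≤ v ⬝ᵥ ((H p).mulVec v) - lb * (v ⬝ᵥ v) := by
          have := (heig p).dotProduct_mulVec_nonneg v
          simpa [hstar, Matrix.sub_mulVec, Matrix.smul_mulVec, Matrix.one_mulVec,
            dotProduct_sub, dotProduct_smul, smul_eq_mul] using this
        have hvv := dotProduct_self_nonneg' v
        rw [hstar]
        have hgoal : v ⬝ᵥ ((μ • H p - 1).mulVec v)
            = μ * (v ⬝ᵥ ((H p).mulVec v)) - v ⬝ᵥ v := by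
          simp [Matrix.sub_mulVec, Matrix.smul_mulVec, Matrix.one_mulVec,
            dotProduct_sub, dotProduct_smul, smul_eq_mul]
        rw [hgoal]
        nlinarith
    · have := Matrix.posSemidef_conjTranspose_mul_self F₀
      rwa [Matrix.conjTranspose_eq_transpose_of_trivial] at this
  have hRpos : R.PosDef := hLyap
  have : Nonempty (Fin n₀) := ⟨⟨0, hn₀pos⟩⟩
  obtain ⟨δ, hδpos, hδcomp⟩ := quad_comp hRpos hP
  obtain ⟨aP, haPpos, haP⟩ := quad_comp hP Matrix.PosDef.one
  -- lower/upper quadratic bounds for the big forms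
  have hsplitdot : ∀ v : Fin N × Fin n₀ → ℝ,
      v ⬝ᵥ v = ∑ i : Fin N, (fun j => v (i,j)) ⬝ᵥ (fun j => v (i,j)) := by
    intro v
    simp [dotProduct, Fintype.sum_prod_type]
  have hVlow : ∀ w : Fin N × Fin n₀ → ℝ, aP * (w ⬝ᵥ w) ≤ w ⬝ᵥ Pb.mulVec w := by
    intro w
    rw [hPbdef, quad_kron_one, hsplitdot, Finset.mul_sum]
    refine Finset.sum_le_sum fun i _ => ?_
    have := haP (fun j => w (i,j))
    rwa [Matrix.one_mulVec] at this
  have hRP : ∀ w : Fin N × Fin n₀ → ℝ,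
      δ * (w ⬝ᵥ Pb.mulVec w) ≤ w ⬝ᵥ ((1 : Matrix (Fin N) (Fin N) ℝ) ⊗ₖ R).mulVec w := by
    intro w
    rw [hPbdef, quad_kron_one, quad_kron_one, Finset.mul_sum]
    exact Finset.sum_le_sum fun i _ => hδcomp (fun j => w (i,j))
  set V : ℝ → ℝ := fun t => ηbar t ⬝ᵥ Pb.mulVec (ηbar t) with hVdef
  have hV0 : ∀ t, 0 ≤ V t := by
    intro t
    have h1 := hVlow (ηbar t)
    have h2 := dotProduct_self_nonneg' (ηbar t)
    nlinarith
  have hVstep : ∀ s : ℝ, (∃ j, s ∈ Set.Ioo (ts j) (ts (j+1))) →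
      ∃ d, HasDerivAt V d s ∧ d ≤ -δ * V s := by
    rintro s ⟨j, hs⟩
    have hder := hηd j s hs
    set Ms : Matrix (Fin N × Fin n₀) (Fin N × Fin n₀) ℝ
      := (1 : Matrix (Fin N) (Fin N) ℝ) ⊗ₖ S₀ + (H (σ s)) ⊗ₖ (L₀ * F₀) with hMsdef
    set v : Fin N × Fin n₀ → ℝ := ηbar s with hvdef
    have hdv := HasDerivAt.dotProduct' hder (hasDerivAt_mulVec Pb hder)
    refine ⟨(Ms.mulVec v) ⬝ᵥ Pb.mulVec v + v ⬝ᵥ Pb.mulVec (Ms.mulVec v), hdv, ?_⟩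
    have hval : (Ms.mulVec v) ⬝ᵥ Pb.mulVec v + v ⬝ᵥ Pb.mulVec (Ms.mulVec v)
        = v ⬝ᵥ ((Msᵀ * Pb + Pb * Ms).mulVec v) := by
      rw [dot_shift, Matrix.mulVec_mulVec, Matrix.add_mulVec, dotProduct_add]
    rw [hval]
    have hsum : Msᵀ * Pb + Pb * Ms
        = (-2 : ℝ) • ((μ • H (σ s) - 1) ⊗ₖ (F₀ᵀ * F₀))
          - (1 : Matrix (Fin N) (Fin N) ℝ) ⊗ₖ R := by
      rw [hMsdef]
      exact eq_sub_of_add_eq (hkey (σ s))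
    rw [hsum, Matrix.sub_mulVec, dotProduct_sub, Matrix.smul_mulVec,
      dotProduct_smul]
    have hpsd := (hPSD (σ s)).dotProduct_mulVec_nonneg v
    have hstar : star v = v := funext fun _ => rfl
    rw [hstar] at hpsd
    have hrp := hRP v
    simp only [smul_eq_mul]
    nlinarith
  -- W is antitone on each switching interval
  have hVcont : ContinuousOn V (Set.Ici (0:ℝ)) := (continuous_quad Pb).comp_continuousOn hηc
  have hWanti : ∀ j : ℕ, AntitoneOn (fun t => V t * Real.exp (δ * t))
      (Set.Icc (ts j) (ts (j+1))) := by
    intro j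
    have htsj0 : (0:ℝ) ≤ ts j := by
      rw [← ht0]; exact htmono.monotone (Nat.zero_le j)
    have hIccsub : Set.Icc (ts j) (ts (j+1)) ⊆ Set.Ici (0:ℝ) :=
      fun s hs => le_trans htsj0 hs.1
    have hexpd : ∀ s:ℝ, HasDerivAt (fun t : ℝ => Real.exp (δ * t)) (Real.exp (δ * s) * δ) s :=
      fun s => by simpa using ((hasDerivAt_id s).const_mul δ).exp
    apply antitoneOn_of_deriv_nonpos (convex_Icc _ _)
    · exact ContinuousOn.mul (hVcont.mono hIccsub)
        (Real.continuous_exp.comp (continuous_const.mul continuous_id)).continuousOn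
    · intro s hs
      rw [interior_Icc] at hs
      obtain ⟨d, hd, _⟩ := hVstep s ⟨j, hs⟩
      exact (hd.mul (hexpd s)).differentiableAt.differentiableWithinAt
    · intro s hs
      rw [interior_Icc] at hs
      obtain ⟨d, hd, hle⟩ := hVstep s ⟨j, hs⟩
      rw [(hd.fun_mul (hexpd s)).deriv]
      have hVs := hV0 s
      have he := (Real.exp_pos (δ * s))
      nlinarith [mul_le_mul_of_nonneg_right hle he.le]
  -- glue along intervals
  have hWts : ∀ j : ℕ, V (ts j) * Real.exp (δ * ts j) ≤ V 0 := by
    intro j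
    induction j with
    | zero => rw [ht0]; simp
    | succ j ih =>
      have hlt := (htmono (Nat.lt_succ_self j)).le
      have h := hWanti j ⟨le_refl _, hlt⟩ ⟨hlt, le_refl _⟩ hlt
      exact le_trans h ih
  have hcover : ∀ t : ℝ, 0 ≤ t → ∃ j, ts j ≤ t ∧ t ≤ ts (j+1) := by
    intro t ht
    have hex : ∃ n, t < ts n := (htlim.eventually (eventually_gt_atTop t)).exists
    have hn := Nat.find_spec hex
    have hn0 : Nat.find hex ≠ 0 := by
      intro h
      rw [h, ht0] at hn
      exact absurd hn (not_lt.mpr ht)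
    obtain ⟨j, hj⟩ := Nat.exists_eq_succ_of_ne_zero hn0
    refine ⟨j, ?_, ?_⟩
    · by_contra hlt
      push_neg at hlt
      exact Nat.find_min hex (hj ▸ Nat.lt_succ_self j) hlt
    · have h2 := hn
      rw [hj] at h2
      exact h2.le
  have hVbound : ∀ t : ℝ, 0 ≤ t → V t ≤ V 0 / Real.exp (δ * t) := by
    intro t ht
    obtain ⟨j, hj1, hj2⟩ := hcover t ht
    have hW1 : V t * Real.exp (δ * t) ≤ V (ts j) * Real.exp (δ * ts j) :=
      hWanti j ⟨le_refl _, le_trans hj1 hj2⟩ ⟨hj1, hj2⟩ hj1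
    have := le_trans hW1 (hWts j)
    rwa [← le_div_iff₀ (Real.exp_pos _)] at this
  have hVlim : Tendsto V atTop (nhds 0) := by
    have hexp : Tendsto (fun t : ℝ => Real.exp (δ * t)) atTop atTop := by
      apply Real.tendsto_exp_atTop.comp
      simpa using (tendsto_id (α := ℝ)).const_mul_atTop hδpos
    have hup : Tendsto (fun t => V 0 / Real.exp (δ * t)) atTop (nhds 0) :=
      Tendsto.div_atTop tendsto_const_nhds hexp
    refine tendsto_of_tendsto_of_tendsto_of_le_of_le' tendsto_const_nhds hup ?_ ?_
    · exact Eventually.of_forall hV0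
    · filter_upwards [eventually_ge_atTop (0:ℝ)] with t ht using hVbound t ht
  intro pt
  have habs : ∀ t, |ηbar t pt| ≤ Real.sqrt (V t / aP) := by
    intro t
    have h1 : (ηbar t pt) ^ 2 ≤ ηbar t ⬝ᵥ ηbar t := by
      have := Finset.single_le_sum (f := fun q => ηbar t q * ηbar t q)
        (fun q _ => mul_self_nonneg _) (Finset.mem_univ pt)
      simpa [dotProduct, sq] using this
    have h2 := hVlow (ηbar t)
    have h3 : (ηbar t pt)^2 ≤ V t / aP := by
      rw [le_div_iff₀ haPpos]
      nlinarith
    calc |ηbar t pt| = Real.sqrt ((ηbar t pt)^2) := (Real.sqrt_sq_eq_abs _).symm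
      _ ≤ Real.sqrt (V t / aP) := Real.sqrt_le_sqrt h3
  have hsq : Tendsto (fun t => Real.sqrt (V t / aP)) atTop (nhds 0) := by
    have h := hVlim.div_const aP
    have h2 := (Real.continuous_sqrt.tendsto 0).comp (by simpa using h)
    simpa [Function.comp_def] using h2
  exact squeeze_zero_norm (fun t => by simpa [Real.norm_eq_abs] using habs t) hsq


end Stmt15Aux

theorem stmt15 {N n₀ l κ : ℕ} (hN : 1 ≤ N)
    (n m q : Fin N → ℕ)
    (A : ∀ i, Matrix (Fin (n i)) (Fin (n i)) ℝ)
    (B : ∀ i, Matrix (Fin (n i)) (Fin (m i)) ℝ)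
    (C : ∀ i, Matrix (Fin l) (Fin (n i)) ℝ)
    (D : ∀ i, Matrix (Fin l) (Fin (m i)) ℝ)
    (E : ∀ i, Matrix (Fin (n i)) (Fin (q i)) ℝ)
    (S : ∀ i, Matrix (Fin (q i)) (Fin (q i)) ℝ)
    (S₀ : Matrix (Fin n₀) (Fin n₀) ℝ) (F₀ : Matrix (Fin l) (Fin n₀) ℝ)
    -- (i) regulator equations
    (X₁ : ∀ i, Matrix (Fin (n i)) (Fin (q i)) ℝ)
    (U₁ : ∀ i, Matrix (Fin (m i)) (Fin (q i)) ℝ)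
    (hreg11 : ∀ i, X₁ i * S i = A i * X₁ i + B i * U₁ i + E i)
    (hreg12 : ∀ i, C i * X₁ i + D i * U₁ i = 0)
    (X₂ : ∀ i, Matrix (Fin (n i)) (Fin n₀) ℝ)
    (U₂ : ∀ i, Matrix (Fin (m i)) (Fin n₀) ℝ)
    (hreg21 : ∀ i, X₂ i * S₀ = A i * X₂ i + B i * U₂ i)
    (hreg22 : ∀ i, C i * X₂ i + D i * U₂ i = F₀)
    -- (ii) stabilizing feedback gains
    (K₁ : ∀ i, Matrix (Fin (m i)) (Fin (n i)) ℝ)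
    (hK₁ : ∀ i, IsHurwitz (A i + B i * K₁ i))
    (K₂ : ∀ i, Matrix (Fin (m i)) (Fin (q i)) ℝ) (hK₂ : ∀ i, K₂ i = U₁ i - K₁ i * X₁ i)
    (K₃ : ∀ i, Matrix (Fin (m i)) (Fin n₀) ℝ) (hK₃ : ∀ i, K₃ i = U₂ i - K₁ i * X₂ i)
    -- (iii) common Lyapunov matrix, graph matrices, observer gain and switching signal
    (P : Matrix (Fin n₀) (Fin n₀) ℝ) (hP : P.PosDef)
    (hLyap : (-(S₀ᵀ * P + P * S₀ - (2:ℝ) • (F₀ᵀ * F₀))).PosDef)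
    (H : Fin κ → Matrix (Fin N) (Fin N) ℝ) (hH : ∀ p, (H p).PosDef)
    (lb : ℝ) (hlb : 0 < lb) (heig : ∀ p, (H p - lb • 1).PosSemidef)
    (L₀ : Matrix (Fin n₀) (Fin l) ℝ) (hL₀ : L₀ = -(max (1/lb) 1) • (P⁻¹ * F₀ᵀ))
    (ts : ℕ → ℝ) (ht0 : ts 0 = 0) (htmono : StrictMono ts)
    (htlim : Tendsto ts atTop atTop)
    (σ : ℝ → Fin κ) (hσ : ∀ j, ∀ s ∈ Set.Ico (ts j) (ts (j+1)), σ s = σ (ts j))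
    -- leader, disturbances and plants
    (r : ℝ → Fin n₀ → ℝ) (hr : ∀ t, HasDerivAt r (S₀.mulVec (r t)) t)
    (d : ∀ i, ℝ → Fin (q i) → ℝ)
    (hd : ∀ i t, HasDerivAt (d i) ((S i).mulVec (d i t)) t)
    (x : ∀ i, ℝ → Fin (n i) → ℝ) (u : ∀ i, ℝ → Fin (m i) → ℝ)
    (hx : ∀ i t, HasDerivAt (x i)
      ((A i).mulVec (x i t) + (B i).mulVec (u i t) + (E i).mulVec (d i t)) t)
    -- controls and distributed observer
    (η : Fin N → ℝ → Fin n₀ → ℝ)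
    (hu : ∀ i t, u i t = (K₁ i).mulVec (x i t) + (K₂ i).mulVec (d i t)
      + (K₃ i).mulVec (η i t))
    (ηbar : ℝ → Fin N × Fin n₀ → ℝ)
    (hηbar : ∀ i t j, ηbar t (i, j) = η i t j - r t j)
    (hηc : ContinuousOn ηbar (Set.Ici 0))
    (hηd : ∀ j, ∀ s ∈ Set.Ioo (ts j) (ts (j+1)),
      HasDerivAt ηbar
        ((((1 : Matrix (Fin N) (Fin N) ℝ) ⊗ₖ S₀) + (H (σ s)) ⊗ₖ (L₀ * F₀)).mulVec (ηbar s)) s) :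
    ∀ i, Tendsto (fun t => (C i).mulVec (x i t) + (D i).mulVec (u i t) - F₀.mulVec (r t))
      atTop (nhds 0) := by
  have hηto : ∀ pt : Fin N × Fin n₀, Tendsto (fun t => ηbar t pt) atTop (nhds 0) :=
    Stmt15Aux.etabar_tendsto S₀ F₀ P hP hLyap H hH lb hlb heig L₀ hL₀ ts ht0 htmono htlim
      σ ηbar hηc hηd
  intro i
  set ηb : ℝ → Fin n₀ → ℝ := fun t j => ηbar t (i, j) with hηbdef
  have hηbto : Tendsto ηb atTop (nhds 0) := by
    rw [tendsto_pi_nhds]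
    intro j
    simpa using hηto (i, j)
  have hηbc : ContinuousOn ηb (Set.Ici 0) := by
    rw [continuousOn_pi]
    intro j
    exact (continuous_apply (i, j)).comp_continuousOn hηc
  have hηvec : ∀ t, η i t = ηb t + r t := by
    intro t
    funext j
    have h := hηbar i t j
    simp only [hηbdef, Pi.add_apply]
    rw [h]
    ring
  set Mi := A i + B i * K₁ i with hMidef
  have m1 : Mi * X₁ i + B i * K₂ i + E i = X₁ i * S i := by
    rw [hK₂ i, hreg11 i, hMidef]
    simp only [Matrix.mul_sub, Matrix.mul_add, Matrix.add_mul, Matrix.sub_mul, ← Matrix.mul_assoc]; abel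
  have m2 : Mi * X₂ i + B i * K₃ i = X₂ i * S₀ := by
    rw [hK₃ i, hreg21 i, hMidef]
    simp only [Matrix.mul_sub, Matrix.mul_add, Matrix.add_mul, Matrix.sub_mul, ← Matrix.mul_assoc]; abel
  have m3 : (C i + D i * K₁ i) * X₁ i = -(D i * K₂ i) := by
    apply eq_neg_of_add_eq_zero_left
    rw [show (C i + D i * K₁ i) * X₁ i + D i * K₂ i = C i * X₁ i + D i * U₁ i by
      rw [hK₂ i]; simp only [Matrix.mul_sub, Matrix.mul_add, Matrix.add_mul, Matrix.sub_mul, ← Matrix.mul_assoc]; abel]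
    exact hreg12 i
  have m4 : (C i + D i * K₁ i) * X₂ i = F₀ - D i * K₃ i := by
    apply eq_sub_of_add_eq
    rw [show (C i + D i * K₁ i) * X₂ i + D i * K₃ i = C i * X₂ i + D i * U₂ i by
      rw [hK₃ i]; simp only [Matrix.mul_sub, Matrix.mul_add, Matrix.add_mul, Matrix.sub_mul, ← Matrix.mul_assoc]; abel]
    exact hreg22 i
  set xb : ℝ → Fin (n i) → ℝ :=
    fun t => x i t - (X₁ i).mulVec (d i t) - (X₂ i).mulVec (r t) with hxbdef
  have hxbderiv : ∀ t, HasDerivAt xb (Mi.mulVec (xb t) + (B i * K₃ i).mulVec (ηb t)) t := by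
    intro t
    have h := ((hx i t).sub (Stmt15Aux.hasDerivAt_mulVec (X₁ i) (hd i t))).sub
      (Stmt15Aux.hasDerivAt_mulVec (X₂ i) (hr t))
    refine h.congr_deriv (Eq.symm ?_)
    rw [hu i t, hηvec t]
    simp only [hxbdef, Matrix.mulVec_sub, Matrix.mulVec_add, Matrix.mulVec_mulVec,
      ← m1, ← m2, hMidef, Matrix.add_mulVec, Matrix.sub_mulVec, Matrix.add_mul]
    abel
  have hgc' : ContinuousOn (fun t => (B i * K₃ i).mulVec (ηb t)) (Set.Ici 0) :=
    (Stmt15Aux.continuous_mulVec' _).comp_continuousOn hηbc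
  have hg0' : Tendsto (fun t => (B i * K₃ i).mulVec (ηb t)) atTop (nhds 0) := by
    have := Stmt15Aux.tendsto_mulVec_zero (B i * K₃ i) hηbto
    simpa using this
  have hxbto : Tendsto xb atTop (nhds 0) :=
    Stmt15Aux.hurwitz_tendsto (hK₁ i) hxbderiv hgc' hg0'
  have herr : ∀ t, (C i).mulVec (x i t) + (D i).mulVec (u i t) - F₀.mulVec (r t)
      = (C i + D i * K₁ i).mulVec (xb t) + (D i * K₃ i).mulVec (ηb t) := by
    intro t
    rw [hu i t, hηvec t]
    simp only [hxbdef, Matrix.mulVec_sub, Matrix.mulVec_add, Matrix.mulVec_mulVec,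
      m3, m4, Matrix.add_mulVec, Matrix.sub_mulVec, Matrix.neg_mulVec]
    abel
  have hconv := (Stmt15Aux.tendsto_mulVec_zero (C i + D i * K₁ i) hxbto).add
    (Stmt15Aux.tendsto_mulVec_zero (D i * K₃ i) hηbto)
  simp only [add_zero] at hconv
  exact Tendsto.congr (fun t => (herr t).symm) hconv
end
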